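/- arXiv:1311.1478 — 6 statements merged into one kernel-verified Lean document; each statement's English description precedes it below -/
import Mathlib

section
/- For every integer κ ≥ 2 and positive integer n, writing (Σ_{k=-n}^{n} e^{ikx})^κ = Σ_{ℓ=-κn}^{κn} B_ℓ e^{iℓx}, the coefficients B_ℓ are nonnegative real numbers and satisfy the monotonicity property B_{ℓ₁} ≥ B_{ℓ₂} ≥ 0 whenever |ℓ₁| ≤ |ℓ₂| ≤ κn. -/
open Finset Complex

/-- Number of ways to write `ℓ` as an ordered sum of `κ` integers in `[-n, n]`. -/
noncomputable def cntDK (n : ℕ) : ℕ → ℤ → ℕ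
  | 0, ℓ => if ℓ = 0 then 1 else 0
  | κ + 1, ℓ => ∑ j ∈ Finset.Icc (-(n : ℤ)) (n : ℤ), cntDK n κ (ℓ - j)

lemma cntDK_neg (n : ℕ) : ∀ κ : ℕ, ∀ ℓ : ℤ, cntDK n κ (-ℓ) = cntDK n κ ℓ := by
  intro κ
  induction κ with
  | zero => intro ℓ; simp [cntDK, neg_eq_zero]
  | succ κ ih =>
    intro ℓ
    show (∑ j ∈ Finset.Icc (-(n : ℤ)) (n : ℤ), cntDK n κ (-ℓ - j))
        = ∑ j ∈ Finset.Icc (-(n : ℤ)) (n : ℤ), cntDK n κ (ℓ - j)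
    refine Finset.sum_nbij' (fun j => -j) (fun j => -j) ?_ ?_ ?_ ?_ ?_
    · intro j hj; simp only [Finset.mem_Icc] at *; omega
    · intro j hj; simp only [Finset.mem_Icc] at *; omega
    · intro j _; ring
    · intro j _; ring
    · intro j _
      have : -ℓ - j = -(ℓ - -j) := by ring
      rw [this, ih]

lemma cntDK_eq_zero (n : ℕ) : ∀ κ : ℕ, ∀ ℓ : ℤ, (κ : ℤ) * n < |ℓ| → cntDK n κ ℓ = 0 := by
  intro κ
  induction κ with
  | zero =>
    intro ℓ h
    have : ℓ ≠ 0 := by intro h0; rw [h0] at h; simp at h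
    simp [cntDK, this]
  | succ κ ih =>
    intro ℓ h
    show (∑ j ∈ Finset.Icc (-(n : ℤ)) (n : ℤ), cntDK n κ (ℓ - j)) = 0
    refine Finset.sum_eq_zero fun j hj => ?_
    simp only [Finset.mem_Icc] at hj
    refine ih _ ?_
    have h1 : |ℓ| ≤ |ℓ - j| + |j| := by
      calc |ℓ| = |(ℓ - j) + j| := by ring_nf
      _ ≤ |ℓ - j| + |j| := abs_add_le _ _
    have h2 : |j| ≤ (n : ℤ) := abs_le.mpr ⟨hj.1, hj.2⟩
    have hexp : ((κ : ℤ) + 1) * n = (κ : ℤ) * n + n := by ring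
    push_cast at h ⊢
    rw [hexp] at h
    omega

lemma cntDK_succ (n : ℕ) (κ : ℕ) (ℓ : ℤ) :
    cntDK n (κ + 1) ℓ = ∑ j ∈ Finset.Icc (ℓ - n) (ℓ + n), cntDK n κ j := by
  show (∑ j ∈ Finset.Icc (-(n : ℤ)) (n : ℤ), cntDK n κ (ℓ - j)) = _
  refine Finset.sum_nbij' (fun j => ℓ - j) (fun j => ℓ - j) ?_ ?_ ?_ ?_ ?_ <;>
    intro j hj <;> simp only [Finset.mem_Icc] at * <;> first | omega | ring

lemma cntDK_mono (n : ℕ) : ∀ κ : ℕ, ∀ ℓ₁ ℓ₂ : ℤ, |ℓ₁| ≤ |ℓ₂| →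
    cntDK n κ ℓ₂ ≤ cntDK n κ ℓ₁ := by
  intro κ
  induction κ with
  | zero =>
    intro ℓ₁ ℓ₂ h
    by_cases h2 : ℓ₂ = 0
    · have h1 : ℓ₁ = 0 := by rw [h2] at h; simpa using abs_nonpos_iff.mp (by simpa using h)
      simp [cntDK, h1, h2]
    · simp [cntDK, h2]
  | succ κ ih =>
    -- first: step lemma for nonnegative a
    have step : ∀ a : ℤ, 0 ≤ a → cntDK n (κ + 1) (a + 1) ≤ cntDK n (κ + 1) a := by
      intro a ha
      rw [cntDK_succ, cntDK_succ]
      have hle : a - (n : ℤ) ≤ a + n := by omega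
      have e1 : Finset.Icc (a + 1 - (n : ℤ)) (a + 1 + n)
          = insert (a + n + 1) (Finset.Icc (a - n + 1) (a + n)) := by
        ext m; simp only [Finset.mem_insert, Finset.mem_Icc]; omega
      have e2 : Finset.Icc (a - (n : ℤ)) (a + n)
          = insert (a - n) (Finset.Icc (a - n + 1) (a + n)) := by
        ext m; simp only [Finset.mem_insert, Finset.mem_Icc]; omega
      rw [e1, e2, Finset.sum_insert (by simp only [Finset.mem_Icc]; omega),
        Finset.sum_insert (by simp only [Finset.mem_Icc]; omega)]
      have key : cntDK n κ (a + n + 1) ≤ cntDK n κ (a - n) := by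
        refine ih _ _ ?_
        have h1 : |a - (n : ℤ)| ≤ a + n + 1 := abs_le.mpr ⟨by omega, by omega⟩
        have h2 : |a + (n : ℤ) + 1| = a + n + 1 := abs_of_nonneg (by omega)
        omega
      omega
    -- monotone on nonnegatives
    have mono : ∀ d : ℕ, ∀ a : ℤ, 0 ≤ a → cntDK n (κ + 1) (a + d) ≤ cntDK n (κ + 1) a := by
      intro d
      induction d with
      | zero => intro a _; simp
      | succ d ihd =>
        intro a ha
        have := step (a + d) (by omega)
        have := ihd a ha
        have : cntDK n (κ + 1) (a + d + 1) ≤ cntDK n (κ + 1) a := le_trans (step (a + d) (by omega)) (ihd a ha)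
        calc cntDK n (κ + 1) (a + (d + 1 : ℕ)) = cntDK n (κ + 1) (a + d + 1) := by
              congr 1; push_cast; ring
          _ ≤ cntDK n (κ + 1) a := this
    intro ℓ₁ ℓ₂ h
    have h1 : cntDK n (κ + 1) ℓ₂ = cntDK n (κ + 1) |ℓ₂| := by
      rcases abs_choice ℓ₂ with h' | h' <;> rw [h']; rw [cntDK_neg]
    have h2 : cntDK n (κ + 1) ℓ₁ = cntDK n (κ + 1) |ℓ₁| := by
      rcases abs_choice ℓ₁ with h' | h' <;> rw [h']; rw [cntDK_neg]
    rw [h1, h2]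
    have hd : |ℓ₂| = |ℓ₁| + ((|ℓ₂| - |ℓ₁|).toNat : ℤ) := by
      have := abs_nonneg ℓ₁; omega
    rw [hd]
    exact mono _ _ (abs_nonneg ℓ₁)

lemma cntDK_gen (n : ℕ) : ∀ κ : ℕ, ∀ x : ℝ,
    (∑ k ∈ Finset.Icc (-(n : ℤ)) (n : ℤ), Complex.exp (Complex.I * k * x)) ^ κ
      = ∑ ℓ ∈ Finset.Icc (-(κ * n : ℤ)) (κ * n : ℤ),
          (cntDK n κ ℓ : ℂ) * Complex.exp (Complex.I * ℓ * x) := by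
  intro κ
  induction κ with
  | zero => intro x; simp [cntDK]
  | succ κ ih =>
    intro x
    rw [pow_succ, ih x, Finset.sum_mul_sum]
    have key : ∀ j ∈ Finset.Icc (-(n : ℤ)) (n : ℤ),
        (∑ ℓ ∈ Finset.Icc (-(κ * n : ℤ)) (κ * n : ℤ),
          (cntDK n κ ℓ : ℂ) * Complex.exp (Complex.I * ℓ * x) * Complex.exp (Complex.I * j * x))
        = ∑ m ∈ Finset.Icc (-((κ + 1) * n : ℤ)) ((κ + 1) * n : ℤ),
            (cntDK n κ (m - j) : ℂ) * Complex.exp (Complex.I * m * x) := by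
      intro j hj
      simp only [Finset.mem_Icc] at hj
      have e1 : (∑ ℓ ∈ Finset.Icc (-(κ * n : ℤ)) (κ * n : ℤ),
          (cntDK n κ ℓ : ℂ) * Complex.exp (Complex.I * ℓ * x) * Complex.exp (Complex.I * j * x))
          = ∑ m ∈ Finset.Icc (-(κ * n : ℤ) + j) ((κ * n : ℤ) + j),
              (cntDK n κ (m - j) : ℂ) * Complex.exp (Complex.I * m * x) := by
        refine Finset.sum_nbij' (fun ℓ => ℓ + j) (fun m => m - j) ?_ ?_ ?_ ?_ ?_
        · intro ℓ hℓ; simp only [Finset.mem_Icc] at *; omega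
        · intro m hm; simp only [Finset.mem_Icc] at *; omega
        · intro ℓ _; ring
        · intro m _; ring
        · intro ℓ _
          have hc : ℓ + j - j = ℓ := by ring
          rw [hc, mul_assoc, ← Complex.exp_add]
          congr 2
          push_cast; ring
      rw [e1]
      refine Finset.sum_subset ?_ ?_
      · intro m hm
        have hexp : ((κ : ℤ) + 1) * n = (κ : ℤ) * n + n := by ring
        simp only [Finset.mem_Icc] at *
        rw [hexp]
        omega
      · intro m hm hm'
        have hexp : ((κ : ℤ) + 1) * n = (κ : ℤ) * n + n := by ring
        simp only [Finset.mem_Icc] at hm hm'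
        rw [hexp] at hm
        have : cntDK n κ (m - j) = 0 := by
          refine cntDK_eq_zero n κ _ ?_
          rcases abs_cases (m - j) with ⟨h', _⟩ | ⟨h', _⟩ <;> omega
        rw [this]; simp
    rw [Finset.sum_comm, Finset.sum_congr rfl key, Finset.sum_comm]
    simp only [Nat.cast_add, Nat.cast_one]
    refine Finset.sum_congr rfl fun m _ => ?_
    rw [← Finset.sum_mul]
    congr 1
    show _ = ((cntDK n (κ + 1) m : ℕ) : ℂ)
    rw [show cntDK n (κ + 1) m = ∑ j ∈ Finset.Icc (-(n : ℤ)) (n : ℤ), cntDK n κ (m - j) from rfl]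
    push_cast
    rfl

open intervalIntegral Real in
lemma exp_int_integral (m : ℤ) :
    (∫ x in (0:ℝ)..(2 * π), Complex.exp (Complex.I * m * x))
      = if m = 0 then (2 * π : ℝ) else 0 := by
  by_cases hm : m = 0
  · simp [hm]
  · rw [if_neg hm]
    have hc : (Complex.I * m : ℂ) ≠ 0 := by
      simp [Complex.I_ne_zero, Complex.ext_iff]
      exact_mod_cast hm
    have : ∀ x : ℝ, Complex.exp (Complex.I * m * x) = Complex.exp ((Complex.I * m) * x) := by
      intro x; ring_nf
    rw [intervalIntegral.integral_congr (fun x _ => this x), integral_exp_mul_complex hc]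
    have h1 : Complex.exp (Complex.I * m * (2 * π : ℝ)) = 1 := by
      have := Complex.exp_int_mul_two_pi_mul_I m
      rw [← this]
      congr 1
      push_cast
      ring
    rw [h1]
    simp

open Real in
lemma coeff_unique (N : ℤ) (c : ℤ → ℂ)
    (h : ∀ x : ℝ, ∑ ℓ ∈ Finset.Icc (-N) N, c ℓ * Complex.exp (Complex.I * ℓ * x) = 0) :
    ∀ ℓ₀ ∈ Finset.Icc (-N) N, c ℓ₀ = 0 := by
  intro ℓ₀ hℓ₀
  have h2 : ∀ x : ℝ, ∑ ℓ ∈ Finset.Icc (-N) N,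
      c ℓ * Complex.exp (Complex.I * ((ℓ : ℂ) - (ℓ₀ : ℂ)) * x) = 0 := by
    intro x
    have e : ∀ ℓ : ℤ, c ℓ * Complex.exp (Complex.I * ((ℓ : ℂ) - (ℓ₀ : ℂ)) * x)
        = c ℓ * Complex.exp (Complex.I * ℓ * x) * Complex.exp (-(Complex.I * ℓ₀ * x)) := by
      intro ℓ
      rw [mul_assoc (c ℓ), ← Complex.exp_add]
      congr 2
      ring
    rw [Finset.sum_congr rfl fun ℓ _ => e ℓ, ← Finset.sum_mul, h x, zero_mul]
  have hint : ∀ w : ℂ, IntervalIntegrable (fun x : ℝ => Complex.exp (Complex.I * w * x))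
      MeasureTheory.volume 0 (2 * π) := by
    intro w
    apply Continuous.intervalIntegrable
    exact Complex.continuous_exp.comp (continuous_const.mul Complex.continuous_ofReal)
  have h3 : (∫ x in (0:ℝ)..(2 * π), ∑ ℓ ∈ Finset.Icc (-N) N,
      c ℓ * Complex.exp (Complex.I * ((ℓ : ℂ) - (ℓ₀ : ℂ)) * x)) = 0 := by
    rw [intervalIntegral.integral_congr (fun x _ => h2 x)]
    simp
  rw [intervalIntegral.integral_finset_sum
    (fun (ℓ : ℤ) _ => (hint ((ℓ : ℂ) - (ℓ₀ : ℂ))).const_mul (c ℓ))] at h3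
  have h4 : ∀ ℓ ∈ Finset.Icc (-N) N,
      (∫ x in (0:ℝ)..(2 * π), c ℓ * Complex.exp (Complex.I * ((ℓ : ℂ) - (ℓ₀ : ℂ)) * x))
        = if ℓ = ℓ₀ then c ℓ * (2 * π : ℝ) else 0 := by
    intro ℓ _
    rw [intervalIntegral.integral_const_mul,
      show ((ℓ : ℂ) - (ℓ₀ : ℂ)) = ((ℓ - ℓ₀ : ℤ) : ℂ) by push_cast; ring,
      exp_int_integral]
    by_cases hl : ℓ = ℓ₀
    · simp [hl, sub_eq_zero]
    · rw [if_neg (by omega), if_neg hl]; simp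
  rw [Finset.sum_congr rfl h4, Finset.sum_ite_eq' _ ℓ₀, if_pos hℓ₀] at h3
  have hπ : ((2 * π : ℝ) : ℂ) ≠ 0 := by
    simp [Real.pi_ne_zero]
  exact (mul_eq_zero.mp h3).resolve_right hπ

/-- If `(∑_{k=-n}^n e^{ikx})^κ = ∑_{ℓ=-κn}^{κn} B_ℓ e^{iℓx}`, then the coefficients `B_ℓ`
are nonnegative reals and `B_{ℓ₁} ≥ B_{ℓ₂} ≥ 0` whenever `|ℓ₁| ≤ |ℓ₂| ≤ κn`. -/
theorem dirichlet_kernel_pow_coeffs (κ n : ℕ) (hκ : 2 ≤ κ) (hn : 0 < n) (B : ℤ → ℝ)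
    (hB : ∀ x : ℝ,
      (∑ k ∈ Finset.Icc (-(n : ℤ)) (n : ℤ), Complex.exp (Complex.I * k * x)) ^ κ
        = ∑ ℓ ∈ Finset.Icc (-(κ * n : ℤ)) (κ * n : ℤ),
            (B ℓ : ℂ) * Complex.exp (Complex.I * ℓ * x)) :
    ∀ ℓ₁ ℓ₂ : ℤ, |ℓ₁| ≤ |ℓ₂| → |ℓ₂| ≤ (κ * n : ℤ) → 0 ≤ B ℓ₂ ∧ B ℓ₂ ≤ B ℓ₁ := by
  have hzero : ∀ x : ℝ, ∑ ℓ ∈ Finset.Icc (-(κ * n : ℤ)) (κ * n : ℤ),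
      ((B ℓ : ℂ) - (cntDK n κ ℓ : ℂ)) * Complex.exp (Complex.I * ℓ * x) = 0 := by
    intro x
    have h1 := hB x
    have h2 := cntDK_gen n κ x
    simp only [sub_mul]
    rw [Finset.sum_sub_distrib, ← h1, ← h2, sub_self]
  have huniq := coeff_unique (κ * n : ℤ) _ hzero
  have hBeq : ∀ ℓ : ℤ, |ℓ| ≤ (κ * n : ℤ) → B ℓ = (cntDK n κ ℓ : ℝ) := by
    intro ℓ hℓ
    have hmem : ℓ ∈ Finset.Icc (-(κ * n : ℤ)) (κ * n : ℤ) := by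
      simp only [Finset.mem_Icc]
      rcases abs_cases ℓ with ⟨h', _⟩ | ⟨h', _⟩ <;> omega
    have := sub_eq_zero.mp (huniq ℓ hmem)
    exact_mod_cast this
  intro ℓ₁ ℓ₂ h12 h2
  have h1 : |ℓ₁| ≤ (κ * n : ℤ) := le_trans h12 h2
  rw [hBeq ℓ₂ h2, hBeq ℓ₁ h1]
  exact ⟨Nat.cast_nonneg _, Nat.cast_le.mpr (cntDK_mono n κ ℓ₁ ℓ₂ h12)⟩
end

section
/- Let m₁, m₂ be squarefree positive integers with d = gcd(m₁, m₂), let d₁ be a divisor of d, and set n = m₁m₂d₁/d². For any integer ℓ with 1 ≤ ℓ < n and gcd(ℓ, n) = 1, the number of pairs (ℓ₁, ℓ₂) with 1 ≤ ℓ_h ≤ m_h, gcd(ℓ_h, m_h) = 1 (h = 1, 2) such that ℓ₁/m₁ - ℓ₂/m₂ equals ℓ/n or ℓ/n - 1, is exactly φ(d) · ∏_{p | d₁} (p-2)/(p-1). -/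
open Finset

namespace CountPairsAux

lemma isUnit_prod_iff {M N : Type*} [Monoid M] [Monoid N] (x : M × N) :
    IsUnit x ↔ IsUnit x.1 ∧ IsUnit x.2 := by
  constructor
  · intro h
    exact ⟨h.map (MonoidHom.fst M N), h.map (MonoidHom.snd M N)⟩
  · rintro ⟨⟨u, hu⟩, ⟨v, hv⟩⟩
    refine ⟨⟨(x.1, x.2), ((↑u⁻¹ : M), (↑v⁻¹ : N)), ?_, ?_⟩, Prod.mk.eta⟩ <;>
      simp [Prod.ext_iff, ← hu, ← hv]

lemma isUnit_ringEquiv_iff {R S : Type*} [Ring R] [Ring S] (e : R ≃+* S) (x : R) :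
    IsUnit (e x) ↔ IsUnit x :=
  ⟨fun h => by simpa using h.map e.symm.toRingHom, fun h => h.map e.toRingHom⟩

lemma scale_modEq {x y k s M : ℤ} (h : x ≡ y [ZMOD k]) (hd : M ∣ k * s) :
    x * s ≡ y * s [ZMOD M] := by
  rw [Int.modEq_iff_dvd] at h ⊢
  have h2 : k * s ∣ (y - x) * s := mul_dvd_mul_right h s
  rw [sub_mul] at h2
  exact dvd_trans hd h2

lemma crt_fst_val_modEq {u v : ℕ} [NeZero u] [NeZero v] (h : Nat.Coprime u v) (x : ZMod (u * v)) :
    (((ZMod.chineseRemainder h x).1.val : ℤ) ≡ (x.val : ℤ) [ZMOD (u : ℤ)]) ∧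
    (((ZMod.chineseRemainder h x).2.val : ℤ) ≡ (x.val : ℤ) [ZMOD (v : ℤ)]) := by
  haveI : NeZero (u * v) := ⟨Nat.mul_ne_zero (NeZero.ne u) (NeZero.ne v)⟩
  have hx : (ZMod.chineseRemainder h x) = ((x.val : ZMod u), (x.val : ZMod v)) := by
    conv_lhs => rw [← ZMod.natCast_zmod_val x]
    rw [map_natCast]
    ext <;> simp
  rw [hx]
  simp only [ZMod.val_natCast]
  constructor <;>
  · show (_ : ℤ) % _ = _ % _
    push_cast [Int.natCast_mod]
    rw [Int.emod_emod_of_dvd _ dvd_rfl]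

/-- The number of pairs of units `(x, y)` mod `(m₁, m₂)` with `x*s - y*t ≡ C mod M`. -/
noncomputable def condCnt (m₁ m₂ M s t C : ℕ) : ℕ :=
  Nat.card {p : ZMod m₁ × ZMod m₂ //
    IsUnit p.1 ∧ IsUnit p.2 ∧
      ((p.1.val * s : ℤ) - (p.2.val * t : ℤ) ≡ (C : ℤ) [ZMOD (M : ℤ)])}

set_option maxHeartbeats 1000000 in
lemma condCnt_split (u₁ v₁ u₂ v₂ P Q s t C : ℕ)
    [NeZero u₁] [NeZero v₁] [NeZero u₂] [NeZero v₂]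
    (h₁ : Nat.Coprime u₁ v₁) (h₂ : Nat.Coprime u₂ v₂) (hPQ : Nat.Coprime P Q)
    (hP1 : P ∣ u₁ * s) (hP2 : P ∣ u₂ * t) (hQ1 : Q ∣ v₁ * s) (hQ2 : Q ∣ v₂ * t) :
    condCnt (u₁ * v₁) (u₂ * v₂) (P * Q) s t C
      = condCnt u₁ u₂ P s t C * condCnt v₁ v₂ Q s t C := by
  classical
  unfold condCnt
  rw [← Nat.card_prod]
  apply Nat.card_congr
  refine (Equiv.subtypeEquiv
    (((ZMod.chineseRemainder h₁).toEquiv.prodCongr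
        (ZMod.chineseRemainder h₂).toEquiv).trans (Equiv.prodProdProdComm _ _ _ _)) ?_).trans
    Equiv.subtypeProdEquivProd
  rintro ⟨x, y⟩
  simp only [Equiv.trans_apply, Equiv.prodCongr_apply, RingEquiv.toEquiv_eq_coe,
    EquivLike.coe_coe, Prod.map_apply, Equiv.prodProdProdComm_apply]
  set a₁ := (ZMod.chineseRemainder h₁ x).1 with ha₁
  set b₁ := (ZMod.chineseRemainder h₁ x).2 with hb₁
  set a₂ := (ZMod.chineseRemainder h₂ y).1 with ha₂
  set b₂ := (ZMod.chineseRemainder h₂ y).2 with hb₂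
  have hux : IsUnit x ↔ IsUnit a₁ ∧ IsUnit b₁ := by
    rw [← isUnit_ringEquiv_iff (ZMod.chineseRemainder h₁) x, isUnit_prod_iff]
  have huy : IsUnit y ↔ IsUnit a₂ ∧ IsUnit b₂ := by
    rw [← isUnit_ringEquiv_iff (ZMod.chineseRemainder h₂) y, isUnit_prod_iff]
  have hcondP : ((x.val * s : ℤ) - (y.val * t : ℤ) ≡ (C : ℤ) [ZMOD (P : ℤ)])
      ↔ ((a₁.val * s : ℤ) - (a₂.val * t : ℤ) ≡ (C : ℤ) [ZMOD (P : ℤ)]) := by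
    have e1 : (a₁.val * s : ℤ) ≡ (x.val * s : ℤ) [ZMOD (P : ℤ)] :=
      scale_modEq (crt_fst_val_modEq h₁ x).1 (by exact_mod_cast Int.natCast_dvd_natCast.mpr hP1)
    have e2 : (a₂.val * t : ℤ) ≡ (y.val * t : ℤ) [ZMOD (P : ℤ)] :=
      scale_modEq (crt_fst_val_modEq h₂ y).1 (by exact_mod_cast Int.natCast_dvd_natCast.mpr hP2)
    exact ⟨fun hh => ((e1.sub e2).trans hh), fun hh => ((e1.sub e2).symm.trans hh)⟩
  have hcondQ : ((x.val * s : ℤ) - (y.val * t : ℤ) ≡ (C : ℤ) [ZMOD (Q : ℤ)])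
      ↔ ((b₁.val * s : ℤ) - (b₂.val * t : ℤ) ≡ (C : ℤ) [ZMOD (Q : ℤ)]) := by
    have e1 : (b₁.val * s : ℤ) ≡ (x.val * s : ℤ) [ZMOD (Q : ℤ)] :=
      scale_modEq (crt_fst_val_modEq h₁ x).2 (by exact_mod_cast Int.natCast_dvd_natCast.mpr hQ1)
    have e2 : (b₂.val * t : ℤ) ≡ (y.val * t : ℤ) [ZMOD (Q : ℤ)] :=
      scale_modEq (crt_fst_val_modEq h₂ y).2 (by exact_mod_cast Int.natCast_dvd_natCast.mpr hQ2)
    exact ⟨fun hh => ((e1.sub e2).trans hh), fun hh => ((e1.sub e2).symm.trans hh)⟩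
  have hsplit : ((x.val * s : ℤ) - (y.val * t : ℤ) ≡ (C : ℤ) [ZMOD ((P * Q : ℕ) : ℤ)])
      ↔ (((x.val * s : ℤ) - (y.val * t : ℤ) ≡ (C : ℤ) [ZMOD (P : ℤ)]) ∧
         ((x.val * s : ℤ) - (y.val * t : ℤ) ≡ (C : ℤ) [ZMOD (Q : ℤ)])) := by
    push_cast
    exact (Int.modEq_and_modEq_iff_modEq_mul (by simpa using hPQ)).symm
  rw [hsplit, hux, huy, hcondP, hcondQ]
  tauto

lemma zmod_cond_iff {k : ℕ} [NeZero k] (x y : ZMod k) (s t C : ℕ) :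
    ((x.val * s : ℤ) - (y.val * t : ℤ) ≡ (C : ℤ) [ZMOD (k : ℤ)])
      ↔ x * (s : ZMod k) - y * (t : ZMod k) = (C : ZMod k) := by
  have hcast : (((x.val * s : ℤ) - (y.val * t : ℤ) : ℤ) : ZMod k)
      = x * (s : ZMod k) - y * (t : ZMod k) := by
    push_cast
    rw [ZMod.natCast_zmod_val, ZMod.natCast_zmod_val]
  rw [← ZMod.intCast_eq_intCast_iff, hcast, Int.cast_natCast]

def sndSub {α β : Type*} {q : β → Prop} : {p : α × β // q p.2} ≃ {b // q b} × α where
  toFun x := (⟨x.1.2, x.2⟩, x.1.1)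
  invFun y := ⟨(y.2, y.1.1), y.1.2⟩
  left_inv := fun ⟨⟨_, _⟩, _⟩ => rfl
  right_inv := fun ⟨⟨_, _⟩, _⟩ => rfl

lemma condCnt_right_one (k s t C : ℕ) [NeZero k]
    (hs : Nat.Coprime s k) (hC : Nat.Coprime C k) :
    condCnt k 1 k s t C = 1 := by
  obtain ⟨us, hus⟩ := (ZMod.isUnit_iff_coprime s k).mpr hs
  have hCu : IsUnit (C : ZMod k) := (ZMod.isUnit_iff_coprime C k).mpr hC
  unfold condCnt
  have he : ∀ p : ZMod k × ZMod 1,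
      (IsUnit p.1 ∧ IsUnit p.2 ∧
        ((p.1.val * s : ℤ) - (p.2.val * t : ℤ) ≡ (C : ℤ) [ZMOD (k : ℤ)]))
        ↔ (p.1 * (s : ZMod k) = (C : ZMod k)) := by
    rintro ⟨x, y⟩
    have hy : y = 0 := Subsingleton.elim _ _
    subst hy
    have hv : (0 : ZMod 1).val = 0 := rfl
    rw [hv]
    simp only [Nat.cast_zero, zero_mul, sub_zero]
    constructor
    · rintro ⟨-, -, hmod⟩
      have := (ZMod.intCast_eq_intCast_iff _ _ _).mpr hmod
      push_cast at this
      rwa [ZMod.natCast_zmod_val] at this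
    · intro h
      refine ⟨?_, isUnit_of_subsingleton _, ?_⟩
      · have : x = (C : ZMod k) * ↑us⁻¹ := by
          rw [← h, ← hus, mul_assoc, Units.mul_inv, mul_one]
        rw [this]
        exact hCu.mul us⁻¹.isUnit
      · rw [← ZMod.intCast_eq_intCast_iff]
        push_cast
        rwa [ZMod.natCast_zmod_val]
  rw [Nat.card_congr ((Equiv.subtypeEquiv (Equiv.refl _) (by simpa using he)).trans
    (Equiv.prodSubtypeFstEquivSubtypeProd (p := fun x : ZMod k => x * (s : ZMod k) = (C : ZMod k))))]
  rw [Nat.card_prod]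
  haveI : Unique {x : ZMod k // x * (s : ZMod k) = (C : ZMod k)} := by
    refine ⟨⟨⟨(C : ZMod k) * ↑us⁻¹, by rw [mul_assoc, ← hus, Units.inv_mul, mul_one]⟩⟩, ?_⟩
    rintro ⟨x, hx⟩
    ext
    show x = (C : ZMod k) * ↑us⁻¹
    rw [← hx, ← hus, mul_assoc, Units.mul_inv, mul_one]
  simp [Nat.card_unique]

lemma condCnt_left_one (k s t C : ℕ) [NeZero k]
    (ht : Nat.Coprime t k) (hC : Nat.Coprime C k) :
    condCnt 1 k k s t C = 1 := by
  obtain ⟨ut, hut⟩ := (ZMod.isUnit_iff_coprime t k).mpr ht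
  have hCu : IsUnit (-(C : ZMod k)) := ((ZMod.isUnit_iff_coprime C k).mpr hC).neg
  unfold condCnt
  have he : ∀ p : ZMod 1 × ZMod k,
      (IsUnit p.1 ∧ IsUnit p.2 ∧
        ((p.1.val * s : ℤ) - (p.2.val * t : ℤ) ≡ (C : ℤ) [ZMOD (k : ℤ)]))
        ↔ (p.2 * (t : ZMod k) = (-(C : ZMod k))) := by
    rintro ⟨x, y⟩
    have hx : x = 0 := Subsingleton.elim _ _
    subst hx
    have hv : (0 : ZMod 1).val = 0 := rfl
    rw [hv]
    simp only [Nat.cast_zero, zero_mul, zero_sub]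
    constructor
    · rintro ⟨-, -, hmod⟩
      have := (ZMod.intCast_eq_intCast_iff _ _ _).mpr hmod
      push_cast at this
      rw [ZMod.natCast_zmod_val] at this
      rw [← this, neg_neg]
    · intro h
      refine ⟨isUnit_of_subsingleton _, ?_, ?_⟩
      · have : y = (-(C : ZMod k)) * ↑ut⁻¹ := by
          rw [← h, ← hut, mul_assoc, Units.mul_inv, mul_one]
        rw [this]
        exact hCu.mul ut⁻¹.isUnit
      · rw [← ZMod.intCast_eq_intCast_iff]
        push_cast
        rw [ZMod.natCast_zmod_val, h]
        ring
  rw [Nat.card_congr ((Equiv.subtypeEquiv (Equiv.refl _) (by simpa using he)).trans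
    (sndSub (q := fun y : ZMod k => y * (t : ZMod k) = (-(C : ZMod k)))))]
  rw [Nat.card_prod]
  haveI : Unique {y : ZMod k // y * (t : ZMod k) = (-(C : ZMod k))} := by
    refine ⟨⟨⟨(-(C : ZMod k)) * ↑ut⁻¹, by rw [mul_assoc, ← hut, Units.inv_mul, mul_one]⟩⟩, ?_⟩
    rintro ⟨y, hy⟩
    ext
    show y = (-(C : ZMod k)) * ↑ut⁻¹
    rw [← hy, ← hut, mul_assoc, Units.mul_inv, mul_one]
  simp [Nat.card_unique]

lemma modEq_cancel {k A B : ℤ} (hk : k ≠ 0) : (k * A ≡ k * B [ZMOD k * k]) ↔ A ≡ B [ZMOD k] := by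
  rw [Int.modEq_iff_dvd, Int.modEq_iff_dvd, ← mul_sub, mul_dvd_mul_iff_left hk]

/-- number of units `x` with `x - 1` also a unit -/
noncomputable def B (k : ℕ) : ℕ := Nat.card {x : ZMod k // IsUnit x ∧ IsUnit (x - 1)}

lemma card_isUnit (k : ℕ) [NeZero k] :
    Nat.card {x : ZMod k // IsUnit x} = Nat.totient k := by
  have e : {x : ZMod k // IsUnit x} ≃ (ZMod k)ˣ :=
    { toFun := fun x => x.2.unit
      invFun := fun u => ⟨u, u.isUnit⟩
      left_inv := fun x => Subtype.ext x.2.unit_spec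
      right_inv := fun u => Units.ext (IsUnit.unit_spec _) }
  rw [Nat.card_congr e, Nat.card_eq_fintype_card, ZMod.card_units_eq_totient]

lemma condCnt_diag (k s₁ t₁ C₁ : ℕ) [NeZero k] (ht : Nat.Coprime t₁ k) :
    condCnt k k (k * k) (k * s₁) (k * t₁) (k * C₁)
      = Nat.card {x : ZMod k // IsUnit x ∧ IsUnit (x * (s₁ : ZMod k) - (C₁ : ZMod k))} := by
  obtain ⟨ut, hut⟩ := (ZMod.isUnit_iff_coprime t₁ k).mpr ht
  unfold condCnt
  apply Nat.card_congr
  have hcond : ∀ x y : ZMod k,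
      ((x.val * (k * s₁ : ℕ) : ℤ) - (y.val * (k * t₁ : ℕ) : ℤ) ≡ ((k * C₁ : ℕ) : ℤ)
        [ZMOD ((k * k : ℕ) : ℤ)])
        ↔ x * (s₁ : ZMod k) - y * (t₁ : ZMod k) = (C₁ : ZMod k) := by
    intro x y
    rw [← zmod_cond_iff x y s₁ t₁ C₁]
    have h1 : ((x.val * (k * s₁ : ℕ) : ℤ) - (y.val * (k * t₁ : ℕ) : ℤ))
        = (k : ℤ) * ((x.val * s₁ : ℤ) - (y.val * t₁ : ℤ)) := by push_cast; ring
    have h2 : ((k * C₁ : ℕ) : ℤ) = (k : ℤ) * (C₁ : ℤ) := by push_cast; ring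
    have h3 : ((k * k : ℕ) : ℤ) = (k : ℤ) * (k : ℤ) := by push_cast; ring
    rw [h1, h2, h3]
    exact modEq_cancel (by exact_mod_cast NeZero.ne k)
  refine Equiv.ofBijective (fun p => ⟨p.1.1, p.2.1, ?_⟩) ⟨?_, ?_⟩
  · obtain ⟨⟨x, y⟩, hx, hy, hmod⟩ := p
    have heq : x * (s₁ : ZMod k) - (C₁ : ZMod k) = y * (t₁ : ZMod k) := by
      have := (hcond x y).mp hmod
      rw [← this]; ring
    rw [heq]
    exact hy.mul ((ZMod.isUnit_iff_coprime t₁ k).mpr ht)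
  · rintro ⟨⟨x, y⟩, hx, hy, hmod⟩ ⟨⟨x', y'⟩, hx', hy', hmod'⟩ hxy
    simp only [Subtype.mk.injEq, Prod.mk.injEq] at hxy ⊢
    have h1 := (hcond x y).mp hmod
    have h2 := (hcond x' y').mp hmod'
    subst hxy
    refine ⟨rfl, ?_⟩
    have : y * (t₁ : ZMod k) = y' * (t₁ : ZMod k) := by
      have := h1.trans h2.symm
      linear_combination -this
    calc y = y * (t₁ : ZMod k) * ↑ut⁻¹ := by rw [← hut, mul_assoc, Units.mul_inv, mul_one]
    _ = y' * (t₁ : ZMod k) * ↑ut⁻¹ := by rw [this]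
    _ = y' := by rw [← hut, mul_assoc, Units.mul_inv, mul_one]
  · rintro ⟨x, hx, hu⟩
    refine ⟨⟨(x, (x * (s₁ : ZMod k) - (C₁ : ZMod k)) * ↑ut⁻¹), hx, ?_, ?_⟩, rfl⟩
    · exact hu.mul ut⁻¹.isUnit
    · rw [hcond]
      rw [mul_assoc, ← hut, Units.inv_mul, mul_one]
      ring

lemma condCnt_diag_totient (k s₁ t₁ C₁ : ℕ) [NeZero k]
    (hs : Nat.Coprime s₁ k) (ht : Nat.Coprime t₁ k) (hC : k ∣ C₁) :
    condCnt k k (k * k) (k * s₁) (k * t₁) (k * C₁) = Nat.totient k := by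
  rw [condCnt_diag k s₁ t₁ C₁ ht]
  have hC0 : (C₁ : ZMod k) = 0 := (ZMod.natCast_eq_zero_iff C₁ k).mpr hC
  rw [← card_isUnit k]
  apply Nat.card_congr
  apply Equiv.subtypeEquiv (Equiv.refl _)
  intro x
  simp only [Equiv.refl_apply, hC0, sub_zero]
  constructor
  · rintro ⟨h, -⟩; exact h
  · intro h
    exact ⟨h, h.mul ((ZMod.isUnit_iff_coprime s₁ k).mpr hs)⟩

lemma condCnt_diag_B (k s₁ t₁ C₁ : ℕ) [NeZero k]
    (hs : Nat.Coprime s₁ k) (ht : Nat.Coprime t₁ k) (hC : Nat.Coprime C₁ k) :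
    condCnt k k (k * k) (k * s₁) (k * t₁) (k * C₁) = B k := by
  rw [condCnt_diag k s₁ t₁ C₁ ht]
  obtain ⟨us, hus⟩ := (ZMod.isUnit_iff_coprime s₁ k).mpr hs
  obtain ⟨uC, huC⟩ := (ZMod.isUnit_iff_coprime C₁ k).mpr hC
  unfold B
  apply Nat.card_congr
  have key : ∀ x : ZMod k, x * ↑(us * uC⁻¹) * (C₁ : ZMod k) = x * (s₁ : ZMod k) := by
    intro x
    push_cast
    rw [← huC, ← hus, mul_assoc, mul_assoc, Units.inv_mul, mul_one]
  refine ⟨fun p => ⟨p.1 * ↑(us * uC⁻¹), ?_, ?_⟩, fun q => ⟨q.1 * ↑(us * uC⁻¹)⁻¹, ?_, ?_⟩,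
    ?_, ?_⟩
  · exact p.2.1.mul (us * uC⁻¹).isUnit
  · have heq : (p.1 * ↑(us * uC⁻¹) - 1) * ↑uC = p.1 * (s₁ : ZMod k) - (C₁ : ZMod k) := by
      rw [sub_mul, one_mul, huC, mul_assoc]
      rw [show ((us * uC⁻¹ : (ZMod k)ˣ) : ZMod k) * (C₁ : ZMod k)
           = ↑us * (↑uC⁻¹ * ↑uC) by rw [← huC]; push_cast; ring]
      rw [Units.inv_mul, mul_one, hus]
    have h3 : IsUnit ((p.1 * ↑(us * uC⁻¹) - 1) * ↑uC) := by rw [heq]; exact p.2.2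
    exact isUnit_of_mul_isUnit_left h3
  · exact q.2.1.mul (us * uC⁻¹)⁻¹.isUnit
  · have hq := q.2.2
    have heq : q.1 * ↑(us * uC⁻¹)⁻¹ * (s₁ : ZMod k) - (C₁ : ZMod k) = (q.1 - 1) * ↑uC := by
      rw [← key (q.1 * ↑(us * uC⁻¹)⁻¹), mul_assoc (q.1) _ _, Units.inv_mul, mul_one, sub_mul,
        one_mul, huC]
    rw [heq]
    exact hq.mul uC.isUnit
  · rintro ⟨x, hx⟩
    simp only [Subtype.mk.injEq]
    rw [mul_assoc, Units.mul_inv, mul_one]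
  · rintro ⟨x, hx⟩
    simp only [Subtype.mk.injEq]
    rw [mul_assoc, Units.inv_mul, mul_one]

lemma B_mul (u v : ℕ) [NeZero u] [NeZero v] (h : Nat.Coprime u v) : B (u * v) = B u * B v := by
  unfold B
  rw [← Nat.card_prod]
  apply Nat.card_congr
  refine (Equiv.subtypeEquiv (ZMod.chineseRemainder h).toEquiv ?_).trans
    Equiv.subtypeProdEquivProd
  intro x
  have h1 : IsUnit x ↔ IsUnit ((ZMod.chineseRemainder h) x).1 ∧
      IsUnit ((ZMod.chineseRemainder h) x).2 := by
    rw [← isUnit_ringEquiv_iff (ZMod.chineseRemainder h) x, isUnit_prod_iff]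
  have h2 : IsUnit (x - 1) ↔ IsUnit (((ZMod.chineseRemainder h) x).1 - 1) ∧
      IsUnit (((ZMod.chineseRemainder h) x).2 - 1) := by
    rw [← isUnit_ringEquiv_iff (ZMod.chineseRemainder h) (x - 1), isUnit_prod_iff, map_sub,
      map_one]
    rfl
  rw [h1, h2]
  simp only [RingEquiv.toEquiv_eq_coe, EquivLike.coe_coe]
  tauto

lemma B_one : B 1 = 1 := by
  unfold B
  haveI : Unique {x : ZMod 1 // IsUnit x ∧ IsUnit (x - 1)} :=
    ⟨⟨⟨0, isUnit_of_subsingleton _, isUnit_of_subsingleton _⟩⟩,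
      fun y => Subtype.ext (Subsingleton.elim _ _)⟩
  exact Nat.card_unique

lemma B_prime (p : ℕ) (hp : p.Prime) : B p = p - 2 := by
  haveI : Fact p.Prime := ⟨hp⟩
  classical
  unfold B
  rw [Nat.card_eq_fintype_card, Fintype.card_subtype]
  have hfilter : (Finset.univ.filter fun x : ZMod p => IsUnit x ∧ IsUnit (x - 1))
      = Finset.univ \ {0, 1} := by
    ext z
    simp only [Finset.mem_filter, Finset.mem_univ, true_and, Finset.mem_sdiff,
      Finset.mem_insert, Finset.mem_singleton]
    rw [isUnit_iff_ne_zero, isUnit_iff_ne_zero, sub_ne_zero]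
    tauto
  rw [hfilter, Finset.card_sdiff_of_subset (Finset.subset_univ _)]
  have h01 : (0 : ZMod p) ≠ 1 := zero_ne_one
  rw [Finset.card_insert_of_notMem (by simp [h01]), Finset.card_singleton]
  rw [Finset.card_univ, ZMod.card]

lemma sqf_ind {P : ℕ → Prop} (h1 : P 1)
    (hstep : ∀ p m, Nat.Prime p → Squarefree m → ¬ p ∣ m → P m → P (p * m)) :
    ∀ n, Squarefree n → P n := by
  intro n
  induction n using Nat.strong_induction_on with
  | _ n ih =>
    intro hn
    rcases eq_or_ne n 1 with rfl | hne
    · exact h1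
    · have h0 : n ≠ 0 := hn.ne_zero
      have hp := Nat.minFac_prime hne
      obtain ⟨m, hm⟩ := Nat.minFac_dvd n
      rw [hm] at hn ⊢
      obtain ⟨hcop, -, hsm⟩ := Nat.squarefree_mul_iff.mp hn
      have hm0 : m ≠ 0 := by rintro rfl; rw [hm, mul_zero] at h0; exact h0 rfl
      have hmlt : m < n.minFac * m := by
        have : 1 < n.minFac := hp.one_lt
        calc m = 1 * m := (one_mul m).symm
        _ < n.minFac * m := by
          exact (Nat.mul_lt_mul_right (Nat.pos_of_ne_zero hm0)).mpr this
      have hnd : ¬ n.minFac ∣ m := fun hdvd =>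
        hp.one_lt.ne' (Nat.dvd_one.mp (hcop ▸ Nat.dvd_gcd dvd_rfl hdvd))
      exact hstep _ _ hp hsm hnd (ih m (by rw [hm] at *; omega) hsm)

lemma B_eq_prod : ∀ n, Squarefree n → B n = ∏ p ∈ n.primeFactors, (p - 2) := by
  refine sqf_ind ?_ ?_
  · simp [B_one]
  · intro p m hp hsm hnd ih
    haveI : NeZero p := ⟨hp.pos.ne'⟩
    haveI : NeZero m := ⟨hsm.ne_zero⟩
    rw [B_mul p m ((Nat.Prime.coprime_iff_not_dvd hp).mpr hnd), B_prime p hp, ih,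
      Nat.primeFactors_mul hp.pos.ne' hsm.ne_zero, hp.primeFactors,
      Finset.prod_union (Finset.disjoint_singleton_left.mpr
        (fun hmem => hnd (Nat.dvd_of_mem_primeFactors hmem))),
      Finset.prod_singleton]

lemma totient_eq_prod : ∀ n, Squarefree n → Nat.totient n = ∏ p ∈ n.primeFactors, (p - 1) := by
  refine sqf_ind ?_ ?_
  · simp
  · intro p m hp hsm hnd ih
    rw [Nat.totient_mul ((Nat.Prime.coprime_iff_not_dvd hp).mpr hnd), Nat.totient_prime hp, ih,
      Nat.primeFactors_mul hp.pos.ne' hsm.ne_zero, hp.primeFactors,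
      Finset.prod_union (Finset.disjoint_singleton_left.mpr
        (fun hmem => hnd (Nat.dvd_of_mem_primeFactors hmem))),
      Finset.prod_singleton]

lemma window {A c M : ℤ} (hM : 0 < M) (hA1 : -M < A) (hA2 : A < M) (hc1 : 0 ≤ c) (hc2 : c < M) :
    (A = c ∨ A = c - M) ↔ A ≡ c [ZMOD M] := by
  constructor
  · rintro (rfl | rfl)
    · rfl
    · exact Int.modEq_iff_dvd.mpr ⟨1, by ring⟩
  · intro h
    obtain ⟨k, hk⟩ := Int.modEq_iff_dvd.mp h
    have hk0 : k = 0 ∨ k = 1 := by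
      rcases lt_trichotomy k 0 with hlt | heq | hgt
      · exfalso
        have : M * k ≤ M * (-1) := by
          apply mul_le_mul_of_nonneg_left _ hM.le
          omega
        omega
      · exact Or.inl heq
      · right
        by_contra hne
        have : M * 2 ≤ M * k := by
          apply mul_le_mul_of_nonneg_left _ hM.le
          omega
        omega
    rcases hk0 with rfl | rfl
    · left; omega
    · right; omega

lemma natCast_val_modEq (k x : ℕ) [NeZero k] :
    ((((x : ZMod k)).val : ℤ)) ≡ (x : ℤ) [ZMOD (k : ℤ)] := by
  rw [ZMod.val_natCast]
  show (_ : ℤ) % _ = _ % _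
  push_cast [Int.natCast_mod]
  rw [Int.emod_emod_of_dvd _ dvd_rfl]

lemma lift_mem (k : ℕ) [NeZero k] (z : ZMod k) :
    (if z.val = 0 then k else z.val) ∈ Finset.Icc 1 k ∧
      (((if z.val = 0 then k else z.val) : ℕ) : ZMod k) = z := by
  have hk : 0 < k := Nat.pos_of_ne_zero (NeZero.ne k)
  by_cases h : z.val = 0
  · rw [if_pos h]
    constructor
    · simp [Finset.mem_Icc]; omega
    · rw [ZMod.natCast_self]
      exact ((ZMod.val_eq_zero z).mp h).symm
  · rw [if_neg h]
    constructor
    · have := ZMod.val_lt z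
      simp [Finset.mem_Icc]; omega
    · exact ZMod.natCast_zmod_val z

lemma lift_cast_eq (k x : ℕ) [NeZero k] (hx : x ∈ Finset.Icc 1 k) :
    (if ((x : ZMod k)).val = 0 then k else ((x : ZMod k)).val) = x := by
  rw [Finset.mem_Icc] at hx
  rw [ZMod.val_natCast]
  rcases eq_or_lt_of_le hx.2 with rfl | hlt
  · simp
  · rw [Nat.mod_eq_of_lt hlt, if_neg (by omega)]

lemma card_filter_eq_condCnt (m₁ m₂ c : ℕ) (h₁ : 0 < m₁) (h₂ : 0 < m₂) :
    ((Finset.Icc 1 m₁ ×ˢ Finset.Icc 1 m₂).filter (fun q =>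
      Nat.gcd q.1 m₁ = 1 ∧ Nat.gcd q.2 m₂ = 1 ∧
        ((q.1 * m₂ : ℤ) - (q.2 * m₁ : ℤ) ≡ (c : ℤ) [ZMOD ((m₁ * m₂ : ℕ) : ℤ)]))).card
      = condCnt m₁ m₂ (m₁ * m₂) m₂ m₁ c := by
  classical
  haveI : NeZero m₁ := ⟨h₁.ne'⟩
  haveI : NeZero m₂ := ⟨h₂.ne'⟩
  rw [condCnt, Nat.card_eq_fintype_card, Fintype.card_subtype]
  have hcond : ∀ x y : ℕ,
      ((((x : ZMod m₁)).val * m₂ : ℤ) - (((y : ZMod m₂)).val * m₁ : ℤ) ≡ (c : ℤ)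
        [ZMOD ((m₁ * m₂ : ℕ) : ℤ)])
      ↔ ((x * m₂ : ℤ) - (y * m₁ : ℤ) ≡ (c : ℤ) [ZMOD ((m₁ * m₂ : ℕ) : ℤ)]) := by
    intro x y
    have e1 : ((((x : ZMod m₁)).val : ℤ) * m₂) ≡ ((x : ℤ) * m₂) [ZMOD ((m₁ * m₂ : ℕ) : ℤ)] :=
      scale_modEq (natCast_val_modEq m₁ x) (by push_cast; exact dvd_rfl)
    have e2 : ((((y : ZMod m₂)).val : ℤ) * m₁) ≡ ((y : ℤ) * m₁) [ZMOD ((m₁ * m₂ : ℕ) : ℤ)] :=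
      scale_modEq (natCast_val_modEq m₂ y) (by push_cast; rw [mul_comm]) 
    exact ⟨fun hh => ((e1.sub e2).symm.trans hh), fun hh => ((e1.sub e2).trans hh)⟩
  apply Finset.card_bij'
    (i := fun q _ => (((q.1 : ℕ) : ZMod m₁), ((q.2 : ℕ) : ZMod m₂)))
    (j := fun z _ => ((if z.1.val = 0 then m₁ else z.1.val), (if z.2.val = 0 then m₂ else z.2.val)))
  · rintro ⟨x, y⟩ hq
    rw [Finset.mem_filter] at hq
    obtain ⟨hmem, hg1, hg2, hmod⟩ := hq
    rw [Finset.mem_filter]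
    refine ⟨Finset.mem_univ _, ?_, ?_, ?_⟩
    · exact (ZMod.isUnit_iff_coprime x m₁).mpr hg1
    · exact (ZMod.isUnit_iff_coprime y m₂).mpr hg2
    · exact (hcond x y).mpr hmod
  · rintro ⟨z₁, z₂⟩ hz
    rw [Finset.mem_filter] at hz
    obtain ⟨-, hu1, hu2, hmod⟩ := hz
    rw [Finset.mem_filter, Finset.mem_product]
    have l1 := lift_mem m₁ z₁
    have l2 := lift_mem m₂ z₂
    refine ⟨⟨l1.1, l2.1⟩, ?_, ?_, ?_⟩
    · exact (ZMod.isUnit_iff_coprime _ m₁).mp (by rw [l1.2]; exact hu1)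
    · exact (ZMod.isUnit_iff_coprime _ m₂).mp (by rw [l2.2]; exact hu2)
    · rw [← hcond]
      rw [l1.2, l2.2]
      exact hmod
  · rintro ⟨x, y⟩ hq
    rw [Finset.mem_filter, Finset.mem_product] at hq
    simp only [Prod.mk.injEq]
    exact ⟨lift_cast_eq m₁ x hq.1.1, lift_cast_eq m₂ y hq.1.2⟩
  · rintro ⟨z₁, z₂⟩ hz
    simp only [Prod.mk.injEq]
    exact ⟨(lift_mem m₁ z₁).2, (lift_mem m₂ z₂).2⟩

end CountPairsAux

set_option maxHeartbeats 4000000 in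
open CountPairsAux in
/-- Counting lemma for differences of reduced fractions: with `m₁, m₂` squarefree,
`d = gcd(m₁,m₂)`, `d₁ ∣ d`, `n = m₁m₂d₁/d²`, and `ℓ/n` a reduced fraction with
`1 ≤ ℓ < n`, the number of pairs `(ℓ₁, ℓ₂)` with `1 ≤ ℓ_h ≤ m_h`, `gcd(ℓ_h, m_h) = 1`
and `ℓ₁/m₁ - ℓ₂/m₂ = ℓ/n` or `ℓ/n - 1` equals `φ(d) ∏_{p ∣ d₁} (p-2)/(p-1)`. -/
theorem count_pairs_reduced_fractions (m₁ m₂ : ℕ) (h₁ : 0 < m₁) (h₂ : 0 < m₂)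
    (hs₁ : Squarefree m₁) (hs₂ : Squarefree m₂)
    (d₁ : ℕ) (hd₁ : d₁ ∣ Nat.gcd m₁ m₂)
    (n : ℕ) (hn : n * (Nat.gcd m₁ m₂) ^ 2 = m₁ * m₂ * d₁)
    (ℓ : ℕ) (hℓ1 : 1 ≤ ℓ) (hℓn : ℓ < n) (hℓcop : Nat.gcd ℓ n = 1) :
    (((Finset.Icc 1 m₁ ×ˢ Finset.Icc 1 m₂).filter (fun p =>
        Nat.gcd p.1 m₁ = 1 ∧ Nat.gcd p.2 m₂ = 1 ∧
          ((p.1 : ℚ) / m₁ - (p.2 : ℚ) / m₂ = (ℓ : ℚ) / n ∨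
            (p.1 : ℚ) / m₁ - (p.2 : ℚ) / m₂ = (ℓ : ℚ) / n - 1))).card : ℚ)
      = (Nat.totient (Nat.gcd m₁ m₂) : ℚ) *
          ∏ p ∈ d₁.primeFactors, (((p : ℚ) - 2) / ((p : ℚ) - 1)) := by
  classical
  set d := Nat.gcd m₁ m₂ with hdd
  obtain ⟨a, ha⟩ : d ∣ m₁ := Nat.gcd_dvd_left m₁ m₂
  obtain ⟨b, hb⟩ : d ∣ m₂ := Nat.gcd_dvd_right m₁ m₂
  obtain ⟨e, he⟩ := hd₁
  have hd0 : 0 < d := Nat.gcd_pos_of_pos_left m₂ h₁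
  have ha0 : 0 < a := by
    rcases Nat.eq_zero_or_pos a with rfl | h
    · rw [mul_zero] at ha; omega
    · exact h
  have hb0 : 0 < b := by
    rcases Nat.eq_zero_or_pos b with rfl | h
    · rw [mul_zero] at hb; omega
    · exact h
  have hd₁0 : 0 < d₁ := by
    rcases Nat.eq_zero_or_pos d₁ with rfl | h
    · rw [zero_mul] at he; omega
    · exact h
  have he0 : 0 < e := by
    rcases Nat.eq_zero_or_pos e with rfl | h
    · rw [mul_zero] at he; omega
    · exact h
  have hn0 : 0 < n := by omega
  haveI : NeZero m₁ := ⟨h₁.ne'⟩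
  haveI : NeZero m₂ := ⟨h₂.ne'⟩
  haveI : NeZero a := ⟨ha0.ne'⟩
  haveI : NeZero b := ⟨hb0.ne'⟩
  haveI : NeZero d := ⟨hd0.ne'⟩
  haveI : NeZero d₁ := ⟨hd₁0.ne'⟩
  haveI : NeZero e := ⟨he0.ne'⟩
  -- squarefree decompositions
  obtain ⟨cda, hsd, hsa⟩ : Nat.Coprime d a ∧ Squarefree d ∧ Squarefree a := by
    rw [ha] at hs₁; exact Nat.squarefree_mul_iff.mp hs₁
  obtain ⟨cdb, -, hsb⟩ : Nat.Coprime d b ∧ Squarefree d ∧ Squarefree b := by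
    rw [hb] at hs₂; exact Nat.squarefree_mul_iff.mp hs₂
  obtain ⟨cd₁e, hsd₁, hse⟩ : Nat.Coprime d₁ e ∧ Squarefree d₁ ∧ Squarefree e := by
    rw [he] at hsd; exact Nat.squarefree_mul_iff.mp hsd
  have hcab : Nat.Coprime a b := by
    have h := Nat.coprime_div_gcd_div_gcd (m := m₁) (n := m₂) hd0
    rw [← hdd, ha, hb, Nat.mul_div_cancel_left a hd0, Nat.mul_div_cancel_left b hd0] at h
    exact h
  have hnab : n = a * b * d₁ := by
    have hcalc : n * d ^ 2 = (a * b * d₁) * d ^ 2 := by rw [hn, ha, hb]; ring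
    exact Nat.eq_of_mul_eq_mul_right (by positivity) hcalc
  set q := d₁ * (e * e) with hqdef
  have hq0 : 0 < q := by positivity
  have hM : m₁ * m₂ = n * q := by rw [ha, hb, hnab, he, hqdef]; ring
  set c := ℓ * q with hcdef
  have hcn : c * n = ℓ * (m₁ * m₂) := by rw [hM, hcdef]; ring
  have hc1 : 1 ≤ c := Nat.mul_pos (by omega) hq0
  have hcM : c < m₁ * m₂ := by
    rw [hM, hcdef]
    exact (Nat.mul_lt_mul_right hq0).mpr hℓn
  -- coprimality package
  have hℓcop' : Nat.Coprime ℓ n := hℓcop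
  have hℓa : Nat.Coprime ℓ a := hℓcop'.coprime_dvd_right ⟨b * d₁, by rw [hnab]; ring⟩
  have hℓb : Nat.Coprime ℓ b := hℓcop'.coprime_dvd_right ⟨a * d₁, by rw [hnab]; ring⟩
  have hℓd₁ : Nat.Coprime ℓ d₁ := hℓcop'.coprime_dvd_right ⟨a * b, by rw [hnab]; ring⟩
  have cd₁a : Nat.Coprime d₁ a := cda.coprime_dvd_left ⟨e, he⟩
  have cea : Nat.Coprime e a := cda.coprime_dvd_left ⟨d₁, by rw [he]; ring⟩
  have cd₁b : Nat.Coprime d₁ b := cdb.coprime_dvd_left ⟨e, he⟩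
  have ceb : Nat.Coprime e b := cdb.coprime_dvd_left ⟨d₁, by rw [he]; ring⟩
  have hca : Nat.Coprime c a := by
    have hqa : Nat.Coprime q a := cd₁a.mul (cea.mul cea)
    exact hℓa.mul hqa
  have hcb : Nat.Coprime c b := by
    have hqb : Nat.Coprime q b := cd₁b.mul (ceb.mul ceb)
    exact hℓb.mul hqb
  have hCd₁ : Nat.Coprime (ℓ * (e * e)) d₁ := hℓd₁.mul (cd₁e.symm.mul cd₁e.symm)
  have hs₁d₁ : Nat.Coprime (e * b) d₁ := cd₁e.symm.mul cd₁b.symm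
  have ht₁d₁ : Nat.Coprime (e * a) d₁ := cd₁e.symm.mul cd₁a.symm
  have hs₁e : Nat.Coprime (d₁ * b) e := cd₁e.mul ceb.symm
  have ht₁e : Nat.Coprime (d₁ * a) e := cd₁e.mul cea.symm
  have hm₂a : Nat.Coprime m₂ a := by
    have h := cda.mul hcab.symm
    rwa [← hb] at h
  have hm₁b : Nat.Coprime m₁ b := by
    have h := cdb.mul hcab
    rwa [← ha] at h
  -- Step A: rewrite the filter predicate into a congruence condition
  have hfc : ∀ Q ∈ Finset.Icc 1 m₁ ×ˢ Finset.Icc 1 m₂,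
      ((Nat.gcd Q.1 m₁ = 1 ∧ Nat.gcd Q.2 m₂ = 1 ∧
          ((Q.1 : ℚ) / m₁ - (Q.2 : ℚ) / m₂ = (ℓ : ℚ) / n ∨
            (Q.1 : ℚ) / m₁ - (Q.2 : ℚ) / m₂ = (ℓ : ℚ) / n - 1))
        ↔ (Nat.gcd Q.1 m₁ = 1 ∧ Nat.gcd Q.2 m₂ = 1 ∧
          ((Q.1 * m₂ : ℤ) - (Q.2 * m₁ : ℤ) ≡ (c : ℤ) [ZMOD ((m₁ * m₂ : ℕ) : ℤ)]))) := by
    rintro ⟨x, y⟩ hmem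
    rw [Finset.mem_product, Finset.mem_Icc, Finset.mem_Icc] at hmem
    obtain ⟨⟨hx1, hx2⟩, hy1, hy2⟩ := hmem
    have hm₁Q : (m₁ : ℚ) ≠ 0 := Nat.cast_ne_zero.mpr h₁.ne'
    have hm₂Q : (m₂ : ℚ) ≠ 0 := Nat.cast_ne_zero.mpr h₂.ne'
    have hnQ : (n : ℚ) ≠ 0 := Nat.cast_ne_zero.mpr hn0.ne'
    have hMQ : ((m₁ : ℚ) * m₂) = (n : ℚ) * q := by exact_mod_cast hM
    have hcnQ : (c : ℚ) * n = (ℓ : ℚ) * ((m₁ : ℚ) * m₂) := by exact_mod_cast hcn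
    have key1 : ((x : ℚ) / m₁ - (y : ℚ) / m₂ = (ℓ : ℚ) / n)
        ↔ ((x * m₂ : ℤ) - (y * m₁ : ℤ) = (c : ℤ)) := by
      rw [div_sub_div _ _ hm₁Q hm₂Q, div_eq_div_iff (mul_ne_zero hm₁Q hm₂Q) hnQ]
      constructor
      · intro h
        have h2 : ((x : ℚ) * m₂ - y * m₁) * n = (c : ℚ) * n := by
          rw [hcnQ]; linear_combination h
        have h3 := mul_right_cancel₀ hnQ h2
        exact_mod_cast h3
      · intro h
        have h3 : ((x : ℚ) * m₂ - (y : ℚ) * m₁) = (c : ℚ) := by exact_mod_cast h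
        linear_combination (n : ℚ) * h3 + hcnQ
    have key2 : ((x : ℚ) / m₁ - (y : ℚ) / m₂ = (ℓ : ℚ) / n - 1)
        ↔ ((x * m₂ : ℤ) - (y * m₁ : ℤ) = (c : ℤ) - ((m₁ * m₂ : ℕ) : ℤ)) := by
      rw [div_sub_div _ _ hm₁Q hm₂Q, div_sub_one hnQ,
        div_eq_div_iff (mul_ne_zero hm₁Q hm₂Q) hnQ]
      constructor
      · intro h
        have h2 : ((x : ℚ) * m₂ - y * m₁) * n = ((c : ℚ) - ((m₁ * m₂ : ℕ) : ℤ)) * n := by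
          push_cast
          linear_combination h - hcnQ
        have h3 := mul_right_cancel₀ hnQ h2
        exact_mod_cast h3
      · intro h
        have h3 : ((x : ℚ) * m₂ - (y : ℚ) * m₁) = (c : ℚ) - (m₁ : ℚ) * m₂ := by
          have := h
          push_cast at this ⊢
          exact_mod_cast this
        linear_combination (n : ℚ) * h3 + hcnQ
    rw [key1, key2]
    -- window argument
    have hM0 : (0 : ℤ) < ((m₁ * m₂ : ℕ) : ℤ) := by exact_mod_cast Nat.mul_pos h₁ h₂
    have hx1' : (1 : ℤ) ≤ (x : ℤ) := by exact_mod_cast hx1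
    have hx2' : (x : ℤ) ≤ (m₁ : ℤ) := by exact_mod_cast hx2
    have hy1' : (1 : ℤ) ≤ (y : ℤ) := by exact_mod_cast hy1
    have hy2' : (y : ℤ) ≤ (m₂ : ℤ) := by exact_mod_cast hy2
    have hm₁' : (0 : ℤ) < (m₁ : ℤ) := by exact_mod_cast h₁
    have hm₂' : (0 : ℤ) < (m₂ : ℤ) := by exact_mod_cast h₂
    have hA1 : -((m₁ * m₂ : ℕ) : ℤ) < (x * m₂ : ℤ) - (y * m₁ : ℤ) := by
      push_cast
      have k1 := mul_le_mul_of_nonneg_right hy2' hm₁'.le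
      have k2 := mul_le_mul_of_nonneg_right hx1' hm₂'.le
      rw [one_mul] at k2
      linarith only [k1, k2, hm₂', mul_pos hm₁' hm₂']
    have hA2 : (x * m₂ : ℤ) - (y * m₁ : ℤ) < ((m₁ * m₂ : ℕ) : ℤ) := by
      push_cast
      have k1 := mul_le_mul_of_nonneg_right hx2' hm₂'.le
      have k2 := mul_le_mul_of_nonneg_right hy1' hm₁'.le
      rw [one_mul] at k2
      linarith only [k1, k2, hm₁']
    have hcl : (0 : ℤ) ≤ (c : ℤ) := by positivity
    have hcr : (c : ℤ) < ((m₁ * m₂ : ℕ) : ℤ) := by exact_mod_cast hcM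
    rw [window hM0 hA1 hA2 hcl hcr]
  rw [Finset.filter_congr hfc, card_filter_eq_condCnt m₁ m₂ c h₁ h₂]
  -- Step B: factor the count
  have split1 : condCnt m₁ m₂ (m₁ * m₂) m₂ m₁ c
      = condCnt a 1 a m₂ m₁ c * condCnt d m₂ (d * (d * b)) m₂ m₁ c := by
    have h := condCnt_split a d 1 m₂ a (d * (d * b)) m₂ m₁ c
      cda.symm (Nat.coprime_one_left m₂)
      (cda.symm.mul_right (cda.symm.mul_right hcab))
      (dvd_mul_right a m₂) ⟨d, by rw [one_mul, ha]; ring⟩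
      ⟨1, by rw [hb]; ring⟩ ⟨a, by rw [ha, hb]; ring⟩
    rwa [show a * d = m₁ by rw [ha]; ring, one_mul,
      show a * (d * (d * b)) = m₁ * m₂ by rw [ha, hb]; ring] at h
  have split2 : condCnt d m₂ (d * (d * b)) m₂ m₁ c
      = condCnt 1 b b m₂ m₁ c * condCnt d d (d * d) m₂ m₁ c := by
    have h := condCnt_split 1 d b d b (d * d) m₂ m₁ c
      (Nat.coprime_one_left d) cdb.symm (cdb.symm.mul_right cdb.symm)
      ⟨d, by rw [hb]; ring⟩ (dvd_mul_right b m₁)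
      ⟨b, by rw [hb]; ring⟩ ⟨a, by rw [ha]; ring⟩
    rwa [one_mul, show b * d = m₂ by rw [hb]; ring,
      show b * (d * d) = d * (d * b) by ring] at h
  have split3 : condCnt d d (d * d) m₂ m₁ c
      = condCnt d₁ d₁ (d₁ * d₁) m₂ m₁ c * condCnt e e (e * e) m₂ m₁ c := by
    have h := condCnt_split d₁ e d₁ e (d₁ * d₁) (e * e) m₂ m₁ c
      cd₁e cd₁e ((cd₁e.mul_right cd₁e).mul (cd₁e.mul_right cd₁e))
      ⟨e * b, by rw [hb, he]; ring⟩ ⟨e * a, by rw [ha, he]; ring⟩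
      ⟨d₁ * b, by rw [hb, he]; ring⟩ ⟨d₁ * a, by rw [ha, he]; ring⟩
    rwa [← he, show d₁ * d₁ * (e * e) = d * d by rw [he]; ring] at h
  have v1 : condCnt a 1 a m₂ m₁ c = 1 := condCnt_right_one a m₂ m₁ c hm₂a hca
  have v2 : condCnt 1 b b m₂ m₁ c = 1 := condCnt_left_one b m₂ m₁ c hm₁b hcb
  have v3 : condCnt d₁ d₁ (d₁ * d₁) m₂ m₁ c = B d₁ := by
    have e2 : m₁ = d₁ * (e * a) := by rw [ha, he]; ring
    have e1 : m₂ = d₁ * (e * b) := by rw [hb, he]; ring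
    have e3 : c = d₁ * (ℓ * (e * e)) := by rw [hcdef, hqdef]; ring
    rw [e1, e2, e3]
    exact condCnt_diag_B d₁ (e * b) (e * a) (ℓ * (e * e)) hs₁d₁ ht₁d₁ hCd₁
  have v4 : condCnt e e (e * e) m₂ m₁ c = Nat.totient e := by
    have e2 : m₁ = e * (d₁ * a) := by rw [ha, he]; ring
    have e1 : m₂ = e * (d₁ * b) := by rw [hb, he]; ring
    have e3 : c = e * (ℓ * (d₁ * e)) := by rw [hcdef, hqdef]; ring
    rw [e1, e2, e3]
    exact condCnt_diag_totient e (d₁ * b) (d₁ * a) (ℓ * (d₁ * e)) hs₁e ht₁e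
      ⟨ℓ * d₁, by ring⟩
  have hcount : condCnt m₁ m₂ (m₁ * m₂) m₂ m₁ c = B d₁ * Nat.totient e := by
    rw [split1, v1, one_mul, split2, v2, one_mul, split3, v3, v4]
  rw [hcount]
  -- Step C: final arithmetic
  have hBd₁ : B d₁ = ∏ p ∈ d₁.primeFactors, (p - 2) := B_eq_prod d₁ hsd₁
  have hφd₁ : Nat.totient d₁ = ∏ p ∈ d₁.primeFactors, (p - 1) := totient_eq_prod d₁ hsd₁
  have hφd : Nat.totient d = Nat.totient d₁ * Nat.totient e := by
    rw [he]; exact Nat.totient_mul cd₁e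
  rw [hφd, hBd₁, hφd₁]
  have hcast2 : ((∏ p ∈ d₁.primeFactors, (p - 2) : ℕ) : ℚ)
      = ∏ p ∈ d₁.primeFactors, ((p : ℚ) - 2) := by
    rw [Nat.cast_prod]
    refine Finset.prod_congr rfl (fun p hp => ?_)
    have h2 := (Nat.prime_of_mem_primeFactors hp).two_le
    push_cast [Nat.cast_sub h2]
    ring
  have hcast1 : ((∏ p ∈ d₁.primeFactors, (p - 1) : ℕ) : ℚ)
      = ∏ p ∈ d₁.primeFactors, ((p : ℚ) - 1) := by
    rw [Nat.cast_prod]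
    refine Finset.prod_congr rfl (fun p hp => ?_)
    have h2 := (Nat.prime_of_mem_primeFactors hp).two_le
    push_cast [Nat.cast_sub (by omega : 1 ≤ p)]
    ring
  have hcomb : (∏ p ∈ d₁.primeFactors, ((p : ℚ) - 1))
        * (∏ p ∈ d₁.primeFactors, (((p : ℚ) - 2) / ((p : ℚ) - 1)))
      = ∏ p ∈ d₁.primeFactors, ((p : ℚ) - 2) := by
    rw [← Finset.prod_mul_distrib]
    refine Finset.prod_congr rfl (fun p hp => ?_)
    have h2 := (Nat.prime_of_mem_primeFactors hp).two_le
    have hne : (p : ℚ) - 1 ≠ 0 := by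
      have : (2 : ℚ) ≤ (p : ℚ) := by exact_mod_cast h2
      intro hz
      linarith only [this, hz]
    field_simp
  push_cast [hcast2, hcast1]
  rw [← hcomb]
  ring
end

section
/- For n a positive integer, 1 ≤ s ≤ n/2 an integer, and N a positive integer, |sin((2N+1)πs/n) / ((2N+1) sin(πs/n))| ≤ min{1, n/(sN)}. -/
lemma abs_sin_nat_mul_le (m : ℕ) (x : ℝ) : |Real.sin (m * x)| ≤ m * |Real.sin x| := by
  induction m with
  | zero => simp
  | succ k ih =>
    have : ((k : ℝ) + 1) * x = k * x + x := by ring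
    push_cast
    rw [this, Real.sin_add]
    have h1 : |Real.sin (k * x) * Real.cos x| ≤ |Real.sin (k * x)| := by
      rw [abs_mul]; exact mul_le_of_le_one_right (abs_nonneg _) (Real.abs_cos_le_one _)
    have h2 : |Real.cos (k * x) * Real.sin x| ≤ |Real.sin x| := by
      rw [abs_mul]; exact mul_le_of_le_one_left (abs_nonneg _) (Real.abs_cos_le_one _)
    have h3 := abs_add_le (Real.sin (k * x) * Real.cos x) (Real.cos (k * x) * Real.sin x)
    linarith

/-- For positive integers `n, s, N` with `s ≤ n/2`,
`|sin((2N+1)πs/n) / ((2N+1) sin(πs/n))| ≤ min {1, n/(sN)}`. -/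
theorem fejer_kernel_tail_bound (n s N : ℕ) (hn : 0 < n) (hs : 0 < s) (hN : 0 < N)
    (h : 2 * s ≤ n) :
    |Real.sin ((2 * N + 1) * Real.pi * s / n) / ((2 * N + 1) * Real.sin (Real.pi * s / n))|
      ≤ min 1 ((n : ℝ) / (s * N)) := by
  set x : ℝ := Real.pi * s / n with hx
  have hpi := Real.pi_pos
  have hnR : (0 : ℝ) < n := by exact_mod_cast hn
  have hsR : (0 : ℝ) < s := by exact_mod_cast hs
  have hNR : (0 : ℝ) < N := by exact_mod_cast hN
  have hx0 : 0 < x := by positivity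
  have hx2 : x ≤ Real.pi / 2 := by
    rw [hx, div_le_div_iff₀ hnR two_pos]
    have : (2 : ℝ) * s ≤ n := by exact_mod_cast h
    nlinarith
  have hsin : 2 / Real.pi * x ≤ Real.sin x := Real.mul_le_sin hx0.le hx2
  have hsinval : (2 : ℝ) * s / n ≤ Real.sin x := by
    refine le_trans (le_of_eq ?_) hsin
    rw [hx]; field_simp
  have hsinpos : 0 < Real.sin x := lt_of_lt_of_le (by positivity) hsinval
  have harg : (2 * N + 1 : ℝ) * Real.pi * s / n = (2 * N + 1 : ℕ) * x := by
    rw [hx]; push_cast; ring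
  have hden : (0 : ℝ) < (2 * N + 1) * Real.sin x := by positivity
  rw [harg, abs_div, abs_of_pos hden]
  refine le_min ?_ ?_ <;> rw [div_le_iff₀ hden]
  · -- bound by 1
    rw [one_mul]
    have := abs_sin_nat_mul_le (2 * N + 1) x
    rw [abs_of_pos hsinpos] at this
    push_cast at this ⊢
    linarith
  · -- bound by n/(sN)
    have h1 : |Real.sin ((2 * N + 1 : ℕ) * x)| ≤ 1 := Real.abs_sin_le_one _
    refine h1.trans ?_
    have key : (n : ℝ) / (s * N) * ((2 * N + 1) * (2 * s / n)) =
        (2 * (2 * N + 1)) / N := by field_simp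
    calc (1 : ℝ) ≤ (2 * (2 * N + 1)) / N := by
          rw [le_div_iff₀ hNR]; nlinarith
      _ = (n : ℝ) / (s * N) * ((2 * N + 1) * (2 * s / n)) := key.symm
      _ ≤ (n : ℝ) / (s * N) * ((2 * N + 1) * Real.sin x) := by
          gcongr
end

section
/- Let Δ < 0 be a fundamental discriminant with class number h(Δ). For all N > |Δ|, the number of primes p ≤ N with χ_Δ(p) = 1 is at most 12 h(Δ) N / √|Δ|. -/
/-- `Δ` is a fundamental discriminant: `Δ ≡ 1 (mod 4)` squarefree, or `Δ = 4m` with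
`m ≡ 2, 3 (mod 4)` squarefree. -/
def IsFundamentalDiscriminant (Δ : ℤ) : Prop :=
  (Δ % 4 = 1 ∧ Squarefree Δ) ∨
    (Δ % 4 = 0 ∧ Squarefree (Δ / 4) ∧ (Δ / 4 % 4 = 2 ∨ Δ / 4 % 4 = 3))

/-- The set of reduced primitive (positive definite) binary quadratic forms `(a, b, c)`
of discriminant `Δ < 0`. -/
def reducedForms (Δ : ℤ) : Set (ℤ × ℤ × ℤ) :=
  {f | 0 < f.1 ∧ 0 < f.2.2 ∧ f.2.1 ^ 2 - 4 * f.1 * f.2.2 = Δ ∧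
    -f.1 < f.2.1 ∧ f.2.1 ≤ f.1 ∧ f.1 ≤ f.2.2 ∧ (f.1 = f.2.2 → 0 ≤ f.2.1) ∧
    Int.gcd (Int.gcd f.1 f.2.1) f.2.2 = 1}

/-- The class number `h(Δ)`: the number of reduced primitive forms of discriminant `Δ`. -/
noncomputable def classNumber (Δ : ℤ) : ℕ := (reducedForms Δ).ncard

set_option maxHeartbeats 1000000


open DirichletCharacter

section CharDescend

variable {n : ℕ} [NeZero n] (χ : DirichletCharacter ℂ n)

/-- A real Dirichlet character is quadratic. -/
lemma real_char_isQuadratic (hreal : ∀ a : ZMod n, (starRingEnd ℂ) (χ a) = χ a) :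
    χ.IsQuadratic := by
  intro a
  by_cases ha : IsUnit a
  · obtain ⟨u, rfl⟩ := ha
    have hpow : χ (u : ZMod n) ^ (Fintype.card (ZMod n)ˣ) = 1 := by
      rw [← map_pow, ← Units.val_pow_eq_pow_val, pow_card_eq_one, Units.val_one, map_one]
    have hre : (χ (u : ZMod n)).im = 0 := Complex.conj_eq_iff_im.mp (hreal (u : ZMod n))
    set x := χ (u : ZMod n) with hx
    have hxre : x = (x.re : ℂ) := by rw [Complex.ext_iff]; simp [hre]
    rw [hxre, ← Complex.ofReal_pow, ← Complex.ofReal_one, Complex.ofReal_inj] at hpow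
    rcases (pow_eq_one_iff_of_ne_zero Fintype.card_ne_zero).mp hpow with h | ⟨h, -⟩
    · refine Or.inr (Or.inl ?_)
      rw [hxre, h, Complex.ofReal_one]
    · refine Or.inr (Or.inr ?_)
      rw [hxre, h]; norm_num
  · exact Or.inl (χ.map_nonunit ha)

open scoped Classical in
/-- Transfer a quadratic complex Dirichlet character to any commutative ring. -/
noncomputable def descend (hq : χ.IsQuadratic) (K : Type*) [CommRing K] :
    DirichletCharacter K n where
  toFun a := if χ a = 1 then 1 else if χ a = -1 then -1 else 0
  map_one' := by simp
  map_mul' a b := by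
    by_cases ha : IsUnit a
    · by_cases hb : IsUnit b
      · have hane : χ a ≠ 0 := by
          obtain ⟨u, rfl⟩ := ha
          rw [← χ.coe_toUnitHom]
          exact Units.ne_zero _
        have hbne : χ b ≠ 0 := by
          obtain ⟨u, rfl⟩ := hb
          rw [← χ.coe_toUnitHom]
          exact Units.ne_zero _
        have hab : χ (a * b) = χ a * χ b := map_mul χ a b
        rcases (hq a).resolve_left hane with h1 | h1 <;>
          rcases (hq b).resolve_left hbne with h2 | h2 <;>
            simp [hab, h1, h2] <;> norm_num
      · have h1 : χ b = 0 := χ.map_nonunit hb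
        have h2 : χ (a * b) = 0 := by
          rw [map_mul, h1, mul_zero]
        simp [h1, h2]
    · have h1 : χ a = 0 := χ.map_nonunit ha
      have h2 : χ (a * b) = 0 := by
        rw [map_mul, h1, zero_mul]
      simp [h1, h2]
  map_nonunit' a ha := by
    have : χ a = 0 := χ.map_nonunit ha
    simp [this]

variable {K : Type*} [CommRing K]

lemma descend_apply (hq : χ.IsQuadratic) (a : ZMod n) :
    descend χ hq K a = if χ a = 1 then 1 else if χ a = -1 then -1 else 0 := rfl

lemma descend_isQuadratic (hq : χ.IsQuadratic) : (descend χ hq K).IsQuadratic := by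
  intro a
  rw [descend_apply]
  split_ifs <;> simp

lemma descend_eq_one_iff (hq : χ.IsQuadratic) (hK : (-1 : K) ≠ 1) {a : ZMod n}
    (ha : IsUnit a) : descend χ hq K a = 1 ↔ χ a = 1 := by
  have hane : χ a ≠ 0 := by
    obtain ⟨u, rfl⟩ := ha
    rw [← χ.coe_toUnitHom]
    exact Units.ne_zero _
  rcases (hq a).resolve_left hane with h | h
  · simp [descend_apply, h]
  · rw [descend_apply, h]
    norm_num
    exact hK

lemma descend_isPrimitive (hq : χ.IsQuadratic) (hK : (-1 : K) ≠ 1)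
    (hp : χ.IsPrimitive) : (descend χ hq K).IsPrimitive := by
  have hker : (descend χ hq K).toUnitHom.ker = χ.toUnitHom.ker := by
    ext u
    simp only [MonoidHom.mem_ker, ← Units.val_inj, MulChar.coe_toUnitHom, Units.val_one]
    exact descend_eq_one_iff χ hq hK u.isUnit
  have hsets : (descend χ hq K).conductorSet = χ.conductorSet := by
    ext d
    constructor
    · intro hd
      have hdvd : d ∣ n := hd.dvd
      rw [conductorSet, Set.mem_setOf_eq, factorsThrough_iff_ker_unitsMap hdvd] at hd ⊢
      rwa [hker] at hd
    · intro hd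
      have hdvd : d ∣ n := hd.dvd
      rw [conductorSet, Set.mem_setOf_eq, factorsThrough_iff_ker_unitsMap hdvd] at hd ⊢
      rwa [hker]
  unfold DirichletCharacter.IsPrimitive DirichletCharacter.conductor at hp ⊢
  rw [hsets]
  exact hp

end CharDescend

section GaussSq

variable {n : ℕ} [NeZero n] {K : Type*} [Field K]

lemma gauss_mul_gauss_inv {χ : DirichletCharacter K n} (hprim : χ.IsPrimitive)
    {ψ : AddChar (ZMod n) K} (hψ : ψ.IsPrimitive) :
    gaussSum χ ψ * gaussSum χ⁻¹ ψ⁻¹ = Fintype.card (ZMod n) := by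
  classical
  have h1 : ∑ a : ZMod n, gaussSum χ (ψ.mulShift a) * ψ (-a)
      = gaussSum χ ψ * gaussSum χ⁻¹ ψ⁻¹ := by
    have e : ∀ a : ZMod n, gaussSum χ (ψ.mulShift a) * ψ (-a)
        = gaussSum χ ψ * (χ⁻¹ a * ψ⁻¹ a) := by
      intro a
      rw [gaussSum_mulShift_of_isPrimitive ψ hprim a, AddChar.inv_apply]
      ring
    rw [Finset.sum_congr rfl (fun a _ => e a), ← Finset.mul_sum]
    rfl
  rw [← h1]
  have h2 : ∀ a : ZMod n, gaussSum χ (ψ.mulShift a) * ψ (-a)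
      = ∑ x : ZMod n, χ x * ψ (a * (x - 1)) := by
    intro a
    rw [gaussSum, Finset.sum_mul]
    refine Finset.sum_congr rfl fun x _ => ?_
    rw [AddChar.mulShift_apply, mul_assoc, ← AddChar.map_add_eq_mul]
    ring_nf
  simp_rw [h2]
  rw [Finset.sum_comm]
  have h3 : ∀ x : ZMod n, ∑ a : ZMod n, χ x * ψ (a * (x - 1))
      = χ x * (if x - 1 = 0 then (Fintype.card (ZMod n) : K) else 0) := by
    intro x
    rw [← Finset.mul_sum]
    congr 1
    have := AddChar.sum_mulShift (R := ZMod n) (R' := K) (x - 1) hψ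
    simpa using this
  simp_rw [h3, sub_eq_zero, mul_ite, mul_zero]
  rw [Finset.sum_ite_eq' Finset.univ (1 : ZMod n)]
  simp

lemma gauss_sq_of_primitive {χ : DirichletCharacter K n} (hprim : χ.IsPrimitive)
    (hq : χ.IsQuadratic) {ψ : AddChar (ZMod n) K} (hψ : ψ.IsPrimitive) :
    gaussSum χ ψ ^ 2 = χ (-1) * Fintype.card (ZMod n) := by
  have hm : χ (-1) * χ (-1) = 1 := by
    rw [← map_mul, neg_mul_neg, one_mul, map_one]
  have hinv : gaussSum χ ψ⁻¹ = χ (-1) * gaussSum χ ψ := by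
    have h := gaussSum_mulShift χ ψ (-1 : (ZMod n)ˣ)
    rw [Units.val_neg, Units.val_one, ← AddChar.inv_mulShift] at h
    calc gaussSum χ ψ⁻¹ = (χ (-1) * χ (-1)) * gaussSum χ ψ⁻¹ := by rw [hm, one_mul]
      _ = χ (-1) * (χ (-1) * gaussSum χ ψ⁻¹) := by ring
      _ = χ (-1) * gaussSum χ ψ := by rw [h]
  have key := gauss_mul_gauss_inv hprim hψ
  rw [hq.inv, hinv] at key
  calc gaussSum χ ψ ^ 2 = χ (-1) * χ (-1) * gaussSum χ ψ ^ 2 := by rw [hm, one_mul]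
    _ = χ (-1) * (gaussSum χ ψ * (χ (-1) * gaussSum χ ψ)) := by ring
    _ = χ (-1) * Fintype.card (ZMod n) := by rw [key]

end GaussSq

section KeyChar

lemma isSquare_of_chi_eq_one {n : ℕ} [NeZero n] {χ : DirichletCharacter ℂ n}
    (hprim : χ.IsPrimitive) (hodd : χ.Odd)
    (hreal : ∀ a : ZMod n, (starRingEnd ℂ) (χ a) = χ a)
    {p : ℕ} [hpf : Fact p.Prime] (hp2 : p ≠ 2) (hpn : ¬ p ∣ n)
    (hχp : χ ((p : ℕ) : ZMod n) = 1) :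
    IsSquare (-(n : ZMod p)) := by
  have hq := real_char_isQuadratic χ hreal
  have hn0 : 0 < n := Nat.pos_of_ne_zero (NeZero.ne n)
  have hnp : ((n : ZMod p)) ≠ 0 := by
    rw [Ne, ZMod.natCast_eq_zero_iff]
    exact hpn
  set ψpack := AddChar.primitiveZModChar ⟨n, hn0⟩ (ZMod p) (by exact_mod_cast hnp)
  set K := CyclotomicField ψpack.n (ZMod p) with hK
  haveI : CharP K p := charP_of_injective_algebraMap (algebraMap (ZMod p) K).injective p
  haveI : Fact (2 < p) := ⟨lt_of_le_of_ne hpf.out.two_le (Ne.symm hp2)⟩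
  have hKone : (-1 : K) ≠ 1 := CharP.neg_one_ne_one K p
  have hunit : IsUnit ((p : ℕ) : ZMod n) := by
    by_contra h
    rw [χ.map_nonunit h] at hχp
    exact zero_ne_one hχp
  have hq' := descend_isQuadratic χ (K := K) hq
  have hprim' := descend_isPrimitive χ hq hKone hprim
  have main := Char.card_pow_char_pow hq' ψpack.char p 1 hunit hp2
    (gauss_sq_of_primitive hprim' hq' ψpack.prim)
  rw [pow_one, pow_one] at main
  have hneg : descend χ hq K (-1) = -1 := by
    have h1 : χ (-1) = -1 := hodd
    rw [descend_apply, h1]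
    norm_num
  have hp1 : descend χ hq K ((p : ℕ) : ZMod n) = 1 :=
    (descend_eq_one_iff χ hq hKone hunit).mpr hχp
  rw [hneg, hp1, ZMod.card] at main
  -- main : (-1 * n : K) ^ (p / 2) = 1
  have hcast : ((algebraMap (ZMod p) K) (-(n : ZMod p))) ^ (p / 2) = 1 := by
    rw [map_neg, map_natCast]
    calc (-(n : K)) ^ (p / 2) = ((-1) * (n : K)) ^ (p / 2) := by rw [neg_one_mul]
      _ = 1 := main
  have hzmod : (-(n : ZMod p)) ^ (p / 2) = 1 := by
    apply (algebraMap (ZMod p) K).injective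
    rw [map_pow, hcast, map_one]
  have hF : ringChar (ZMod p) ≠ 2 := by
    rw [ZMod.ringChar_zmod_n]
    exact hp2
  rw [FiniteField.isSquare_iff hF (neg_ne_zero.mpr hnp), ZMod.card]
  exact hzmod

end KeyChar

section Forms

lemma gcd3_eq_one_of_dvd {a b c a' b' c' : ℤ} (h : Int.gcd (Int.gcd a b) c = 1)
    (hd : ∀ d : ℤ, d ∣ a' → d ∣ b' → d ∣ c' → (d ∣ a ∧ d ∣ b ∧ d ∣ c)) :
    Int.gcd (Int.gcd a' b') c' = 1 := by
  set g : ℕ := Int.gcd (Int.gcd a' b') c' with hg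
  have h1 : (g : ℤ) ∣ (Int.gcd a' b' : ℤ) := Int.gcd_dvd_left _ _
  have h2 : (g : ℤ) ∣ c' := Int.gcd_dvd_right _ _
  obtain ⟨da, db, dc⟩ := hd g (h1.trans (Int.gcd_dvd_left _ _)) (h1.trans (Int.gcd_dvd_right _ _)) h2
  have hfin : (g : ℤ) ∣ ((Int.gcd (Int.gcd a b) c : ℕ) : ℤ) :=
    Int.dvd_coe_gcd (Int.dvd_coe_gcd da db) dc
  rw [h] at hfin
  have := Int.eq_one_of_dvd_one (by positivity) hfin
  exact_mod_cast this

lemma exists_reduced_rep (Δ : ℤ) (hΔ : Δ < 0) :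
    ∀ n : ℕ, ∀ a b c m : ℤ, (2*a + |b|).natAbs ≤ n → 0 < a → 0 < c →
    b^2 - 4*a*c = Δ → Int.gcd (Int.gcd a b) c = 1 →
    (∃ x y : ℤ, a*x^2 + b*x*y + c*y^2 = m) →
    ∃ f ∈ reducedForms Δ, ∃ x y : ℤ, f.1*x^2 + f.2.1*x*y + f.2.2*y^2 = m := by
  intro n
  induction n with
  | zero =>
    intro a b c m hm ha hc _ _ _
    exfalso
    have h1 := abs_nonneg b
    have h2 := Int.natAbs_eq_zero.mp (Nat.le_zero.mp hm)
    omega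
  | succ n ih =>
    intro a b c m hm ha hc hdisc hgcd hrep
    by_cases hba : a < |b|
    · -- normalize b
      set q : ℤ := (b + a) / (2*a) with hq
      have h2a : (0:ℤ) < 2*a := by linarith
      have hb' : b - 2*a*q = (b+a) % (2*a) - a := by
        rw [Int.emod_def, hq]; ring
      have hge : -a ≤ b - 2*a*q := by
        have := Int.emod_nonneg (b+a) (ne_of_gt h2a)
        omega
      have hlt : b - 2*a*q < a := by
        have := Int.emod_lt_of_pos (b+a) h2a
        omega
      have habs : |b - 2*a*q| ≤ a := abs_le.mpr ⟨hge, hlt.le⟩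
      have hcpos : 0 < a*q^2 - b*q + c := by
        have hd : (b - 2*a*q)^2 - 4*a*(a*q^2 - b*q + c) = Δ := by
          linear_combination hdisc
        nlinarith [sq_nonneg (b - 2*a*q)]
      have hmeas : (2*a + |b - 2*a*q|).natAbs ≤ n := by
        have hlt2 : 2*a + |b - 2*a*q| < 2*a + |b| := by linarith
        have hnn : 0 ≤ 2*a + |b - 2*a*q| := by
          have := abs_nonneg (b - 2*a*q); linarith
        have := Int.natAbs_lt_natAbs_of_nonneg_of_lt hnn hlt2
        omega
      refine ih a (b - 2*a*q) (a*q^2 - b*q + c) m hmeas ha hcpos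
        (by linear_combination hdisc) ?_ ?_
      · refine gcd3_eq_one_of_dvd hgcd fun d hda hdb hdc => ⟨hda, ?_, ?_⟩
        · have : b = (b - 2*a*q) + 2*a*q := by ring
          rw [this]
          exact dvd_add hdb ((hda.mul_left 2).mul_right q)
        · have : c = (a*q^2 - b*q + c) - a*q^2 + b*q := by ring
          rw [this]
          refine dvd_add (dvd_sub hdc (hda.mul_right (q^2))) ?_
          have hb2 : d ∣ b := by
            have : b = (b - 2*a*q) + 2*a*q := by ring
            rw [this]
            exact dvd_add hdb ((hda.mul_left 2).mul_right q)
          exact hb2.mul_right q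
      · obtain ⟨x, y, hxy⟩ := hrep
        exact ⟨x + q*y, y, by linear_combination hxy⟩
    · push_neg at hba
      have habs := abs_le.mp hba
      by_cases hac : c < a
      · -- swap
        have hmeas : (2*c + |-b|).natAbs ≤ n := by
          rw [abs_neg]
          have hlt2 : 2*c + |b| < 2*a + |b| := by linarith
          have hnn : 0 ≤ 2*c + |b| := by
            have := abs_nonneg b; linarith
          have := Int.natAbs_lt_natAbs_of_nonneg_of_lt hnn hlt2
          omega
        refine ih c (-b) a m hmeas hc ha (by linear_combination hdisc) ?_ ?_
        · refine gcd3_eq_one_of_dvd hgcd fun d hda hdb hdc => ⟨hdc, ?_, hda⟩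
          exact (dvd_neg.mp hdb)
        · obtain ⟨x, y, hxy⟩ := hrep
          exact ⟨-y, x, by linear_combination hxy⟩
      · push_neg at hac
        by_cases hbna : b = -a
        · subst hbna
          refine ⟨(a, a, c), ⟨ha, hc, by linear_combination hdisc, by linarith,
            le_refl a, hac, fun _ => ha.le, ?_⟩, ?_⟩
          · refine gcd3_eq_one_of_dvd hgcd fun d hda hdb hdc => ⟨hda, ?_, hdc⟩
            exact dvd_neg.mpr hda
          · obtain ⟨x, y, hxy⟩ := hrep
            exact ⟨x - y, y, by linear_combination hxy⟩
        · by_cases hbc : a = c ∧ b < 0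
          · obtain ⟨hace, hblt⟩ := hbc
            subst hace
            refine ⟨(a, -b, a), ⟨ha, ha, by linear_combination hdisc,
              by dsimp only; linarith, by dsimp only; linarith, le_refl a,
              fun _ => by dsimp only; linarith, ?_⟩, ?_⟩
            · refine gcd3_eq_one_of_dvd hgcd fun d hda hdb hdc => ⟨hda, ?_, hdc⟩
              exact dvd_neg.mp hdb
            · obtain ⟨x, y, hxy⟩ := hrep
              exact ⟨-y, x, by linear_combination hxy⟩
          · push_neg at hbc
            have hlast : a = c → 0 ≤ b := hbc
            refine ⟨(a, b, c), ⟨ha, hc, hdisc, ?_, habs.2, hac, hlast, hgcd⟩, hrep⟩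
            rcases lt_or_eq_of_le habs.1 with h | h
            · exact h
            · exact absurd h.symm hbna

end Forms

section PrimeRep

lemma prime_rep (Δ : ℤ) (hΔ : Δ < 0) (hfund : IsFundamentalDiscriminant Δ)
    (p : ℕ) [hpf : Fact p.Prime] (hp2 : p ≠ 2) (hpΔ : ¬ (p:ℤ) ∣ Δ)
    (hsq : IsSquare ((Δ : ZMod p))) :
    ∃ f ∈ reducedForms Δ, ∃ x y : ℤ, f.1*x^2 + f.2.1*x*y + f.2.2*y^2 = (p:ℤ) := by
  have hp := hpf.out
  haveI : NeZero p := ⟨hp.ne_zero⟩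
  obtain ⟨s, hs⟩ := hsq
  set b₁ : ℤ := (s.val : ℤ) with hb₁
  have hdvd1 : (p:ℤ) ∣ b₁^2 - Δ := by
    have hcast : ((b₁^2 - Δ : ℤ) : ZMod p) = 0 := by
      push_cast [hb₁]
      rw [ZMod.natCast_val, ZMod.cast_id, hs]
      ring
    exact (ZMod.intCast_zmod_eq_zero_iff_dvd _ _).mp hcast
  set b : ℤ := if (2:ℤ) ∣ (b₁ - Δ) then b₁ else b₁ + p with hb
  have hpodd : Odd (p:ℤ) := by
    exact_mod_cast hp.odd_of_ne_two hp2
  have h2 : (2:ℤ) ∣ (b - Δ) := by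
    rw [hb]
    split_ifs with h
    · exact h
    · obtain ⟨k, hk⟩ := hpodd
      omega
  have hpdvd : (p:ℤ) ∣ b^2 - Δ := by
    rw [hb]
    split_ifs with h
    · exact hdvd1
    · have : (b₁ + p)^2 - Δ = (b₁^2 - Δ) + p * (2*b₁ + p) := by ring
      rw [this]
      exact dvd_add hdvd1 (Dvd.intro _ rfl)
  have hΔmod : Δ % 4 = 1 ∨ Δ % 4 = 0 := by
    rcases hfund with ⟨h, -⟩ | ⟨h, -⟩
    · exact Or.inl h
    · exact Or.inr h
  have h4 : (4:ℤ) ∣ b^2 - Δ := by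
    rcases hΔmod with h | h
    · -- Δ odd, b odd
      have hbodd : b % 2 = 1 := by omega
      obtain ⟨k, hk⟩ : ∃ k, b = 2*k + 1 := ⟨b / 2, by omega⟩
      obtain ⟨t, ht⟩ : (4:ℤ) ∣ (Δ - 1) := by omega
      refine ⟨k^2 + k - t, ?_⟩
      rw [hk]
      linear_combination -ht
    · have hbeven : b % 2 = 0 := by omega
      obtain ⟨k, hk⟩ : ∃ k, b = 2*k := ⟨b / 2, by omega⟩
      obtain ⟨t, ht⟩ : (4:ℤ) ∣ Δ := by omega
      refine ⟨k^2 - t, ?_⟩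
      rw [hk]
      linear_combination -ht
  have hcop2 : IsCoprime (2:ℤ) (p:ℤ) := by
    rw [Int.isCoprime_iff_gcd_eq_one]
    have hnd : ¬ p ∣ 2 := fun hdvd => hp2 ((Nat.prime_dvd_prime_iff_eq hp Nat.prime_two).mp hdvd)
    have : Nat.Coprime 2 p := ((hp.coprime_iff_not_dvd).mpr hnd).symm
    simpa [Int.gcd] using this
  have hcop4 : IsCoprime (4:ℤ) (p:ℤ) := by
    have := hcop2.mul_left hcop2
    norm_num at this
    exact this
  have hdvd4p : 4*(p:ℤ) ∣ b^2 - Δ := hcop4.mul_dvd h4 hpdvd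
  obtain ⟨c, hc⟩ := hdvd4p
  have hppos : (0:ℤ) < p := by exact_mod_cast hp.pos
  have hcpos : 0 < c := by nlinarith [sq_nonneg b]
  have hdisc : b^2 - 4*(p:ℤ)*c = Δ := by linarith [hc]
  have hgcd : Int.gcd (Int.gcd (p:ℤ) b) c = 1 := by
    set g : ℕ := Int.gcd (Int.gcd (p:ℤ) b) c with hg
    have h1 : (g : ℤ) ∣ (Int.gcd (p:ℤ) b : ℤ) := Int.gcd_dvd_left _ _
    have hgp : (g:ℤ) ∣ (p:ℤ) := h1.trans (Int.gcd_dvd_left _ _)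
    have hgpn : g ∣ p := Int.natCast_dvd_natCast.mp hgp
    rcases hp.eq_one_or_self_of_dvd g hgpn with h | h
    · exact h
    · exfalso
      apply hpΔ
      have hgb : (g:ℤ) ∣ b := h1.trans (Int.gcd_dvd_right _ _)
      have hgc : (g:ℤ) ∣ c := Int.gcd_dvd_right _ _
      rw [h] at hgb hgc
      rw [← hdisc]
      refine dvd_sub ?_ ?_
      · have : b^2 = b * b := sq b
        rw [this]
        exact hgb.mul_left b
      · exact hgc.mul_left (4*(p:ℤ))
  have hrep : ∃ x y : ℤ, (p:ℤ)*x^2 + b*x*y + c*y^2 = (p:ℤ) := ⟨1, 0, by ring⟩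
  exact exists_reduced_rep Δ hΔ ((2*(p:ℤ) + |b|).natAbs) (p:ℤ) b c (p:ℤ)
    (le_refl _) hppos hcpos hdisc hgcd hrep

lemma principal_mem (Δ : ℤ) (hΔ : Δ < 0) (hfund : IsFundamentalDiscriminant Δ) :
    ∃ f, f ∈ reducedForms Δ := by
  have hΔmod : Δ % 4 = 1 ∨ Δ % 4 = 0 := by
    rcases hfund with ⟨h, -⟩ | ⟨h, -⟩
    · exact Or.inl h
    · exact Or.inr h
  rcases hΔmod with h | h
  · obtain ⟨t, ht⟩ : (4:ℤ) ∣ (1 - Δ) := by omega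
    have htpos : 1 ≤ t := by omega
    refine ⟨(1, 1, t), ⟨one_pos, by dsimp only; omega, by linear_combination ht, by norm_num,
      le_refl 1, by dsimp only; omega, fun _ => by norm_num, ?_⟩⟩
    simp [Int.gcd]
  · obtain ⟨t, ht⟩ : (4:ℤ) ∣ Δ := by omega
    have htneg : t ≤ -1 := by omega
    refine ⟨(1, 0, -t), ⟨one_pos, by dsimp only; omega, by linear_combination -ht, by norm_num,
      by norm_num, by dsimp only; omega, fun _ => by norm_num, ?_⟩⟩
    simp [Int.gcd]

end PrimeRep

section Counting

lemma le_of_sq_le {A B : ℝ} (hA : 0 ≤ A) (hB : 0 ≤ B) (h : A^2 ≤ B^2) : A ≤ B := by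
  nlinarith

lemma red_3ac {Δ : ℤ} {f : ℤ × ℤ × ℤ} (hf : f ∈ reducedForms Δ) :
    3 * f.1 * f.2.2 ≤ -Δ := by
  obtain ⟨ha, hc, hdisc, h1, h2, h3, -, -⟩ := hf
  nlinarith

lemma red_finite (Δ : ℤ) (hΔ : Δ < 0) : (reducedForms Δ).Finite := by
  have hsub : reducedForms Δ ⊆
      ↑(Finset.Icc (-(-Δ)) (-Δ) ×ˢ Finset.Icc (-(-Δ)) (-Δ) ×ˢ Finset.Icc (-(-Δ)) (-Δ)) := by
    intro f hf
    have h3ac := red_3ac hf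
    obtain ⟨ha, hc, hdisc, h1, h2, h3, -, -⟩ := hf
    simp only [Finset.coe_product, Set.mem_prod, Finset.mem_coe, Finset.mem_Icc]
    have hac : f.1 ≤ -Δ := by nlinarith
    have hcc : f.2.2 ≤ -Δ := by nlinarith
    refine ⟨⟨by linarith, hac⟩, ⟨by linarith, by linarith⟩, ⟨by linarith, hcc⟩⟩
  exact Set.Finite.subset (Finset.finite_toSet _) hsub

/-- The box bound for one reduced form. -/
lemma box_bound {Δ : ℤ} (hΔ : Δ < 0) {f : ℤ × ℤ × ℤ} (hf : f ∈ reducedForms Δ)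
    {N : ℤ} (hDN : -Δ < N) :
    ((Finset.Icc (-(Nat.sqrt ((4*f.2.2*N / (-Δ)).toNat) : ℤ))
        (Nat.sqrt ((4*f.2.2*N / (-Δ)).toNat)) ×ˢ
      Finset.Icc (0:ℤ) (Nat.sqrt ((4*f.1*N / (-Δ)).toNat))).card : ℝ)
      ≤ 11 * (N : ℝ) / Real.sqrt (-Δ : ℤ) := by
  have h3ac := red_3ac hf
  obtain ⟨ha, hc, hdisc, hb1, hb2, hac, -, -⟩ := hf
  set a : ℤ := f.1
  set b : ℤ := f.2.1
  set c : ℤ := f.2.2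
  set D : ℤ := -Δ with hD
  have hDpos : (0:ℤ) < D := by omega
  have hD3 : (3:ℤ) ≤ D := by nlinarith
  have hNpos : (0:ℤ) < N := by omega
  set U : ℕ := Nat.sqrt ((4*c*N / D).toNat) with hU
  set V : ℕ := Nat.sqrt ((4*a*N / D).toNat) with hV
  -- cardinality
  have hcard : ((Finset.Icc (-(U:ℤ)) (U:ℤ) ×ˢ Finset.Icc (0:ℤ) (V:ℤ)).card : ℝ)
      = (2*(U:ℝ) + 1) * ((V:ℝ) + 1) := by
    rw [Finset.card_product, Int.card_Icc, Int.card_Icc]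
    have e1 : ((U:ℤ) + 1 - -(U:ℤ)).toNat = 2*U + 1 := by omega
    have e2 : ((V:ℤ) + 1 - 0).toNat = V + 1 := by omega
    rw [e1, e2]
    push_cast
    ring
  rw [hcard]
  -- real bounds on U, V
  have sqrt_cast_bound : ∀ g : ℤ, 0 < g →
      ((Nat.sqrt ((4*g*N / D).toNat) : ℝ)) ≤ Real.sqrt (4*(g:ℝ)*N / (D:ℝ)) := by
    intro g hg
    set W : ℕ := Nat.sqrt ((4*g*N / D).toNat) with hW
    have h1 : (W * W : ℕ) ≤ ((4*g*N / D).toNat) := by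
      have := Nat.sqrt_le' ((4*g*N / D).toNat)
      rwa [pow_two] at this
    have hq0 : (0:ℤ) ≤ 4*g*N / D := Int.ediv_nonneg (by positivity) hDpos.le
    have h2 : ((W : ℤ) * W) ≤ 4*g*N / D := by
      calc ((W:ℤ) * W) = ((W * W : ℕ) : ℤ) := by push_cast; ring
        _ ≤ (((4*g*N / D).toNat : ℕ) : ℤ) := by exact_mod_cast h1
        _ = 4*g*N / D := Int.toNat_of_nonneg hq0
    have h3 : ((4*g*N / D : ℤ) : ℝ) ≤ 4*(g:ℝ)*N / (D:ℝ) := by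
      rw [le_div_iff₀ (by exact_mod_cast hDpos)]
      have := Int.ediv_mul_le (4*g*N) (ne_of_gt hDpos)
      calc ((4*g*N / D : ℤ) : ℝ) * (D:ℝ) = ((4*g*N / D * D : ℤ) : ℝ) := by push_cast; ring
        _ ≤ ((4*g*N : ℤ) : ℝ) := by exact_mod_cast this
        _ = 4*(g:ℝ)*N := by push_cast; ring
    have h4 : ((W:ℝ))^2 ≤ 4*(g:ℝ)*N / (D:ℝ) := by
      calc ((W:ℝ))^2 = (((W:ℤ) * W : ℤ) : ℝ) := by push_cast; ring
        _ ≤ ((4*g*N / D : ℤ) : ℝ) := by exact_mod_cast h2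
        _ ≤ _ := h3
    calc (W:ℝ) = Real.sqrt ((W:ℝ)^2) := (Real.sqrt_sq (by positivity)).symm
      _ ≤ Real.sqrt (4*(g:ℝ)*N / (D:ℝ)) := Real.sqrt_le_sqrt h4
  have hUb := sqrt_cast_bound c hc
  have hVb := sqrt_cast_bound a ha
  set u : ℝ := Real.sqrt (4*(c:ℝ)*N / (D:ℝ)) with hu
  set v : ℝ := Real.sqrt (4*(a:ℝ)*N / (D:ℝ)) with hv
  have hu0 : 0 ≤ u := Real.sqrt_nonneg _
  have hv0 : 0 ≤ v := Real.sqrt_nonneg _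
  have hU0 : (0:ℝ) ≤ (U:ℝ) := by positivity
  have hV0 : (0:ℝ) ≤ (V:ℝ) := by positivity
  have step1 : (2*(U:ℝ) + 1) * ((V:ℝ) + 1) ≤ (2*u + 1) * (v + 1) := by
    have := hUb; have := hVb
    nlinarith
  refine step1.trans ?_
  -- now pure real estimate
  have hDr : (0:ℝ) < (D:ℝ) := by exact_mod_cast hDpos
  have hNr : (0:ℝ) < (N:ℝ) := by exact_mod_cast hNpos
  have har : (1:ℝ) ≤ (a:ℝ) := by exact_mod_cast ha
  have hcr : (1:ℝ) ≤ (c:ℝ) := by exact_mod_cast hc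
  have hacr : (a:ℝ) ≤ (c:ℝ) := by exact_mod_cast hac
  have h3acr : 3*(a:ℝ)*(c:ℝ) ≤ (D:ℝ) := by exact_mod_cast h3ac
  have hDNr : (D:ℝ) ≤ (N:ℝ) := by exact_mod_cast hDN.le
  have husq : u^2 = 4*(c:ℝ)*N / (D:ℝ) := Real.sq_sqrt (by positivity)
  have hvsq : v^2 = 4*(a:ℝ)*N / (D:ℝ) := Real.sq_sqrt (by positivity)
  set t : ℝ := (N:ℝ) / Real.sqrt (D:ℝ) with ht
  have hsD : 0 < Real.sqrt (D:ℝ) := Real.sqrt_pos.mpr hDr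
  have hsDsq : (Real.sqrt (D:ℝ))^2 = (D:ℝ) := Real.sq_sqrt hDr.le
  have ht0 : 0 < t := by positivity
  have ht1 : 1 ≤ t := by
    rw [ht, le_div_iff₀ hsD, one_mul]
    have hDr1 : (1:ℝ) ≤ (D:ℝ) := by exact_mod_cast (by omega : (1:ℤ) ≤ D)
    calc Real.sqrt (D:ℝ) ≤ Real.sqrt ((D:ℝ)^2) := Real.sqrt_le_sqrt (by nlinarith)
      _ = (D:ℝ) := Real.sqrt_sq hDr.le
      _ ≤ N := hDNr
  set s : ℝ := Real.sqrt 3 with hs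
  have hs17 : (1.7:ℝ) ≤ s := by
    rw [hs]
    have : ((1.7:ℝ))^2 ≤ 3 := by norm_num
    nlinarith [Real.sq_sqrt (by norm_num : (0:ℝ) ≤ 3), Real.sqrt_nonneg (3:ℝ)]
  have hs0 : 0 < s := by linarith
  have hssq : s^2 = 3 := Real.sq_sqrt (by norm_num)
  -- key products
  have huv : s * (u * v) ≤ 4 * t := by
    refine le_of_sq_le (by positivity) (by positivity) ?_
    have e1 : (s * (u*v))^2 = 3 * (u^2 * v^2) := by rw [mul_pow, hssq, mul_pow]
    have e2 : (4*t)^2 = 16 * ((N:ℝ)^2 / (D:ℝ)) := by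
      rw [ht, mul_pow, div_pow, hsDsq]; norm_num
    rw [e1, e2, husq, hvsq]
    have hD' : (D:ℝ) ≠ 0 := ne_of_gt hDr
    rw [div_mul_div_comm, mul_div_assoc', mul_div_assoc',
      div_le_div_iff₀ (by positivity) hDr]
    nlinarith [mul_le_mul_of_nonneg_left h3acr
      (show (0:ℝ) ≤ 16*(N:ℝ)^2*(D:ℝ) by positivity)]
  have hus : s * u ≤ 2 * t := by
    refine le_of_sq_le (by positivity) (by positivity) ?_
    have e1 : (s*u)^2 = 3 * u^2 := by rw [mul_pow, hssq]
    have e2 : (2*t)^2 = 4 * ((N:ℝ)^2 / (D:ℝ)) := by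
      rw [ht, mul_pow, div_pow, hsDsq]; norm_num
    rw [e1, e2, husq]
    rw [mul_div_assoc', mul_div_assoc', div_le_div_iff₀ hDr hDr]
    have hcN : 3*(c:ℝ) ≤ (N:ℝ) := by
      nlinarith [mul_nonneg (sub_nonneg.mpr har) (by linarith : (0:ℝ) ≤ (c:ℝ))]
    nlinarith [mul_le_mul_of_nonneg_left hcN (show (0:ℝ) ≤ 4*(N:ℝ)*(D:ℝ) by positivity)]
  have hvs : s * v ≤ 2 * t := by
    refine le_of_sq_le (by positivity) (by positivity) ?_
    have e1 : (s*v)^2 = 3 * v^2 := by rw [mul_pow, hssq]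
    have e2 : (2*t)^2 = 4 * ((N:ℝ)^2 / (D:ℝ)) := by
      rw [ht, mul_pow, div_pow, hsDsq]; norm_num
    rw [e1, e2, hvsq]
    rw [mul_div_assoc', mul_div_assoc', div_le_div_iff₀ hDr hDr]
    have haN : 3*(a:ℝ) ≤ (N:ℝ) := by
      nlinarith [mul_nonneg (sub_nonneg.mpr har) (by linarith : (0:ℝ) ≤ (c:ℝ))]
    nlinarith [mul_le_mul_of_nonneg_left haN (show (0:ℝ) ≤ 4*(N:ℝ)*(D:ℝ) by positivity)]
  have goal_eq : 11 * (N : ℝ) / Real.sqrt ((-Δ : ℤ) : ℝ) = 11 * t := by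
    rw [ht]
    have : ((-Δ : ℤ) : ℝ) = (D:ℝ) := by rw [hD]
    rw [this]; ring
  rw [goal_eq]
  nlinarith [mul_nonneg (mul_nonneg hs0.le hu0) hv0, mul_nonneg hs0.le hu0,
    mul_nonneg hs0.le hv0, mul_nonneg hu0 hv0]

end Counting


section BoxMem

lemma natAbs_le_sqrt {x q : ℤ} (hq : 0 ≤ q) (h : x^2 ≤ q) :
    (x.natAbs : ℤ) ≤ (Nat.sqrt q.toNat : ℤ) := by
  have h1 : ((x.natAbs * x.natAbs : ℕ) : ℤ) ≤ q := by
    rw [Int.natAbs_mul_self]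
    nlinarith [sq_nonneg x]
  have h2 : x.natAbs * x.natAbs ≤ q.toNat := by omega
  exact_mod_cast Nat.le_sqrt.mpr h2

lemma mem_box {Δ : ℤ} (hΔ : Δ < 0) {f : ℤ × ℤ × ℤ} (hf : f ∈ reducedForms Δ)
    {N m x y : ℤ} (hm1 : 1 ≤ m) (hmN : m ≤ N) (hy : 0 ≤ y)
    (hval : f.1*x^2 + f.2.1*x*y + f.2.2*y^2 = m) :
    (x, y) ∈ (Finset.Icc (-(Nat.sqrt ((4*f.2.2*N / (-Δ)).toNat) : ℤ))
        (Nat.sqrt ((4*f.2.2*N / (-Δ)).toNat)) ×ˢ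
      Finset.Icc (0:ℤ) (Nat.sqrt ((4*f.1*N / (-Δ)).toNat))) := by
  obtain ⟨ha, hc, hdisc, hb1, hb2, hac, -, -⟩ := hf
  have hD : (0:ℤ) < -Δ := by omega
  have hNpos : (0:ℤ) < N := by omega
  have hidx : 4*f.2.2*m = (2*f.2.2*y + f.2.1*x)^2 + (-Δ)*x^2 := by
    linear_combination (-4*f.2.2)*hval - x^2*hdisc
  have hidy : 4*f.1*m = (2*f.1*x + f.2.1*y)^2 + (-Δ)*y^2 := by
    linear_combination (-4*f.1)*hval - y^2*hdisc
  have hxx : x^2 ≤ 4*f.2.2*N / (-Δ) := by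
    rw [Int.le_ediv_iff_mul_le hD]
    nlinarith [sq_nonneg (2*f.2.2*y + f.2.1*x)]
  have hyy : y^2 ≤ 4*f.1*N / (-Δ) := by
    rw [Int.le_ediv_iff_mul_le hD]
    nlinarith [sq_nonneg (2*f.1*x + f.2.1*y)]
  have hq1 : (0:ℤ) ≤ 4*f.2.2*N / (-Δ) := Int.ediv_nonneg (by positivity) hD.le
  have hq2 : (0:ℤ) ≤ 4*f.1*N / (-Δ) := Int.ediv_nonneg (by positivity) hD.le
  have hax := natAbs_le_sqrt hq1 hxx
  have hay := natAbs_le_sqrt hq2 hyy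
  rw [Finset.mem_product, Finset.mem_Icc, Finset.mem_Icc]
  have habsx : |x| ≤ (Nat.sqrt ((4*f.2.2*N / (-Δ)).toNat) : ℤ) := by
    rw [Int.abs_eq_natAbs]; exact hax
  have habsy : |y| ≤ (Nat.sqrt ((4*f.1*N / (-Δ)).toNat) : ℤ) := by
    rw [Int.abs_eq_natAbs]; exact hay
  obtain ⟨hx1, hx2⟩ := abs_le.mp habsx
  obtain ⟨hy1, hy2⟩ := abs_le.mp habsy
  exact ⟨⟨hx1, hx2⟩, hy, hy2⟩

end BoxMem



/-- For a negative fundamental discriminant `Δ` with associated real primitive odd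
character `χ = χ_Δ` mod `|Δ|`, and any `N > |Δ|`, the number of primes `p ≤ N` with
`χ(p) = 1` is at most `12 h(Δ) N / √|Δ|`. -/
theorem primes_chi_one_count (Δ : ℤ) (hneg : Δ < 0) (hfund : IsFundamentalDiscriminant Δ)
    (χ : DirichletCharacter ℂ Δ.natAbs) (hprim : χ.IsPrimitive) (hodd : χ.Odd)
    (hreal : ∀ a : ZMod Δ.natAbs, (starRingEnd ℂ) (χ a) = χ a)
    (N : ℤ) (hN : |Δ| < N) :
    (({p : ℕ | p.Prime ∧ (p : ℤ) ≤ N ∧ χ ((p : ℕ) : ZMod Δ.natAbs) = 1}.ncard : ℝ))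
      ≤ 12 * (classNumber Δ : ℝ) * (N : ℝ) / Real.sqrt ((|Δ| : ℤ) : ℝ) := by
  classical
  have habsΔ : |Δ| = -Δ := abs_of_neg hneg
  have hDD : (Δ.natAbs : ℤ) = -Δ := by rw [Int.natCast_natAbs, habsΔ]
  have hD3 : (3:ℤ) ≤ -Δ := by
    rcases hfund with ⟨h, -⟩ | ⟨h, -⟩ <;> omega
  have hD3n : 3 ≤ Δ.natAbs := by omega
  haveI : NeZero Δ.natAbs := ⟨by omega⟩
  haveI : Fact (1 < Δ.natAbs) := ⟨by omega⟩
  have hDN : -Δ < N := by omega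
  set S := {p : ℕ | p.Prime ∧ (p : ℤ) ≤ N ∧ χ ((p : ℕ) : ZMod Δ.natAbs) = 1} with hS
  have hfinS : S.Finite := by
    apply Set.Finite.subset (Set.finite_Iic N.toNat)
    intro p hp
    simp only [Set.mem_Iic]
    have h := hp.2.1
    omega
  set SF := hfinS.toFinset with hSF
  have hfinRF := red_finite Δ hneg
  set RFF := hfinRF.toFinset with hRFF
  have hclass : classNumber Δ = RFF.card := Set.ncard_eq_toFinset_card _ hfinRF
  have hclass1 : 1 ≤ RFF.card := by
    obtain ⟨f, hf⟩ := principal_mem Δ hneg hfund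
    exact Finset.card_pos.mpr ⟨f, hfinRF.mem_toFinset.mpr hf⟩
  have hrep : ∀ p : ℕ, ∃ q : (ℤ×ℤ×ℤ) × ℤ × ℤ, p ∈ SF.erase 2 →
      q.1 ∈ reducedForms Δ ∧ 0 ≤ q.2.2 ∧
      q.1.1*q.2.1^2 + q.1.2.1*q.2.1*q.2.2 + q.1.2.2*q.2.2^2 = (p:ℤ) := by
    intro p
    by_cases hp : p ∈ SF.erase 2
    · obtain ⟨hne2, hpS⟩ := Finset.mem_erase.mp hp
      rw [Set.Finite.mem_toFinset] at hpS
      obtain ⟨hprime, hpleN, hχp⟩ := hpS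
      haveI : Fact p.Prime := ⟨hprime⟩
      have hunit : IsUnit ((p:ℕ) : ZMod Δ.natAbs) := by
        by_contra h
        rw [χ.map_nonunit h] at hχp
        exact zero_ne_one hχp
      have hpD : ¬ p ∣ Δ.natAbs := by
        intro h
        have hcop : Nat.Coprime p Δ.natAbs := (ZMod.isUnit_iff_coprime p Δ.natAbs).mp hunit
        have hdd : p ∣ Nat.gcd p Δ.natAbs := Nat.dvd_gcd dvd_rfl h
        rw [hcop] at hdd
        have hp1 : p = 1 := Nat.eq_one_of_dvd_one hdd
        exact hprime.one_lt.ne' hp1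
      have hsqD := isSquare_of_chi_eq_one hprim hodd hreal hne2 hpD hχp
      have hsq : IsSquare ((Δ : ZMod p)) := by
        have h1 : (Δ:ℤ) = -((Δ.natAbs : ℕ):ℤ) := by rw [hDD]; ring
        have h2 : ((Δ:ℤ) : ZMod p) = -((Δ.natAbs : ℕ) : ZMod p) := by
          conv_lhs => rw [h1]
          rw [Int.cast_neg, Int.cast_natCast]
        rw [h2]
        exact hsqD
      have hpΔ : ¬ (p:ℤ) ∣ Δ := by
        intro h
        have := Int.natAbs_dvd_natAbs.mpr h
        simp only [Int.natAbs_natCast] at this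
        exact hpD this
      obtain ⟨f, hf, x, y, hval⟩ := prime_rep Δ hneg hfund p hne2 hpΔ hsq
      rcases le_or_gt 0 y with hy | hy
      · exact ⟨(f, x, y), fun _ => ⟨hf, hy, hval⟩⟩
      · exact ⟨(f, -x, -y), fun _ => ⟨hf, by dsimp only; omega,
          by dsimp only; linear_combination hval⟩⟩
    · exact ⟨((1,1,1),1,1), fun h => absurd h hp⟩
  choose Φ hΦ using hrep
  set box : (ℤ×ℤ×ℤ) → Finset (ℤ×ℤ) := fun f =>
    Finset.Icc (-(Nat.sqrt ((4*f.2.2*N / (-Δ)).toNat) : ℤ))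
        (Nat.sqrt ((4*f.2.2*N / (-Δ)).toNat)) ×ˢ
      Finset.Icc (0:ℤ) (Nat.sqrt ((4*f.1*N / (-Δ)).toNat)) with hboxdef
  set T2 := RFF.biUnion (fun f => (box f).image (fun q => (f, q))) with hT2
  have hmap : ∀ p ∈ SF.erase 2, ((Φ p).1, ((Φ p).2.1, (Φ p).2.2)) ∈ T2 := by
    intro p hp
    obtain ⟨hfmem, hy, hval⟩ := hΦ p hp
    obtain ⟨hne2, hpS⟩ := Finset.mem_erase.mp hp
    rw [Set.Finite.mem_toFinset] at hpS
    obtain ⟨hprime, hpleN, -⟩ := hpS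
    have hp1 : (1:ℤ) ≤ (p:ℤ) := by exact_mod_cast hprime.one_lt.le
    rw [hT2, Finset.mem_biUnion]
    refine ⟨(Φ p).1, hfinRF.mem_toFinset.mpr hfmem, ?_⟩
    rw [Finset.mem_image]
    refine ⟨((Φ p).2.1, (Φ p).2.2), ?_, rfl⟩
    exact mem_box hneg hfmem hp1 hpleN hy hval
  have hinj : Set.InjOn (fun p : ℕ => ((Φ p).1, ((Φ p).2.1, (Φ p).2.2)))
      ↑(SF.erase 2) := by
    intro p hp p' hp' heq
    obtain ⟨-, -, hval⟩ := hΦ p (by exact_mod_cast hp)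
    obtain ⟨-, -, hval'⟩ := hΦ p' (by exact_mod_cast hp')
    simp only [Prod.mk.injEq] at heq
    obtain ⟨h1, h2, h3⟩ := heq
    have : (p:ℤ) = (p':ℤ) := by
      rw [← hval, ← hval', h1, h2, h3]
    exact_mod_cast this
  have hcard2 : (SF.erase 2).card ≤ ∑ f ∈ RFF, (box f).card := by
    calc (SF.erase 2).card ≤ T2.card := Finset.card_le_card_of_injOn _ hmap hinj
      _ ≤ ∑ f ∈ RFF, ((box f).image (fun q => (f, q))).card := Finset.card_biUnion_le
      _ ≤ ∑ f ∈ RFF, (box f).card :=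
          Finset.sum_le_sum fun f _ => Finset.card_image_le
  have hcard1 : SF.card ≤ (SF.erase 2).card + 1 := by
    have hsub : SF ⊆ insert 2 (SF.erase 2) := by
      intro x hx
      by_cases h : x = 2
      · simp [h]
      · exact Finset.mem_insert_of_mem (Finset.mem_erase.mpr ⟨h, hx⟩)
    calc SF.card ≤ (insert 2 (SF.erase 2)).card := Finset.card_le_card hsub
      _ ≤ (SF.erase 2).card + 1 := Finset.card_insert_le _ _
  -- real estimates
  set sD : ℝ := Real.sqrt ((-Δ : ℤ) : ℝ) with hsD
  have hDr : (0:ℝ) < ((-Δ : ℤ):ℝ) := by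
    have : (0:ℤ) < -Δ := by omega
    exact_mod_cast this
  have hsDpos : 0 < sD := Real.sqrt_pos.mpr hDr
  have hNr : (0:ℝ) < (N:ℝ) := by
    have : (0:ℤ) < N := by omega
    exact_mod_cast this
  have ht1 : 1 ≤ (N:ℝ) / sD := by
    rw [le_div_iff₀ hsDpos, one_mul, hsD]
    have hDr1 : (1:ℝ) ≤ ((-Δ:ℤ):ℝ) := by exact_mod_cast (by omega : (1:ℤ) ≤ -Δ)
    calc Real.sqrt ((-Δ:ℤ):ℝ) ≤ Real.sqrt ((((-Δ:ℤ)):ℝ)^2) := Real.sqrt_le_sqrt (by nlinarith)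
      _ = ((-Δ:ℤ):ℝ) := Real.sqrt_sq hDr.le
      _ ≤ (N:ℝ) := by exact_mod_cast hDN.le
  have hsum : (∑ f ∈ RFF, ((box f).card : ℝ)) ≤ (RFF.card : ℝ) * (11 * (N:ℝ) / sD) := by
    have hb : ∀ f ∈ RFF, ((box f).card : ℝ) ≤ 11 * (N:ℝ) / sD := by
      intro f hf
      rw [hsD]
      exact box_bound hneg (hfinRF.mem_toFinset.mp hf) hDN
    calc (∑ f ∈ RFF, ((box f).card : ℝ)) ≤ ∑ _f ∈ RFF, (11 * (N:ℝ) / sD) :=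
          Finset.sum_le_sum hb
      _ = (RFF.card : ℝ) * (11 * (N:ℝ) / sD) := by
          rw [Finset.sum_const, nsmul_eq_mul]
  have hfinal : (SF.card : ℝ) ≤ 12 * (RFF.card : ℝ) * (N:ℝ) / sD := by
    have e1 : (SF.card : ℝ) ≤ (∑ f ∈ RFF, ((box f).card : ℝ)) + 1 := by
      have : ((SF.erase 2).card : ℝ) ≤ ∑ f ∈ RFF, ((box f).card : ℝ) := by
        rw [← Nat.cast_sum]
        exact_mod_cast hcard2
      have h2 : (SF.card : ℝ) ≤ ((SF.erase 2).card : ℝ) + 1 := by exact_mod_cast hcard1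
      linarith
    have hC1 : (1:ℝ) ≤ (RFF.card : ℝ) := by exact_mod_cast hclass1
    have e2 : 12 * (RFF.card : ℝ) * (N:ℝ) / sD
        = (RFF.card : ℝ) * (11 * (N:ℝ) / sD) + (RFF.card : ℝ) * ((N:ℝ) / sD) := by
      ring
    rw [e2]
    have e3 : (1:ℝ) ≤ (RFF.card : ℝ) * ((N:ℝ) / sD) := by
      nlinarith
    linarith [hsum]
  have hgoal1 : (S.ncard : ℝ) = (SF.card : ℝ) := by
    rw [Set.ncard_eq_toFinset_card _ hfinS]
  have hgoal2 : Real.sqrt ((|Δ| : ℤ) : ℝ) = sD := by rw [habsΔ, hsD]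
  rw [hgoal2, hclass, hgoal1]
  exact hfinal
end

section
/- For every fundamental discriminant Δ > 0 and integer N ≥ 1, |Σ_{n=1}^{NΔ} χ_Δ(n) log n + L'(0, χ_Δ)| ≤ 2Δ/N, where L'(0, χ_Δ) is the derivative at s = 0 of the entire continuation of L(s, χ_Δ). In particular, Σ_{n=1}^{NΔ} χ_Δ(n) log n → -L'(0, χ_Δ) as N → ∞. -/
namespace CLSD
open Finset Complex

lemma abel (f b : ℕ → ℂ) (M : ℕ) :
    ∑ n ∈ Icc 1 M, f n * b n =
      ∑ n ∈ Icc 1 M, (∑ k ∈ Icc 1 n, f k) * (b n - b (n + 1)) +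
        (∑ k ∈ Icc 1 M, f k) * b (M + 1) := by
  induction M with
  | zero => simp
  | succ M ih =>
    rw [Finset.sum_Icc_succ_top (by omega), Finset.sum_Icc_succ_top (by omega) f,
      Finset.sum_Icc_succ_top (by omega) (fun n => (∑ k ∈ Icc 1 n, f k) * (b n - b (n + 1))), ih,
      Finset.sum_Icc_succ_top (by omega) f]
    ring

/-- second difference bound for `t ↦ t^(-s)` -/
lemma diff2_bound (s : ℂ) (hs : -2 ≤ s.re) (n : ℕ) (hn : 1 ≤ n) :
    ‖(n : ℂ) ^ (-s) - 2 * ((n + 1 : ℕ) : ℂ) ^ (-s) + ((n + 2 : ℕ) : ℂ) ^ (-s)‖ ≤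
      ‖s‖ * (‖s‖ + 1) * (n : ℝ) ^ (-s.re - 2) := by
  have hn1 : (1 : ℝ) ≤ (n : ℝ) := by exact_mod_cast hn
  set K : ℝ := ‖s‖ * (‖s‖ + 1) * (n : ℝ) ^ (-s.re - 2) with hK
  have hKnn : 0 ≤ K := by positivity
  -- derivative facts
  have hφ : ∀ t : ℝ, 0 < t → HasDerivAt (fun u : ℝ => (u : ℂ) ^ (-s))
      (-s * (t : ℂ) ^ (-s - 1)) t := by
    intro t ht
    simpa using (Complex.hasStrictDerivAt_cpow_const (c := -s)
      (ofReal_mem_slitPlane.2 ht)).hasDerivAt.comp_ofReal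
  have hψ : ∀ t : ℝ, 0 < t → HasDerivAt (fun u : ℝ => -s * (u : ℂ) ^ (-s - 1))
      (-s * ((-s - 1) * (t : ℂ) ^ (-s - 2))) t := by
    intro t ht
    have := (Complex.hasStrictDerivAt_cpow_const (c := -s - 1)
      (ofReal_mem_slitPlane.2 ht)).hasDerivAt.comp_ofReal
    have := this.const_mul (-s)
    simpa [mul_assoc, sub_sub, neg_mul, one_add_one_eq_two] using this
  -- bound on second derivative on [n, ∞)
  have hsecond : ∀ t : ℝ, (n : ℝ) ≤ t → ‖-s * ((-s - 1) * (t : ℂ) ^ (-s - 2))‖ ≤ K := by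
    intro t ht
    have ht0 : (0 : ℝ) < t := lt_of_lt_of_le (by linarith) ht
    rw [norm_mul, norm_mul]
    have h1 : ‖(t : ℂ) ^ (-s - 2)‖ ≤ (n : ℝ) ^ (-s.re - 2) := by
      rw [Complex.norm_cpow_eq_rpow_re_of_pos ht0]
      have : (-s - 2).re = -s.re - 2 := by simp
      rw [this]
      exact Real.rpow_le_rpow_of_nonpos (by linarith) ht (by linarith)
    have h2 : ‖-s‖ = ‖s‖ := norm_neg s
    have h3 : ‖-s - 1‖ ≤ ‖s‖ + 1 := by
      calc ‖-s - 1‖ ≤ ‖-s‖ + ‖(1 : ℂ)‖ := norm_sub_le _ _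
      _ = ‖s‖ + 1 := by rw [h2, norm_one]
    calc ‖-s‖ * (‖-s - 1‖ * ‖(t : ℂ) ^ (-s - 2)‖)
        ≤ ‖s‖ * ((‖s‖ + 1) * (n : ℝ) ^ (-s.re - 2)) := by
          rw [h2]
          refine mul_le_mul_of_nonneg_left ?_ (norm_nonneg s)
          exact mul_le_mul h3 h1 (norm_nonneg _) (by positivity)
      _ = K := by rw [hK]; ring
  -- continuity facts
  have hcpowcont : ∀ (c : ℂ) (t : ℝ), 0 < t → ContinuousAt (fun u : ℝ => (u : ℂ) ^ c) t :=
    fun c t ht => ((Complex.hasStrictDerivAt_cpow_const (c := c)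
      (ofReal_mem_slitPlane.2 ht)).hasDerivAt.comp_ofReal).continuousAt
  -- step 1 : bound on ψ(t+1) - ψ(t)
  have hstep1 : ∀ t : ℝ, (n : ℝ) ≤ t →
      ‖(-s * ((t + 1 : ℝ) : ℂ) ^ (-s - 1)) - (-s * (t : ℂ) ^ (-s - 1))‖ ≤ K := by
    intro t ht
    have ht0 : (0 : ℝ) < t := lt_of_lt_of_le (by linarith) ht
    have heq : ∫ u in t..(t + 1), -s * ((-s - 1) * (u : ℂ) ^ (-s - 2)) =
        (-s * ((t + 1 : ℝ) : ℂ) ^ (-s - 1)) - (-s * (t : ℂ) ^ (-s - 1)) := by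
      refine intervalIntegral.integral_eq_sub_of_hasDerivAt
        (f := fun u : ℝ => -s * (u : ℂ) ^ (-s - 1)) (fun u hu => ?_) ?_
      · rw [Set.uIcc_of_le (by linarith)] at hu
        exact hψ u (by linarith [hu.1])
      · refine ContinuousOn.intervalIntegrable ?_
        refine ContinuousOn.mul continuousOn_const ?_
        refine ContinuousOn.mul continuousOn_const ?_
        intro u hu
        rw [Set.uIcc_of_le (by linarith)] at hu
        exact (hcpowcont _ u (by linarith [hu.1])).continuousWithinAt
    rw [← heq]
    have hb : ‖∫ u in t..(t + 1), -s * ((-s - 1) * (u : ℂ) ^ (-s - 2))‖ ≤ K * |(t + 1) - t| :=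
      intervalIntegral.norm_integral_le_of_norm_le_const (fun u hu => by
        rw [Set.uIoc_of_le (by linarith)] at hu
        exact hsecond u (by linarith [hu.1.le]))
    simpa using hb
  -- step 2
  have heq2 : ∫ t in (n : ℝ)..(n + 1 : ℝ),
      ((-s * ((t + 1 : ℝ) : ℂ) ^ (-s - 1)) - (-s * (t : ℂ) ^ (-s - 1))) =
      ((((n : ℝ) + 1 + 1 : ℝ) : ℂ) ^ (-s) - (((n : ℝ) + 1 : ℝ) : ℂ) ^ (-s)) -
        ((((n : ℝ) + 1 : ℝ) : ℂ) ^ (-s) - ((n : ℝ) : ℂ) ^ (-s)) := by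
    refine intervalIntegral.integral_eq_sub_of_hasDerivAt
      (f := fun t : ℝ => (((t + 1 : ℝ)) : ℂ) ^ (-s) - ((t : ℝ) : ℂ) ^ (-s))
      (fun t htm => ?_) ?_
    · rw [Set.uIcc_of_le (by linarith)] at htm
      have ht0 : (0 : ℝ) < t := lt_of_lt_of_le (by linarith) htm.1
      have h1 : HasDerivAt (fun u : ℝ => (((u + 1 : ℝ)) : ℂ) ^ (-s))
          (-s * ((t + 1 : ℝ) : ℂ) ^ (-s - 1)) t := by
        exact HasDerivAt.comp_add_const t 1 (hφ (t + 1) (by linarith))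
      exact h1.sub (hφ t ht0)
    · refine ContinuousOn.intervalIntegrable (ContinuousOn.sub ?_ ?_) <;>
        refine ContinuousOn.mul continuousOn_const ?_ <;> intro u hu <;>
        rw [Set.uIcc_of_le (by linarith)] at hu
      · exact (HasDerivAt.comp_add_const u 1 ((Complex.hasStrictDerivAt_cpow_const
          (c := -s - 1) (ofReal_mem_slitPlane.2 (by linarith [hu.1] :
            (0:ℝ) < u + 1))).hasDerivAt.comp_ofReal)).continuousAt.continuousWithinAt
      · exact (hcpowcont (-s - 1) u (by linarith [hu.1])).continuousWithinAt
  have hbound2 : ‖∫ t in (n : ℝ)..((n : ℝ) + 1),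
      ((-s * ((t + 1 : ℝ) : ℂ) ^ (-s - 1)) - (-s * (t : ℂ) ^ (-s - 1)))‖ ≤
        K * |((n : ℝ) + 1) - (n : ℝ)| :=
    intervalIntegral.norm_integral_le_of_norm_le_const (fun u hu => by
      rw [Set.uIoc_of_le (by linarith)] at hu
      exact hstep1 u hu.1.le)
  rw [heq2] at hbound2
  have hfinal : (n : ℂ) ^ (-s) - 2 * ((n + 1 : ℕ) : ℂ) ^ (-s) + ((n + 2 : ℕ) : ℂ) ^ (-s) =
      ((((n : ℝ) + 1 + 1 : ℝ) : ℂ) ^ (-s) - (((n : ℝ) + 1 : ℝ) : ℂ) ^ (-s)) -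
        ((((n : ℝ) + 1 : ℝ) : ℂ) ^ (-s) - ((n : ℝ) : ℂ) ^ (-s)) := by
    push_cast
    ring
  rw [hfinal]
  simpa using hbound2



noncomputable def F (c : ℕ → ℂ) (n : ℕ) (s : ℂ) : ℂ :=
  c n * ((n : ℂ) ^ (-s) - 2 * ((n + 1 : ℕ) : ℂ) ^ (-s) + ((n + 2 : ℕ) : ℂ) ^ (-s))

section

variable {c : ℕ → ℂ} {CB : ℝ}

lemma F_zero (hc0 : c 0 = 0) : F c 0 = fun _ => 0 := by
  funext s; simp [F, hc0]

lemma F_differentiable (hc0 : c 0 = 0) (n : ℕ) : Differentiable ℂ (F c n) := by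
  rcases Nat.eq_zero_or_pos n with h | h
  · subst h; rw [F_zero hc0]; exact differentiable_const 0
  · have hd : ∀ m : ℕ, 0 < m → Differentiable ℂ (fun s : ℂ => ((m : ℕ) : ℂ) ^ (-s)) := by
      intro m hm
      refine Differentiable.const_cpow differentiable_neg (Or.inl ?_)
      exact_mod_cast Nat.cast_ne_zero.mpr hm.ne'
    exact (((hd n h).sub ((hd (n+1) (by omega)).const_mul 2)).add
      (hd (n+2) (by omega))).const_mul (c n)

lemma F_bound (hCB0 : 0 ≤ CB) (hc0 : c 0 = 0) (hcB : ∀ n, ‖c n‖ ≤ CB) (s : ℂ) (hsb : s ∈ Metric.ball (1 : ℂ) (3/2)) (n : ℕ) :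
    ‖F c n s‖ ≤ CB * (35/4) * (n : ℝ) ^ (-(3/2) : ℝ) := by
  have hs1 : ‖s - 1‖ < 3/2 := by
    rw [Metric.mem_ball, dist_eq_norm] at hsb; exact hsb
  have hsn : ‖s‖ ≤ 5/2 := by
    calc ‖s‖ = ‖(s - 1) + 1‖ := by ring_nf
    _ ≤ ‖s - 1‖ + ‖(1:ℂ)‖ := norm_add_le _ _
    _ ≤ 5/2 := by rw [norm_one]; linarith
  have hsre : -1/2 ≤ s.re := by
    have h := Complex.abs_re_le_norm (s - 1)
    rw [Complex.sub_re, Complex.one_re] at h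
    have h2 := (abs_le.mp h).1
    have hs1' : ‖s - 1‖ < 3/2 := hs1
    linarith
  rcases Nat.eq_zero_or_pos n with h | h
  · subst h
    simp [F, hc0, Real.zero_rpow (show ((-(3/2):ℝ)) ≠ 0 by norm_num)]
  · have h1 := diff2_bound s (by linarith) n h
    have hn1 : (1:ℝ) ≤ (n:ℝ) := by exact_mod_cast h
    calc ‖F c n s‖ ≤ CB * (‖s‖ * (‖s‖ + 1) * (n : ℝ) ^ (-s.re - 2)) := by
          rw [F, norm_mul]
          exact mul_le_mul (hcB n) h1 (norm_nonneg _) hCB0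
      _ ≤ CB * ((35/4) * (n : ℝ) ^ (-(3/2) : ℝ)) := by
          refine mul_le_mul_of_nonneg_left ?_ hCB0
          have h2 : (n:ℝ) ^ (-s.re - 2) ≤ (n:ℝ) ^ (-(3/2) : ℝ) :=
            Real.rpow_le_rpow_of_exponent_le hn1 (by linarith)
          have h3 : ‖s‖ * (‖s‖ + 1) ≤ 35/4 := by nlinarith [norm_nonneg s]
          exact mul_le_mul h3 h2 (Real.rpow_nonneg (by positivity) _) (by norm_num)
      _ = CB * (35/4) * (n : ℝ) ^ (-(3/2) : ℝ) := by ring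

lemma summable_u (hCB0 : 0 ≤ CB) :
    Summable (fun n : ℕ => CB * (35/4) * (n : ℝ) ^ (-(3/2) : ℝ)) :=
  (Real.summable_nat_rpow.mpr (by norm_num)).mul_left _

lemma H_diff (hCB0 : 0 ≤ CB) (hc0 : c 0 = 0) (hcB : ∀ n, ‖c n‖ ≤ CB) : DifferentiableOn ℂ (fun s => ∑' n, F c n s) (Metric.ball (1 : ℂ) (3/2)) :=
  differentiableOn_tsum_of_summable_norm (summable_u hCB0)
    (fun n => (F_differentiable hc0 n).differentiableOn) Metric.isOpen_ball
    (fun n w hw => F_bound hCB0 hc0 hcB w hw n)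

lemma H_hasSum_deriv (hCB0 : 0 ≤ CB) (hc0 : c 0 = 0) (hcB : ∀ n, ‖c n‖ ≤ CB) :
    HasSum (fun n => deriv (F c n) 0) (deriv (fun s => ∑' n, F c n s) 0) :=
  hasSum_deriv_of_summable_norm (summable_u hCB0)
    (fun n => (F_differentiable hc0 n).differentiableOn) Metric.isOpen_ball
    (fun n w hw => F_bound hCB0 hc0 hcB w hw n)
    (show (0:ℂ) ∈ Metric.ball (1:ℂ) (3/2) by
      rw [Metric.mem_ball, dist_eq_norm]; simp; norm_num)

lemma H_eq_LSeries (x : ℕ → ℂ) (hCB0 : 0 ≤ CB) (hc0 : c 0 = 0) (hcB : ∀ n, ‖c n‖ ≤ CB)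
    (hx : ∀ n, 1 ≤ n → x n = c n - 2 * c (n - 1) + c (n - 2)) {s : ℂ} (hs : 1 < s.re) :
    ∑' n, F c n s = LSeries x s := by
  have hs0 : s ≠ 0 := by
    rintro rfl
    simp at hs
    linarith
  set g : ℕ → ℂ := fun m => ((m : ℕ) : ℂ) ^ (-s) with hg
  have hgnorm : ∀ m : ℕ, ‖g m‖ ≤ (m : ℝ) ^ (-s.re) := by
    intro m
    rcases Nat.eq_zero_or_pos m with h | h
    · subst h
      simp only [hg, Nat.cast_zero]
      rw [Complex.zero_cpow (neg_ne_zero.mpr hs0), Real.zero_rpow (by simp; linarith)]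
      simp
    · rw [hg, Complex.norm_natCast_cpow_of_pos h]
      simp
  have hu : Summable (fun m : ℕ => CB * (m : ℝ) ^ (-s.re)) :=
    (Real.summable_nat_rpow.mpr (by linarith)).mul_left _
  have hsum : ∀ k : ℕ → ℕ, Summable (fun m => c (k m) * g m) := by
    intro k
    refine Summable.of_norm_bounded hu (fun m => ?_)
    rw [norm_mul]
    exact mul_le_mul (hcB _) (hgnorm m) (norm_nonneg _) hCB0
  have hf1 : Summable (fun m => c m * g m) := hsum id
  have hf2 : Summable (fun m => c (m - 1) * g m) := hsum (· - 1)
  have hf3 : Summable (fun m => c (m - 2) * g m) := hsum (· - 2)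
  have h2' : Summable (fun n => c n * g (n + 1)) := by
    have := (summable_nat_add_iff (f := fun m => c (m - 1) * g m) 1).mpr hf2
    simpa using this
  have h3' : Summable (fun n => c n * g (n + 2)) := by
    have := (summable_nat_add_iff (f := fun m => c (m - 2) * g m) 2).mpr hf3
    simpa using this
  have hterm : ∀ m : ℕ, LSeries.term x s m =
      c m * g m - 2 * (c (m - 1) * g m) + c (m - 2) * g m := by
    intro m
    rcases Nat.eq_zero_or_pos m with h | h
    · subst h; simp [LSeries.term_zero, hc0]
    · rw [LSeries.term_of_ne_zero h.ne', hx m h]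
      simp only [hg]
      rw [Complex.cpow_neg, div_eq_mul_inv]
      ring
  have hshift2 : ∑' m, c (m - 1) * g m = ∑' n, c n * g (n + 1) := by
    rw [Summable.tsum_eq_zero_add hf2]
    simp only [Nat.zero_sub, hc0, zero_mul, zero_add, Nat.add_sub_cancel]
  have hshift3 : ∑' m, c (m - 2) * g m = ∑' n, c n * g (n + 2) := by
    rw [Summable.tsum_eq_zero_add hf3, Summable.tsum_eq_zero_add ((summable_nat_add_iff 1).mpr hf3)]
    simp only [hc0, zero_mul, zero_add]
    exact tsum_congr fun n => rfl
  have hLHS : ∑' n, F c n s =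
      ∑' n, (c n * g n - 2 * (c n * g (n + 1)) + c n * g (n + 2)) := by
    apply tsum_congr; intro n; rw [F, hg]; ring
  rw [hLHS, LSeries]
  have hRHS : ∑' m, LSeries.term x s m =
      ∑' m, (c m * g m - 2 * (c (m - 1) * g m) + c (m - 2) * g m) := tsum_congr hterm
  rw [hRHS]
  rw [Summable.tsum_add (hf1.sub (hf2.mul_left 2)) hf3, Summable.tsum_sub hf1 (hf2.mul_left 2), tsum_mul_left,
    Summable.tsum_add (hf1.sub (h2'.mul_left 2)) h3', Summable.tsum_sub hf1 (h2'.mul_left 2), tsum_mul_left,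
    hshift2, hshift3]

lemma deriv_F (hc0 : c 0 = 0) (n : ℕ) :
    deriv (F c n) 0 = c n * (-((Real.log n : ℝ) : ℂ) + 2 * ((Real.log (n + 1) : ℝ) : ℂ)
      - ((Real.log (n + 2) : ℝ) : ℂ)) := by
  rcases Nat.eq_zero_or_pos n with h | h
  · subst h
    rw [F_zero hc0, hc0]
    simp
  · have hd : ∀ m : ℕ, 0 < m → HasDerivAt (fun s : ℂ => ((m : ℕ) : ℂ) ^ (-s))
        (-((Real.log m : ℝ) : ℂ)) 0 := by
      intro m hm
      have hm0 : ((m : ℕ) : ℂ) ≠ 0 := Nat.cast_ne_zero.mpr hm.ne'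
      have h := HasDerivAt.const_cpow (c := ((m : ℕ) : ℂ)) (f := fun s : ℂ => -s)
        (hasDerivAt_neg (0 : ℂ)) (Or.inl hm0)
      simpa [Complex.natCast_log] using h
    have H := (((hd n h).sub ((hd (n + 1) (by omega)).const_mul 2)).add
      (hd (n + 2) (by omega))).const_mul (c n)
    have h2 : deriv (F c n) 0 = _ := H.deriv
    rw [h2]
    push_cast
    ring

lemma hasSum_deriv_E (E : ℂ → ℂ) (hE : Differentiable ℂ E) (x : ℕ → ℂ)
    (hEeq : ∀ s : ℂ, 1 < s.re → E s = LSeries x s)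
    (hCB0 : 0 ≤ CB) (hc0 : c 0 = 0) (hcB : ∀ n, ‖c n‖ ≤ CB)
    (hx : ∀ n, 1 ≤ n → x n = c n - 2 * c (n - 1) + c (n - 2)) :
    HasSum (fun n => deriv (F c n) 0) (deriv E 0) := by
  have hana1 : AnalyticOnNhd ℂ (fun s => ∑' n, F c n s) (Metric.ball (1 : ℂ) (3/2)) :=
    (H_diff hCB0 hc0 hcB).analyticOnNhd Metric.isOpen_ball
  have hana2 : AnalyticOnNhd ℂ E (Metric.ball (1 : ℂ) (3/2)) :=
    hE.differentiableOn.analyticOnNhd Metric.isOpen_ball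
  have hconn : IsPreconnected (Metric.ball (1 : ℂ) (3/2)) :=
    (convex_ball _ _).isPreconnected
  have hmem : (5/4 : ℂ) ∈ Metric.ball (1 : ℂ) (3/2) := by
    have h14 : ((5/4 : ℂ)) - 1 = ((1/4 : ℝ) : ℂ) := by norm_num
    rw [Metric.mem_ball, dist_eq_norm, h14, Complex.norm_real]
    norm_num
  have hopen : IsOpen {z : ℂ | 1 < z.re} := isOpen_lt continuous_const Complex.continuous_re
  have hmem2 : (5/4 : ℂ) ∈ {z : ℂ | 1 < z.re} := by
    simp only [Set.mem_setOf_eq]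
    rw [show (5/4 : ℂ) = ((5/4 : ℝ) : ℂ) by norm_num, Complex.ofReal_re]
    norm_num
  have hev : (fun s => ∑' n, F c n s) =ᶠ[nhds (5/4 : ℂ)] E := by
    filter_upwards [hopen.mem_nhds hmem2] with z hz
    exact (H_eq_LSeries x hCB0 hc0 hcB hx hz).trans (hEeq z hz).symm
  have heqOn := hana1.eqOn_of_preconnected_of_eventuallyEq hana2 hconn hmem hev
  have h0mem : (0 : ℂ) ∈ Metric.ball (1 : ℂ) (3/2) := by
    have hd : dist (0 : ℂ) 1 = 1 := by simp [dist_eq_norm]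
    rw [Metric.mem_ball, hd]
    norm_num
  have hev0 : (fun s => ∑' n, F c n s) =ᶠ[nhds (0 : ℂ)] E := by
    filter_upwards [Metric.isOpen_ball.mem_nhds h0mem] with z hz
    exact heqOn hz
  rw [← hev0.deriv_eq]
  exact H_hasSum_deriv hCB0 hc0 hcB

end


noncomputable def Afun (x : ℕ → ℂ) (n : ℕ) : ℂ := ∑ m ∈ Icc 1 n, x m
noncomputable def Cfun (x : ℕ → ℂ) (n : ℕ) : ℂ := ∑ k ∈ Icc 1 n, Afun x k

lemma Afun_zero (x : ℕ → ℂ) : Afun x 0 = 0 := by simp [Afun]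
lemma Cfun_zero (x : ℕ → ℂ) : Cfun x 0 = 0 := by simp [Cfun]
lemma Afun_succ (x : ℕ → ℂ) (n : ℕ) : Afun x (n + 1) = Afun x n + x (n + 1) :=
  Finset.sum_Icc_succ_top (by omega) x
lemma Cfun_succ (x : ℕ → ℂ) (n : ℕ) : Cfun x (n + 1) = Cfun x n + Afun x (n + 1) :=
  Finset.sum_Icc_succ_top (by omega) (Afun x)

section
variable {x : ℕ → ℂ} {D : ℕ}

lemma Afun_per (hD : 2 ≤ D) (hxper : ∀ n, x (n + D) = x n)
    (hAD : Afun x D = 0) : ∀ n, Afun x (n + D) = Afun x n := by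
  intro n
  induction n with
  | zero => rw [zero_add, hAD, Afun_zero]
  | succ n ih =>
    rw [show n + 1 + D = (n + D) + 1 from by omega, Afun_succ, ih,
      show n + D + 1 = (n + 1) + D from by omega, hxper (n + 1), Afun_succ]

lemma Cfun_per (hD : 2 ≤ D) (hxper : ∀ n, x (n + D) = x n)
    (hAD : Afun x D = 0) (hCD : Cfun x D = 0) : ∀ n, Cfun x (n + D) = Cfun x n := by
  intro n
  induction n with
  | zero => rw [zero_add, hCD, Cfun_zero]
  | succ n ih =>
    rw [show n + 1 + D = (n + D) + 1 from by omega, Cfun_succ, ih,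
      show n + D + 1 = (n + 1) + D from by omega, Afun_per hD hxper hAD (n + 1), Cfun_succ]

lemma Afun_mul (hD : 2 ≤ D) (hxper : ∀ n, x (n + D) = x n)
    (hAD : Afun x D = 0) : ∀ N, Afun x (N * D) = 0 := by
  intro N
  induction N with
  | zero => simp [Afun_zero]
  | succ N ih => rw [show (N + 1) * D = N * D + D from by ring, Afun_per hD hxper hAD, ih]

lemma Cfun_mul (hD : 2 ≤ D) (hxper : ∀ n, x (n + D) = x n)
    (hAD : Afun x D = 0) (hCD : Cfun x D = 0) : ∀ N, Cfun x (N * D) = 0 := by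
  intro N
  induction N with
  | zero => simp [Cfun_zero]
  | succ N ih =>
    rw [show (N + 1) * D = N * D + D from by ring, Cfun_per hD hxper hAD hCD, ih]

lemma Cfun_mod (hD : 2 ≤ D) (hxper : ∀ n, x (n + D) = x n)
    (hAD : Afun x D = 0) (hCD : Cfun x D = 0) : ∀ n, Cfun x n = Cfun x (n % D) := by
  intro n
  induction n using Nat.strong_induction_on with
  | _ n ih =>
    rcases lt_or_ge n D with h | h
    · rw [Nat.mod_eq_of_lt h]
    · have h1 : n = (n - D) + D := by omega
      rw [h1, Cfun_per hD hxper hAD hCD, ih (n - D) (by omega),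
        ← Nat.mod_eq_sub_mod h, ← h1]

lemma Cfun_bound (hD : 2 ≤ D) (hxper : ∀ n, x (n + D) = x n) (hxnorm : ∀ n, ‖x n‖ ≤ 1)
    (hAD : Afun x D = 0) (hCD : Cfun x D = 0) (n : ℕ) : ‖Cfun x n‖ ≤ (D : ℝ) ^ 2 := by
  rw [Cfun_mod hD hxper hAD hCD n]
  set r := n % D with hr
  have hrD : r < D := Nat.mod_lt _ (by omega)
  have hA : ∀ k : ℕ, ‖Afun x k‖ ≤ (k : ℝ) := by
    intro k
    calc ‖Afun x k‖ ≤ ∑ m ∈ Icc 1 k, ‖x m‖ := norm_sum_le _ _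
    _ ≤ ∑ m ∈ Icc 1 k, 1 := Finset.sum_le_sum (fun m _ => hxnorm m)
    _ = (k : ℝ) := by simp [Nat.card_Icc]
  calc ‖Cfun x r‖ ≤ ∑ k ∈ Icc 1 r, ‖Afun x k‖ := norm_sum_le _ _
  _ ≤ ∑ k ∈ Icc 1 r, (D : ℝ) := Finset.sum_le_sum (fun k hk => by
      refine (hA k).trans ?_
      have := (Finset.mem_Icc.mp hk).2
      exact_mod_cast (this.trans hrD.le))
  _ = (r : ℝ) * D := by simp [Nat.card_Icc, mul_comm]
  _ ≤ (D : ℝ) ^ 2 := by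
      have : (r : ℝ) ≤ D := by exact_mod_cast hrD.le
      nlinarith [show (0:ℝ) ≤ (D:ℝ) from by positivity]

end

/-- `efun n = log (n+1) - log n` -/
noncomputable def efun (n : ℕ) : ℝ := Real.log ((n : ℝ) + 1) - Real.log (n : ℝ)

lemma efun_nonneg (n : ℕ) : 0 ≤ efun n := by
  rcases Nat.eq_zero_or_pos n with h | h
  · subst h; simp [efun]
  · have : (0:ℝ) < n := by exact_mod_cast h
    have := Real.log_le_log (by positivity) (by linarith : (n:ℝ) ≤ (n:ℝ) + 1)
    simpa [efun] using this

lemma efun_le (n : ℕ) (hn : 1 ≤ n) : efun n ≤ 1 / (n : ℝ) := by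
  have hn0 : (0:ℝ) < n := by exact_mod_cast hn
  have h1 : Real.log ((n:ℝ) + 1) - Real.log n = Real.log (((n:ℝ) + 1) / n) := by
    rw [Real.log_div (by linarith) (by linarith)]
  rw [efun, h1]
  have h2 := Real.log_le_sub_one_of_pos (show (0:ℝ) < ((n:ℝ)+1)/n by positivity)
  have h3 : ((n:ℝ) + 1) / n - 1 = 1 / n := by field_simp; ring
  linarith

lemma efun_anti (n : ℕ) (hn : 1 ≤ n) : efun (n + 1) ≤ efun n := by
  have hn0 : (0:ℝ) < n := by exact_mod_cast hn
  have key : Real.log ((n:ℝ) * ((n:ℝ) + 2)) ≤ Real.log (((n:ℝ) + 1) * ((n:ℝ) + 1)) :=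
    Real.log_le_log (by positivity) (by nlinarith)
  rw [Real.log_mul (by positivity) (by positivity),
    Real.log_mul (by positivity) (by positivity)] at key
  have hcast : ((n + 1 : ℕ) : ℝ) = (n : ℝ) + 1 := by push_cast; ring
  simp only [efun, hcast]
  have : ((n:ℝ) + 1) + 1 = (n:ℝ) + 2 := by ring
  rw [this]
  linarith

lemma efun_tendsto : Filter.Tendsto efun Filter.atTop (nhds 0) := by
  have h1 : Filter.Tendsto (fun n : ℕ => 1 / (n : ℝ)) Filter.atTop (nhds 0) :=
    tendsto_one_div_atTop_nhds_zero_nat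
  refine squeeze_zero' ?_ ?_ h1
  · exact Filter.Eventually.of_forall efun_nonneg
  · filter_upwards [Filter.eventually_ge_atTop 1] with n hn
    exact efun_le n hn

lemma hasSum_tail (Q : ℕ) (hQ : 1 ≤ Q) :
    HasSum (fun n => efun (n + Q) - efun (n + Q + 1)) (efun Q) := by
  have key : ∀ M : ℕ, ∑ i ∈ range M, (efun (i + Q) - efun ((i + 1) + Q)) = efun Q - efun (M + Q) :=
    fun M => by simpa using Finset.sum_range_sub' (fun i => efun (i + Q)) M
  have h2 : Filter.Tendsto (fun M : ℕ => ∑ i ∈ range M, (efun (i + Q) - efun (i + Q + 1)))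
      Filter.atTop (nhds (efun Q)) := by
    have : (fun M : ℕ => ∑ i ∈ range M, (efun (i + Q) - efun (i + Q + 1))) =
        fun M => efun Q - efun (M + Q) := by
      funext M
      rw [← key M]
      exact Finset.sum_congr rfl (fun i _ => by ring_nf)
    rw [this]
    have h3 : Filter.Tendsto (fun M : ℕ => efun (M + Q)) Filter.atTop (nhds 0) :=
      efun_tendsto.comp (Filter.tendsto_add_atTop_nat Q)
    simpa using (tendsto_const_nhds (x := efun Q)).sub h3
  rw [hasSum_iff_tendsto_nat_of_nonneg]
  · exact h2
  · intro i
    have := efun_anti (i + Q) (by omega)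
    linarith

noncomputable def bfun (n : ℕ) : ℂ := ((Real.log (n : ℝ) : ℝ) : ℂ)
noncomputable def wfun (x : ℕ → ℂ) (n : ℕ) : ℂ :=
  Cfun x n * (bfun n - 2 * bfun (n + 1) + bfun (n + 2))

lemma Afun_def (x : ℕ → ℂ) (n : ℕ) : Afun x n = ∑ m ∈ Icc 1 n, x m := rfl
lemma Cfun_def (x : ℕ → ℂ) (n : ℕ) : Cfun x n = ∑ k ∈ Icc 1 n, Afun x k := rfl

lemma wfun_zero (x : ℕ → ℂ) : wfun x 0 = 0 := by simp [wfun, Cfun_zero]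

lemma bdiff (n : ℕ) : bfun n - 2 * bfun (n + 1) + bfun (n + 2) =
    ((-(efun n - efun (n + 1)) : ℝ) : ℂ) := by
  simp only [bfun, efun]
  push_cast
  ring

section
variable {x : ℕ → ℂ} {D : ℕ}

lemma wfun_norm (hD : 2 ≤ D) (hxper : ∀ n, x (n + D) = x n) (hxnorm : ∀ n, ‖x n‖ ≤ 1)
    (hAD : Afun x D = 0) (hCD : Cfun x D = 0) (n : ℕ) (hn : 1 ≤ n) :
    ‖wfun x n‖ ≤ (D : ℝ) ^ 2 * (efun n - efun (n + 1)) := by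
  rw [wfun, bdiff, norm_mul, Complex.norm_real]
  have h1 : |(-(efun n - efun (n + 1)))| = efun n - efun (n + 1) := by
    rw [abs_neg, _root_.abs_of_nonneg (sub_nonneg.mpr (efun_anti n hn))]
  rw [Real.norm_eq_abs, h1]
  exact mul_le_mul_of_nonneg_right (Cfun_bound hD hxper hxnorm hAD hCD n)
    (sub_nonneg.mpr (efun_anti n hn))

lemma Cfun_eq (x : ℕ → ℂ) : Afun (Afun x) = Cfun x := rfl

lemma sum_identity (M : ℕ) (hAM : Afun x M = 0) (hCM : Cfun x M = 0) :
    ∑ n ∈ Icc 1 M, x n * bfun n = ∑ n ∈ Icc 1 M, wfun x n := by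
  have h1 := abel x bfun M
  have h2 := abel (Afun x) (fun n => bfun n - bfun (n + 1)) M
  simp only [← Afun_def, Cfun_eq] at h1 h2
  simp only [← Afun_def, Cfun_eq]
  rw [h1, hAM, h2, hCM]
  simp only [zero_mul, add_zero]
  simp only [Afun_def]
  refine Finset.sum_congr rfl fun n _ => ?_
  rw [wfun]
  ring

lemma summable_w (hD : 2 ≤ D) (hxper : ∀ n, x (n + D) = x n) (hxnorm : ∀ n, ‖x n‖ ≤ 1)
    (hAD : Afun x D = 0) (hCD : Cfun x D = 0) : Summable (wfun x) := by
  have h1 : Summable (fun n => wfun x (n + 1)) := by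
    refine Summable.of_norm_bounded (g := fun n => (D:ℝ)^2 * (efun (n + 1) - efun (n + 1 + 1)))
      (((hasSum_tail 1 le_rfl).summable).mul_left _) (fun n => ?_)
    exact wfun_norm hD hxper hxnorm hAD hCD (n + 1) (by omega)
  exact (summable_nat_add_iff 1).mp h1

lemma tail_bound (hD : 2 ≤ D) (hxper : ∀ n, x (n + D) = x n) (hxnorm : ∀ n, ‖x n‖ ≤ 1)
    (hAD : Afun x D = 0) (hCD : Cfun x D = 0) (Q : ℕ) (hQ : 1 ≤ Q) :
    ‖∑' n, wfun x (n + Q)‖ ≤ (D : ℝ) ^ 2 * efun Q := by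
  have hsumtail := hasSum_tail Q hQ
  have hb : ∀ n, ‖wfun x (n + Q)‖ ≤ (D:ℝ)^2 * (efun (n + Q) - efun (n + Q + 1)) :=
    fun n => wfun_norm hD hxper hxnorm hAD hCD (n + Q) (by omega)
  have hs3 : Summable (fun n => (D:ℝ)^2 * (efun (n + Q) - efun (n + Q + 1))) :=
    hsumtail.summable.mul_left _
  have hs2 : Summable (fun n => ‖wfun x (n + Q)‖) :=
    Summable.of_nonneg_of_le (fun n => norm_nonneg _) hb hs3
  calc ‖∑' n, wfun x (n + Q)‖ ≤ ∑' n, ‖wfun x (n + Q)‖ := norm_tsum_le_tsum_norm hs2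
  _ ≤ ∑' n, (D:ℝ)^2 * (efun (n + Q) - efun (n + Q + 1)) := Summable.tsum_le_tsum hb hs2 hs3
  _ = (D : ℝ) ^ 2 * efun Q := by rw [tsum_mul_left, hsumtail.tsum_eq]

end


lemma Cfun_weighted (x : ℕ → ℂ) (n : ℕ) :
    Cfun x n = ∑ m ∈ Icc 1 n, ((n : ℂ) + 1 - (m : ℂ)) * x m := by
  induction n with
  | zero => simp [Cfun_zero]
  | succ n ih =>
    rw [Cfun_succ, ih, Finset.sum_Icc_succ_top (show 1 ≤ n + 1 by omega)]
    have hstep : ∀ m : ℕ, (((n + 1 : ℕ) : ℂ) + 1 - (m : ℂ)) * x m =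
        ((n : ℂ) + 1 - (m : ℂ)) * x m + x m := by
      intro m; push_cast; ring
    rw [Finset.sum_congr rfl (fun m _ => hstep m), Finset.sum_add_distrib, Afun_succ, Afun_def]
    push_cast
    ring

lemma x_eq_C (x : ℕ → ℂ) : ∀ n, 1 ≤ n →
    x n = Cfun x n - 2 * Cfun x (n - 1) + Cfun x (n - 2) := by
  intro n hn
  match n with
  | 1 =>
    show x 1 = Cfun x 1 - 2 * Cfun x 0 + Cfun x 0
    rw [Cfun_succ, Cfun_zero, Afun_succ, Afun_zero]
    ring
  | (k + 2) =>
    show x (k + 2) = Cfun x (k + 2) - 2 * Cfun x (k + 1) + Cfun x k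
    rw [Cfun_succ x (k + 1), Cfun_succ x k, Afun_succ x (k + 1)]
    ring

end CLSD

open Finset CLSD in
/-- Lemma 6.2 -/
theorem char_log_sum_deriv (D : ℕ) (hD : 1 < D)
    (hfund : IsFundamentalDiscriminant (D : ℤ))
    [NeZero D] (χ : DirichletCharacter ℂ D) (hprim : χ.IsPrimitive) (heven : χ.Even)
    (hreal : ∀ a : ZMod D, (starRingEnd ℂ) (χ a) = χ a) :
    (∀ N : ℕ, 1 ≤ N →
      ‖(∑ n ∈ Finset.Icc 1 (N * D), χ (n : ZMod D) * (Real.log n : ℂ))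
          + deriv (DirichletCharacter.LFunction χ) 0‖
        ≤ 2 * (D : ℝ) / N) ∧
    Filter.Tendsto
      (fun N : ℕ => ∑ n ∈ Finset.Icc 1 (N * D), χ (n : ZMod D) * (Real.log n : ℂ))
      Filter.atTop (nhds (-(deriv (DirichletCharacter.LFunction χ) 0))) := by
  classical
  haveI : Fact (1 < D) := ⟨hD⟩
  set E := DirichletCharacter.LFunction χ with hE_def
  set x : ℕ → ℂ := fun n : ℕ => χ ((n : ℕ) : ZMod D) with hx_def
  have hD2 : 2 ≤ D := hD
  have hne1 : χ ≠ 1 := by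
    intro h
    rw [DirichletCharacter.IsPrimitive, h, DirichletCharacter.conductor_one]
      at hprim
    omega
  have hsum0 : ∑ a : ZMod D, χ a = 0 := MulChar.sum_eq_zero_of_ne_one hne1
  have h0unit : ¬ IsUnit (0 : ZMod D) := by
    rw [isUnit_zero_iff]
    exact zero_ne_one
  have hx0 : x 0 = 0 := by
    simp only [hx_def, Nat.cast_zero]
    exact χ.map_nonunit h0unit
  have hxD : x D = 0 := by
    simp only [hx_def, ZMod.natCast_self]
    exact χ.map_nonunit h0unit
  have hxper : ∀ n, x (n + D) = x n := by
    intro n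
    simp only [hx_def]
    congr 1
    push_cast [ZMod.natCast_self]
    ring
  have hxnorm : ∀ n, ‖x n‖ ≤ 1 := fun n => DirichletCharacter.norm_le_one χ _
  -- sum over range D equals sum over ZMod D
  have hrange : ∑ m ∈ range D, x m = 0 := by
    rw [← hsum0]
    refine Finset.sum_nbij' (fun m => ((m : ℕ) : ZMod D)) (fun a => a.val) ?_ ?_ ?_ ?_ ?_
    · intro a _; exact Finset.mem_univ _
    · intro a _; exact Finset.mem_range.mpr (ZMod.val_lt a)
    · intro a ha; exact ZMod.val_natCast_of_lt (Finset.mem_range.mp ha)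
    · intro a _; exact ZMod.natCast_rightInverse a
    · intro a _; rfl
  have hAD : Afun x D = 0 := by
    have h1 : Finset.Icc 1 D = insert D (Finset.Icc 1 (D - 1)) := by
      ext a; simp only [Finset.mem_Icc, Finset.mem_insert]; omega
    have h2 : Finset.range D = insert 0 (Finset.Icc 1 (D - 1)) := by
      ext a; simp only [Finset.mem_range, Finset.mem_insert, Finset.mem_Icc]; omega
    rw [Afun_def, h1, Finset.sum_insert (by simp only [Finset.mem_Icc]; omega), hxD, zero_add]
    rw [h2, Finset.sum_insert (by simp only [Finset.mem_Icc]; omega), hx0, zero_add] at hrange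
    exact hrange
  have hAD1 : ∑ m ∈ Finset.Icc 1 (D - 1), x m = 0 := by
    have h1 : Finset.Icc 1 D = insert D (Finset.Icc 1 (D - 1)) := by
      ext a; simp only [Finset.mem_Icc, Finset.mem_insert]; omega
    rw [Afun_def, h1, Finset.sum_insert (by simp only [Finset.mem_Icc]; omega), hxD, zero_add]
      at hAD
    exact hAD
  -- the weighted sum vanishes (evenness)
  have hT' : ∑ m ∈ Finset.Icc 1 (D - 1), (m : ℂ) * x m = 0 := by
    have hrefl : ∑ m ∈ Finset.Icc 1 (D - 1), (m : ℂ) * x m =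
        ∑ m ∈ Finset.Icc 1 (D - 1), ((D : ℂ) - (m : ℂ)) * x m := by
      refine Finset.sum_nbij' (fun m => D - m) (fun m => D - m) ?_ ?_ ?_ ?_ ?_
      · intro a ha; simp only [Finset.mem_Icc] at *; omega
      · intro a ha; simp only [Finset.mem_Icc] at *; omega
      · intro a ha; simp only [Finset.mem_Icc] at ha; show D - (D - a) = a; omega
      · intro a ha; simp only [Finset.mem_Icc] at ha; show D - (D - a) = a; omega
      · intro a ha
        simp only [Finset.mem_Icc] at ha
        have hca : ((D - a : ℕ) : ℂ) = (D : ℂ) - (a : ℂ) := by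
          push_cast [Nat.cast_sub (show a ≤ D by omega)]; ring
        have hxa : x (D - a) = x a := by
          simp only [hx_def]
          have hz : (((D - a : ℕ) : ℕ) : ZMod D) = -((a : ℕ) : ZMod D) := by
            push_cast [Nat.cast_sub (show a ≤ D by omega), ZMod.natCast_self]
            ring
          rw [hz, show -((a : ℕ) : ZMod D) = -1 * ((a : ℕ) : ZMod D) by ring, map_mul, heven]
          ring
        rw [hca, hxa]
        congr 1
        · congr 1
          push_cast [Nat.cast_sub (show a ≤ D by omega)]
          ring
    have hsplit : ∑ m ∈ Finset.Icc 1 (D - 1), ((D : ℂ) - (m : ℂ)) * x m =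
        (D : ℂ) * (∑ m ∈ Finset.Icc 1 (D - 1), x m)
          - ∑ m ∈ Finset.Icc 1 (D - 1), (m : ℂ) * x m := by
      rw [Finset.mul_sum, ← Finset.sum_sub_distrib]
      exact Finset.sum_congr rfl fun m _ => by ring
    rw [hsplit, hAD1, mul_zero, zero_sub] at hrefl
    have h2 : (2 : ℂ) * (∑ m ∈ Finset.Icc 1 (D - 1), (m : ℂ) * x m) = 0 := by
      linear_combination hrefl
    have := mul_eq_zero.mp h2
    simpa using this
  have hT : ∑ m ∈ Finset.Icc 1 D, (m : ℂ) * x m = 0 := by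
    have h1 : Finset.Icc 1 D = insert D (Finset.Icc 1 (D - 1)) := by
      ext a; simp only [Finset.mem_Icc, Finset.mem_insert]; omega
    rw [h1, Finset.sum_insert (by simp only [Finset.mem_Icc]; omega), hxD, mul_zero, zero_add]
    exact hT'
  have hCD : Cfun x D = 0 := by
    rw [Cfun_weighted]
    have hsplit : ∀ m : ℕ, ((D : ℂ) + 1 - (m : ℂ)) * x m =
        ((D : ℂ) + 1) * x m - (m : ℂ) * x m := fun m => by ring
    rw [Finset.sum_congr rfl (fun m _ => hsplit m), Finset.sum_sub_distrib, ← Finset.mul_sum,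
      ← Afun_def, hAD, mul_zero, hT, sub_zero]
  -- assemble analytic input
  have hCB0 : (0 : ℝ) ≤ (D : ℝ) ^ 2 := by positivity
  have hc0 : Cfun x 0 = 0 := Cfun_zero x
  have hcB : ∀ n, ‖Cfun x n‖ ≤ (D : ℝ) ^ 2 := Cfun_bound hD2 hxper hxnorm hAD hCD
  have hEdiff : Differentiable ℂ E := DirichletCharacter.differentiable_LFunction hne1
  have hEeq : ∀ s : ℂ, 1 < s.re → E s = LSeries x s := fun s hs =>
    DirichletCharacter.LFunction_eq_LSeries χ hs
  have hxc : ∀ n, 1 ≤ n → x n = Cfun x n - 2 * Cfun x (n - 1) + Cfun x (n - 2) := x_eq_C x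
  have h0 : HasSum (fun n => deriv (F (Cfun x) n) 0) (deriv E 0) :=
    hasSum_deriv_E E hEdiff x hEeq hCB0 hc0 hcB hxc
  have hderivw : ∀ n, deriv (F (Cfun x) n) 0 = -(wfun x n) := by
    intro n
    rw [deriv_F hc0 n, wfun]
    simp only [bfun]
    push_cast
    ring
  have hHS : HasSum (wfun x) (-(deriv E 0)) := by
    have h1 : HasSum (fun n => -(wfun x n)) (deriv E 0) := by
      simpa only [hderivw] using h0
    simpa using h1.neg
  have hsw : Summable (wfun x) := hHS.summable
  have htsum : ∑' n, wfun x n = -(deriv E 0) := hHS.tsum_eq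
  -- main bound
  have key : ∀ N : ℕ, 1 ≤ N →
      ‖(∑ n ∈ Finset.Icc 1 (N * D), x n * bfun n) + deriv E 0‖ ≤ 2 * (D : ℝ) / N := by
    intro N hN
    set M := N * D with hM
    have hM1 : 1 ≤ M := by
      have : 1 * 1 ≤ N * D := Nat.mul_le_mul hN (by omega)
      simpa using this
    have hAM : Afun x M = 0 := Afun_mul hD2 hxper hAD N
    have hCM : Cfun x M = 0 := Cfun_mul hD2 hxper hAD hCD N
    have hSid : ∑ n ∈ Finset.Icc 1 M, x n * bfun n = ∑ n ∈ Finset.Icc 1 M, wfun x n :=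
      sum_identity M hAM hCM
    have hsplit : (∑ i ∈ range (M + 1), wfun x i) + ∑' i, wfun x (i + (M + 1)) =
        ∑' i, wfun x i := Summable.sum_add_tsum_nat_add (M + 1) hsw
    have hrangeIcc : ∑ i ∈ range (M + 1), wfun x i = ∑ n ∈ Finset.Icc 1 M, wfun x n := by
      have h1 : range (M + 1) = insert 0 (Finset.Icc 1 M) := by
        ext a; simp only [Finset.mem_range, Finset.mem_insert, Finset.mem_Icc]; omega
      rw [h1, Finset.sum_insert (by simp), wfun_zero, zero_add]
    have hkey : (∑ n ∈ Finset.Icc 1 M, x n * bfun n) + deriv E 0 =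
        -(∑' i, wfun x (i + (M + 1))) := by
      rw [hSid, ← hrangeIcc]
      have := hsplit
      rw [htsum] at this
      linear_combination this
    rw [hkey, norm_neg]
    have hb1 : ‖∑' i, wfun x (i + (M + 1))‖ ≤ (D : ℝ) ^ 2 * efun (M + 1) :=
      tail_bound hD2 hxper hxnorm hAD hCD (M + 1) (by omega)
    have hb2 : efun (M + 1) ≤ 1 / ((M : ℝ) + 1) := by
      have := efun_le (M + 1) (by omega)
      push_cast at this ⊢
      linarith
    have hb3 : (D : ℝ) ^ 2 * efun (M + 1) ≤ (D : ℝ) ^ 2 * (1 / ((M : ℝ) + 1)) :=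
      mul_le_mul_of_nonneg_left hb2 hCB0
    refine hb1.trans (hb3.trans ?_)
    -- D^2 / (M+1) ≤ 2D / N  with M = N * D
    have hNpos : (0 : ℝ) < N := by exact_mod_cast hN
    have hDpos : (0 : ℝ) < D := by positivity
    have hMcast : ((M : ℝ)) = (N : ℝ) * D := by rw [hM]; push_cast; ring
    rw [mul_one_div, div_le_div_iff₀ (by positivity) hNpos, hMcast]
    have hD2' : (2 : ℝ) ≤ (D : ℝ) := by exact_mod_cast hD2
    nlinarith [hNpos, hDpos]
  constructor
  · intro N hN
    exact key N hN
  · -- convergence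
    have hzero : Filter.Tendsto
        (fun N : ℕ => (∑ n ∈ Finset.Icc 1 (N * D), x n * bfun n) + deriv E 0)
        Filter.atTop (nhds 0) := by
      refine squeeze_zero_norm' ?_ (tendsto_const_div_atTop_nhds_zero_nat (2 * (D : ℝ)))
      filter_upwards [Filter.eventually_ge_atTop 1] with N hN
      have := key N hN
      rw [mul_div_assoc] at this ⊢
      exact this
    have := hzero.sub_const (deriv E 0)
    simp only [add_sub_cancel_right, zero_sub] at this
    exact this
end

section
/- For every real number H ≥ 2 and every integer k ≥ e²(log log H + 10), the sum of μ²(m)/m over squarefree integers m > H^k all of whose prime factors are at most H is less than e^{-k}. -/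
open Finset Nat

/-- Primes up to `n`. -/
private def Pr (n : ℕ) : Finset ℕ := Finset.filter Nat.Prime (Finset.range (n + 1))

private lemma aux_log_sub (a b : ℝ) (ha : 0 < a) (hab : a ≤ b) :
    (b - a) / b ≤ Real.log b - Real.log a := by
  have hb : 0 < b := lt_of_lt_of_le ha hab
  have h := Real.log_le_sub_one_of_pos (show 0 < a / b by positivity)
  rw [Real.log_div ha.ne' hb.ne'] at h
  have e : (b - a) / b = 1 - a / b := by field_simp
  rw [e]; linarith

private lemma aux_pow_dvd_fact (p : ℕ) (hp : 1 ≤ p) (m : ℕ) : p ^ m ∣ (m * p)! := by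
  induction m with
  | zero => simp
  | succ m ih =>
    have hmul : m * p + p = (m + 1) * p := by ring
    have hpos : 1 ≤ (m + 1) * p := by nlinarith
    have h1 : (m * p)! ∣ ((m + 1) * p - 1)! := Nat.factorial_dvd_factorial (by omega)
    have e : ((m + 1) * p)! = ((m + 1) * p) * ((m + 1) * p - 1)! := by
      conv_lhs => rw [← Nat.sub_add_cancel hpos]
      rw [Nat.factorial_succ, Nat.sub_add_cancel hpos]
    rw [e, pow_succ, mul_comm ((m + 1) * p) _]
    exact mul_dvd_mul (ih.trans h1) (dvd_mul_left p (m + 1))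

private lemma aux_pow_div_dvd_fact (p n : ℕ) (hp : 1 ≤ p) : p ^ (n / p) ∣ n ! :=
  (aux_pow_dvd_fact p hp (n / p)).trans
    (Nat.factorial_dvd_factorial (Nat.div_mul_le_self n p))

private lemma aux_prod_pow_dvd (m : ℕ) (f : ℕ → ℕ) :
    ∀ s : Finset ℕ, (∀ p ∈ s, Nat.Prime p) → (∀ p ∈ s, p ^ f p ∣ m) →
      (∏ p ∈ s, p ^ f p) ∣ m := by
  intro s
  induction s using Finset.induction_on with
  | empty => simp
  | insert _ _ hns =>
    rename_i a s ih
    intro hprime hdvd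
    rw [Finset.prod_insert hns]
    have hcop : Nat.Coprime (a ^ f a) (∏ p ∈ s, p ^ f p) := by
      apply Nat.Coprime.prod_right
      intro p hps
      exact (Nat.coprime_primes (hprime a (mem_insert_self a s))
        (hprime p (mem_insert_of_mem hps))).mpr
        (by rintro rfl; exact hns hps) |>.pow _ _
    exact hcop.mul_dvd_of_dvd_of_dvd (hdvd a (mem_insert_self a s))
      (ih (fun p hp => hprime p (mem_insert_of_mem hp))
          (fun p hp => hdvd p (mem_insert_of_mem hp)))

private lemma aux_cheb (n : ℕ) :
    ∑ p ∈ Pr n, Real.log p ≤ n * Real.log 4 := by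
  have h1 : (primorial n : ℝ) ≤ (4 : ℝ) ^ n := by exact_mod_cast primorial_le_4_pow n
  have hpos : ∀ p ∈ Pr n, (p : ℝ) ≠ 0 := by
    intro p hp
    have := (Finset.mem_filter.mp hp).2.pos
    positivity
  have h2 : Real.log (primorial n) = ∑ p ∈ Pr n, Real.log p := by
    rw [primorial, Pr]
    push_cast
    exact Real.log_prod hpos
  have h3 : Real.log (primorial n) ≤ Real.log ((4 : ℝ) ^ n) := by
    apply Real.log_le_log _ h1
    exact_mod_cast (primorial_pos n)
  rw [h2, Real.log_pow] at *
  linarith [h3]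


private lemma aux_mertens1 (n : ℕ) (hn : 2 ≤ n) :
    ∑ p ∈ Pr n, Real.log p / p ≤ Real.log n + Real.log 4 := by
  have cheb : ∑ p ∈ Pr n, Real.log p ≤ n * Real.log 4 := aux_cheb n
  have hdvd : (∏ p ∈ Pr n, p ^ (n / p)) ∣ n ! := by
    apply aux_prod_pow_dvd
    · intro p hp
      exact (Finset.mem_filter.mp hp).2
    · intro p hp
      exact aux_pow_div_dvd_fact p n (Finset.mem_filter.mp hp).2.one_lt.le
  have hn0 : (0:ℝ) < n := by positivity
  have hM : (∏ p ∈ Pr n, p ^ (n / p) : ℕ) ≤ n ! := Nat.le_of_dvd (Nat.factorial_pos n) hdvd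
  have hfact : (n ! : ℝ) ≤ (n : ℝ) ^ n := by exact_mod_cast Nat.factorial_le_pow n
  have hMpos : 0 < (∏ p ∈ Pr n, p ^ (n / p) : ℕ) := by
    apply Finset.prod_pos
    intro p hp
    exact pow_pos (Finset.mem_filter.mp hp).2.pos _
  have hlogM : Real.log (∏ p ∈ Pr n, p ^ (n / p) : ℕ)
      = ∑ p ∈ Pr n, (n / p : ℕ) * Real.log p := by
    push_cast
    rw [Real.log_prod]
    · refine Finset.sum_congr rfl fun p hp => ?_
      rw [Real.log_pow]
    · intro p hp
      have := (Finset.mem_filter.mp hp).2.pos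
      positivity
  have hkey : ∑ p ∈ Pr n, ((n / p : ℕ) : ℝ) * Real.log p ≤ (n : ℝ) * Real.log n := by
    rw [← hlogM]
    calc Real.log (∏ p ∈ Pr n, p ^ (n / p) : ℕ) ≤ Real.log ((n:ℝ) ^ n) := by
          apply Real.log_le_log (by exact_mod_cast hMpos)
          exact le_trans (by exact_mod_cast hM) hfact
      _ = (n : ℝ) * Real.log n := by rw [Real.log_pow]
  have hterm : ∀ p ∈ Pr n, (n : ℝ) * (Real.log p / p) - Real.log p
      ≤ ((n / p : ℕ) : ℝ) * Real.log p := by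
    intro p hp
    have hp2 := (Finset.mem_filter.mp hp).2.two_le
    have hpR : (2:ℝ) ≤ (p:ℝ) := by exact_mod_cast hp2
    have hppos : (0:ℝ) < p := by linarith
    have hlogp : 0 ≤ Real.log p := Real.log_nonneg (by linarith)
    have hdm := Nat.div_add_mod n p
    have hmod : n % p < p := Nat.mod_lt n (by omega)
    have hcast : (n : ℝ) < (p : ℝ) * ((n / p : ℕ) : ℝ) + p := by
      have : (n:ℝ) = (p:ℝ) * ((n / p : ℕ) : ℝ) + ((n % p : ℕ) : ℝ) := by exact_mod_cast hdm.symm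
      rw [this]
      have : ((n % p : ℕ) : ℝ) < (p:ℝ) := by exact_mod_cast hmod
      linarith
    have hdivlt : (n : ℝ) / p - 1 ≤ ((n / p : ℕ) : ℝ) := by
      rw [sub_le_iff_le_add, div_le_iff₀ hppos]
      nlinarith
    have e : (n : ℝ) * (Real.log p / p) - Real.log p = ((n:ℝ)/p - 1) * Real.log p := by
      field_simp
    rw [e]
    exact mul_le_mul_of_nonneg_right hdivlt hlogp
  have hsum : (n : ℝ) * (∑ p ∈ Pr n, Real.log p / p) - ∑ p ∈ Pr n, Real.log p
      ≤ (n : ℝ) * Real.log n := by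
    rw [Finset.mul_sum]
    calc ∑ p ∈ Pr n, (n:ℝ) * (Real.log p / p) - ∑ p ∈ Pr n, Real.log p
        = ∑ p ∈ Pr n, ((n:ℝ) * (Real.log p / p) - Real.log p) := by rw [Finset.sum_sub_distrib]
      _ ≤ ∑ p ∈ Pr n, ((n / p : ℕ) : ℝ) * Real.log p := Finset.sum_le_sum hterm
      _ ≤ (n : ℝ) * Real.log n := hkey
  have := cheb
  have hfin : (n:ℝ) * (∑ p ∈ Pr n, Real.log p / p) ≤ (n:ℝ) * (Real.log n + Real.log 4) := by
    nlinarith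
  exact le_of_mul_le_mul_left (by linarith [hfin]) hn0


private lemma aux_A_nonneg (n : ℕ) : 0 ≤ ∑ p ∈ Pr n, Real.log p / (p:ℝ) := by
  apply Finset.sum_nonneg
  intro p hp
  have h2 := (Finset.mem_filter.mp hp).2.two_le
  have : (1:ℝ) ≤ p := by exact_mod_cast Nat.one_le_of_lt h2
  have := Real.log_nonneg this
  positivity

private lemma aux_E (N : ℕ) (hN : 2 ≤ N) :
    (∑ p ∈ Pr N, 1 / (p:ℝ)) - (∑ p ∈ Pr N, Real.log p / p) / Real.log N
      ≤ Real.log (Real.log N) - Real.log (Real.log 2)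
        + Real.log 4 * (1 / Real.log 2 - 1 / Real.log N) := by
  induction N, hN using Nat.le_induction with
  | base =>
    have hP2 : Pr 2 = {2} := by decide
    have hl2 : Real.log 2 ≠ 0 := (Real.log_pos (by norm_num)).ne'
    rw [hP2]
    simp only [Finset.sum_singleton, Nat.cast_ofNat]
    field_simp
    norm_num
  | succ N hN ih =>
    have hN1R : (1:ℝ) < (N:ℝ) := by exact_mod_cast hN
    have hNpos : (0:ℝ) < (N:ℝ) := by linarith
    set ℓ : ℝ := Real.log N with hldef
    set ℓ' : ℝ := Real.log ((N:ℝ)+1) with hl'def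
    have hcast : ((N+1 : ℕ) : ℝ) = (N:ℝ) + 1 := by push_cast; ring
    have hl0 : 0 < ℓ := Real.log_pos hN1R
    have hll : ℓ ≤ ℓ' := Real.log_le_log hNpos (by linarith)
    have hl'0 : 0 < ℓ' := lt_of_lt_of_le hl0 hll
    set A : ℝ := ∑ p ∈ Pr N, Real.log p / p with hAdef
    set B : ℝ := ∑ p ∈ Pr N, 1 / (p:ℝ) with hBdef
    -- key cancellation
    have hrange : Pr (N+1) = if Nat.Prime (N+1) then insert (N+1) (Pr N) else Pr N := by
      rw [Pr, Pr, Finset.range_add_one, Finset.filter_insert]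
    have hnotmem : (N+1) ∉ Pr N := by
      simp [Pr, Finset.mem_filter, Finset.mem_range]
    have key : (∑ p ∈ Pr (N+1), 1 / (p:ℝ)) - (∑ p ∈ Pr (N+1), Real.log p / p) / ℓ'
        = B - A / ℓ' := by
      by_cases hp : Nat.Prime (N+1)
      · rw [hrange, if_pos hp, Finset.sum_insert hnotmem, Finset.sum_insert hnotmem]
        rw [hcast]
        field_simp
        ring
      · rw [hrange, if_neg hp]
    -- monotone bound
    have hA1 : A ≤ ℓ + Real.log 4 := aux_mertens1 N hN
    have hApos : 0 ≤ A := aux_A_nonneg N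
    have hmono : 0 ≤ 1/ℓ - 1/ℓ' := by
      rw [sub_nonneg]
      exact one_div_le_one_div_of_le hl0 hll
    have h1 : A * (1/ℓ - 1/ℓ') ≤ (ℓ + Real.log 4) * (1/ℓ - 1/ℓ') :=
      mul_le_mul_of_nonneg_right hA1 hmono
    have h2 : (ℓ + Real.log 4) * (1/ℓ - 1/ℓ')
        = (ℓ' - ℓ)/ℓ' + Real.log 4 * (1/ℓ) - Real.log 4 * (1/ℓ') := by
      field_simp
      ring
    have h3 : (ℓ' - ℓ)/ℓ' ≤ Real.log ℓ' - Real.log ℓ := aux_log_sub ℓ ℓ' hl0 hll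
    have h4 : B - A/ℓ' = (B - A/ℓ) + A * (1/ℓ - 1/ℓ') := by
      field_simp
      ring
    rw [hcast, key, h4, ← hl'def]
    have e1 : Real.log 4 * (1 / Real.log 2 - 1/ℓ)
        = Real.log 4 * (1/Real.log 2) - Real.log 4 * (1/ℓ) := mul_sub _ _ _
    have e2 : Real.log 4 * (1 / Real.log 2 - 1/ℓ')
        = Real.log 4 * (1/Real.log 2) - Real.log 4 * (1/ℓ') := mul_sub _ _ _
    linarith [h1, h2, h3, ih, e1, e2]

private lemma aux_mertens2 (N : ℕ) (hN : 2 ≤ N) :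
    ∑ p ∈ Pr N, 1 / (p:ℝ) ≤ Real.log (Real.log N) + 4 := by
  have hE := aux_E N hN
  have hA1 := aux_mertens1 N hN
  have hApos := aux_A_nonneg N
  have hN1R : (1:ℝ) < (N:ℝ) := by exact_mod_cast hN
  have hl0 : 0 < Real.log (N:ℝ) := Real.log_pos hN1R
  have hlog2pos : 0 < Real.log 2 := Real.log_pos (by norm_num)
  have h42 : Real.log 4 = 2 * Real.log 2 := by
    rw [show (4:ℝ) = 2^2 by norm_num, Real.log_pow]
    push_cast; ring
  have h5 : (∑ p ∈ Pr N, Real.log p / p) / Real.log (N:ℝ)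
      ≤ 1 + Real.log 4 * (1 / Real.log (N:ℝ)) := by
    rw [div_le_iff₀ hl0]
    have e : (1 + Real.log 4 * (1 / Real.log (N:ℝ))) * Real.log (N:ℝ)
        = Real.log (N:ℝ) + Real.log 4 := by field_simp
    rw [e]; exact hA1
  have h6 : Real.log 4 / Real.log 2 = 2 := by
    rw [h42]; field_simp
  have h7 : -Real.log (Real.log 2) ≤ 1 := by
    have ha : 1/2 ≤ Real.log 2 := by
      have := Real.log_two_gt_d9; linarith
    have h8 : Real.log (1/2) ≤ Real.log (Real.log 2) := Real.log_le_log (by norm_num) ha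
    have h9 : Real.log (1/2) = -Real.log 2 := by
      rw [one_div, Real.log_inv]
    have h10 : Real.log 2 ≤ 1 := by
      have := Real.log_le_sub_one_of_pos (show (0:ℝ) < 2 by norm_num); linarith
    linarith
  have e1 : Real.log 4 * (1 / Real.log 2 - 1 / Real.log (N:ℝ))
      = Real.log 4 / Real.log 2 - Real.log 4 / Real.log (N:ℝ) := by
    rw [mul_sub, mul_one_div, mul_one_div]
  rw [mul_one_div] at h5
  linarith [hE, h5, h6, h7, e1]


/-- For `H ≥ 2` and any integer `k ≥ e²(log log H + 10)`, the sum of `μ²(m)/m = 1/m`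
over squarefree `H`-smooth integers `m > H^k` is less than `e^{-k}`. -/
theorem smooth_squarefree_tail (H : ℝ) (hH : 2 ≤ H) (k : ℕ)
    (hk : Real.exp 2 * (Real.log (Real.log H) + 10) ≤ (k : ℝ)) :
    ∑' m : {m : ℕ // Squarefree m ∧ H ^ k < (m : ℝ) ∧ ∀ p ∈ (m : ℕ).primeFactors, (p : ℝ) ≤ H},
        (1 : ℝ) / ((m : ℕ) : ℝ)
      < Real.exp (-(k : ℝ)) := by
  classical
  have hH0 : (0:ℝ) ≤ H := by linarith
  have hH1 : (1:ℝ) < H := by linarith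
  set N : ℕ := ⌊H⌋₊ with hNdef
  have hN2 : 2 ≤ N := Nat.le_floor (by exact_mod_cast hH)
  have hNH : (N:ℝ) ≤ H := Nat.floor_le hH0
  set L : ℝ := ∑ p ∈ Pr N, 1 / (p:ℝ) with hLdef
  have hLpos : 0 ≤ L := Finset.sum_nonneg fun p _ => by positivity
  have hL10 : L ≤ Real.log (Real.log H) + 10 := by
    have h1 := aux_mertens2 N hN2
    have hN1R : (1:ℝ) < (N:ℝ) := by exact_mod_cast hN2
    have hl0 : 0 < Real.log (N:ℝ) := Real.log_pos hN1R
    have h2 : Real.log (N:ℝ) ≤ Real.log H := Real.log_le_log (by linarith) hNH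
    have h4 : Real.log (Real.log (N:ℝ)) ≤ Real.log (Real.log H) := Real.log_le_log hl0 h2
    linarith
  have hkL : Real.exp 2 * L ≤ (k:ℝ) := by
    have h := mul_le_mul_of_nonneg_left hL10 (Real.exp_pos 2).le
    linarith
  set c : ℝ := -(2*((k:ℝ)+1)) with hcdef
  set g0 : Finset ℕ → ℝ := fun T => Real.exp c * ∏ p ∈ T, (Real.exp 2 / (p:ℝ)) with hg0def
  have hg0nonneg : ∀ T : Finset ℕ, 0 ≤ g0 T := fun T =>
    mul_nonneg (Real.exp_pos c).le (Finset.prod_nonneg fun p _ => by positivity)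
  have hmem : ∀ m : {m : ℕ // Squarefree m ∧ H ^ k < (m : ℝ) ∧ ∀ p ∈ (m : ℕ).primeFactors, (p : ℝ) ≤ H}, (m : ℕ).primeFactors ∈ (Pr N).powerset := by
    rintro ⟨m, hsqf, hmk, hsm⟩
    rw [Finset.mem_powerset]
    intro p hp
    rw [Pr, Finset.mem_filter, Finset.mem_range]
    exact ⟨Nat.lt_succ_of_le (Nat.le_floor (hsm p hp)),
      Nat.prime_of_mem_primeFactors hp⟩
  set e : {m : ℕ // Squarefree m ∧ H ^ k < (m : ℝ) ∧ ∀ p ∈ (m : ℕ).primeFactors, (p : ℝ) ≤ H} → {T : Finset ℕ // T ∈ (Pr N).powerset} := fun m => ⟨(m : ℕ).primeFactors, hmem m⟩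
    with hedef
  have hinj : Function.Injective e := by
    rintro ⟨m₁, hsqf₁, h₁⟩ ⟨m₂, hsqf₂, h₂⟩ h
    have hpf : (m₁ : ℕ).primeFactors = (m₂ : ℕ).primeFactors := by
      simpa [hedef] using h
    apply Subtype.ext
    show m₁ = m₂
    rw [← Nat.prod_primeFactors_of_squarefree hsqf₁, ← Nat.prod_primeFactors_of_squarefree hsqf₂, hpf]
  have hle : ∀ m : {m : ℕ // Squarefree m ∧ H ^ k < (m : ℝ) ∧ ∀ p ∈ (m : ℕ).primeFactors, (p : ℝ) ≤ H}, (1:ℝ) / ((m : ℕ) : ℝ) ≤ g0 ((m : ℕ).primeFactors) := by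
    rintro ⟨m, hsqf, hmk, hsm⟩
    have hm0 : 0 < m := Nat.pos_of_ne_zero hsqf.ne_zero
    have hm0R : (0:ℝ) < (m:ℝ) := by exact_mod_cast hm0
    have hprodR : ∏ p ∈ m.primeFactors, (p:ℝ) = (m:ℝ) := by
      rw [← Nat.cast_prod, Nat.prod_primeFactors_of_squarefree hsqf]
    have hcard : k + 1 ≤ m.primeFactors.card := by
      by_contra hcon
      push_neg at hcon
      have h1 : (m:ℝ) ≤ H ^ m.primeFactors.card := by
        rw [← hprodR]
        calc ∏ p ∈ m.primeFactors, (p:ℝ) ≤ ∏ p ∈ m.primeFactors, H :=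
              Finset.prod_le_prod (fun p _ => by positivity) (fun p hp => hsm p hp)
          _ = H ^ m.primeFactors.card := Finset.prod_const H
      have h2 : H ^ m.primeFactors.card ≤ H ^ k :=
        pow_le_pow_right₀ hH1.le (by omega)
      linarith
    have hsplit : ∏ p ∈ m.primeFactors, (Real.exp 2 / (p:ℝ))
        = Real.exp 2 ^ m.primeFactors.card / (m:ℝ) := by
      rw [Finset.prod_div_distrib, Finset.prod_const, hprodR]
    show (1:ℝ) / (m:ℝ) ≤ g0 m.primeFactors
    rw [hg0def]
    simp only
    rw [hsplit, ← Real.exp_nat_mul]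
    have hgoal : (1:ℝ) ≤ Real.exp c * Real.exp ((m.primeFactors.card : ℝ) * 2) := by
      rw [← Real.exp_add]
      apply Real.one_le_exp
      have hc : ((k:ℝ)) + 1 ≤ (m.primeFactors.card : ℝ) := by exact_mod_cast hcard
      rw [hcdef]
      nlinarith
    have e2 : Real.exp c * (Real.exp ((m.primeFactors.card : ℝ) * 2) / (m:ℝ))
        = (Real.exp c * Real.exp ((m.primeFactors.card : ℝ) * 2)) * (1/(m:ℝ)) := by ring
    rw [e2]
    nth_rewrite 1 [show (1:ℝ)/(m:ℝ) = 1 * (1/(m:ℝ)) by ring]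
    exact mul_le_mul_of_nonneg_right hgoal (by positivity)
  -- summability and comparison
  have hgs : Summable (fun T : {T : Finset ℕ // T ∈ (Pr N).powerset} => g0 T) :=
    Summable.of_finite
  have hgi : Summable ((fun T : {T : Finset ℕ // T ∈ (Pr N).powerset} => g0 T) ∘ e) :=
    hgs.comp_injective hinj
  have hfs : Summable (fun m : {m : ℕ // Squarefree m ∧ H ^ k < (m : ℝ) ∧ ∀ p ∈ (m : ℕ).primeFactors, (p : ℝ) ≤ H} => (1:ℝ) / ((m : ℕ) : ℝ)) :=
    Summable.of_nonneg_of_le (fun m => by positivity) (fun m => hle m) hgi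
  have hmain : ∑' m : {m : ℕ // Squarefree m ∧ H ^ k < (m : ℝ) ∧ ∀ p ∈ (m : ℕ).primeFactors, (p : ℝ) ≤ H}, (1:ℝ) / ((m : ℕ) : ℝ)
      ≤ ∑' T : {T : Finset ℕ // T ∈ (Pr N).powerset}, g0 T :=
    Summable.tsum_le_tsum_of_inj e hinj (fun T _ => hg0nonneg T) (fun m => hle m) hfs hgs
  have htsum : ∑' T : {T : Finset ℕ // T ∈ (Pr N).powerset}, g0 T
      = ∑ T ∈ (Pr N).powerset, g0 T := by
    rw [tsum_fintype]
    exact Finset.sum_coe_sort _ _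
  have hps : ∑ T ∈ (Pr N).powerset, g0 T
      = Real.exp c * ∏ p ∈ Pr N, (Real.exp 2 / (p:ℝ) + 1) := by
    rw [hg0def]
    simp only
    rw [← Finset.mul_sum, Finset.prod_add]
    simp [Finset.prod_const_one]
  have hprodle : ∏ p ∈ Pr N, (Real.exp 2 / (p:ℝ) + 1) ≤ Real.exp (Real.exp 2 * L) := by
    calc ∏ p ∈ Pr N, (Real.exp 2 / (p:ℝ) + 1)
        ≤ ∏ p ∈ Pr N, Real.exp (Real.exp 2 / (p:ℝ)) :=
          Finset.prod_le_prod (fun p _ => by positivity)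
            (fun p _ => Real.add_one_le_exp _)
      _ = Real.exp (∑ p ∈ Pr N, Real.exp 2 / (p:ℝ)) := (Real.exp_sum _ _).symm
      _ = Real.exp (Real.exp 2 * L) := by
          congr 1
          rw [hLdef, Finset.mul_sum]
          exact Finset.sum_congr rfl fun p _ => by rw [mul_one_div]
  calc ∑' m : {m : ℕ // Squarefree m ∧ H ^ k < (m : ℝ) ∧ ∀ p ∈ (m : ℕ).primeFactors, (p : ℝ) ≤ H}, (1:ℝ) / ((m : ℕ) : ℝ)
      ≤ ∑ T ∈ (Pr N).powerset, g0 T := htsum ▸ hmain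
    _ = Real.exp c * ∏ p ∈ Pr N, (Real.exp 2 / (p:ℝ) + 1) := hps
    _ ≤ Real.exp c * Real.exp (Real.exp 2 * L) :=
        mul_le_mul_of_nonneg_left hprodle (Real.exp_pos c).le
    _ = Real.exp (c + Real.exp 2 * L) := (Real.exp_add _ _).symm
    _ < Real.exp (-(k:ℝ)) := by
        apply Real.exp_lt_exp.mpr
        rw [hcdef]
        linarith
end
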